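/- arXiv:2010.12113 — 10 statements merged into one kernel-verified Lean document; each statement's English description precedes it below -/
import Mathlib

section
/- Let n ≥ 1 and let S = {(x, z) ∈ [0,1]^n × [0,1]^n : z_j = ∏_{k=1}^{j} x_k for all j = 1, …, n}. Then the convex hull of S equals the polytope M = {(x, z) ∈ [0,1]^n × [0,1]^n : z_1 = x_1, and for every j = 2, …, n: z_j ≥ 0, z_j ≥ z_{j-1} + x_j − 1, z_j ≤ z_{j-1}, z_j ≤ x_j}; in other words, the convex hull of S is exactly the set cut out by z_1 = x_1, the box constraints, and the McCormick relaxations of the bilinear equations z_j = z_{j-1}·x_j over [0,1]^2 for j = 2, …, n. -/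
open MeasureTheory

lemma aux_Iic_zero {n : ℕ} (hn : 0 < n) :
    Finset.Iic (⟨0, hn⟩ : Fin n) = {⟨0, hn⟩} := by
  ext k
  simp only [Finset.mem_Iic, Finset.mem_singleton, Fin.le_def, Fin.ext_iff]
  omega

lemma aux_Iic_succ {n : ℕ} (i j : Fin n) (h : (j : ℕ) = (i : ℕ) + 1) :
    Finset.Iic j = insert j (Finset.Iic i) := by
  ext k
  simp only [Finset.mem_Iic, Finset.mem_insert, Fin.le_def, Fin.ext_iff]
  omega

lemma aux_not_mem {n : ℕ} (i j : Fin n) (h : (j : ℕ) = (i : ℕ) + 1) :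
    j ∉ Finset.Iic i := by
  simp only [Finset.mem_Iic, Fin.le_def]
  omega

lemma aux_sum_single {n : ℕ} (c : Fin n → ℝ) :
    ∑ j, c j • (Pi.single j (1:ℝ) : Fin n → ℝ) = c := by
  funext k
  simp [Finset.sum_apply, Pi.single_apply, Finset.sum_ite_eq]

/-- The convex hull of the graph of the running products `z_j = x_1 ⋯ x_j` over the unit
box equals the polytope cut out by `z_1 = x_1`, the box constraints, and the recursive
McCormick relaxations of `z_j = z_{j-1} · x_j` over `[0,1]²`. -/
theorem stmt0 (n : ℕ) (hn : 0 < n)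
    (S : Set ((Fin n → ℝ) × (Fin n → ℝ)))
    (hS : S = {p | (∀ k, p.1 k ∈ Set.Icc (0 : ℝ) 1) ∧ (∀ k, p.2 k ∈ Set.Icc (0 : ℝ) 1) ∧
      ∀ j, p.2 j = ∏ k ∈ Finset.Iic j, p.1 k}) :
    convexHull ℝ S =
      {p | (∀ k, p.1 k ∈ Set.Icc (0 : ℝ) 1) ∧ (∀ k, p.2 k ∈ Set.Icc (0 : ℝ) 1) ∧
        p.2 ⟨0, hn⟩ = p.1 ⟨0, hn⟩ ∧
        ∀ i j : Fin n, (j : ℕ) = (i : ℕ) + 1 →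
          0 ≤ p.2 j ∧ p.2 i + p.1 j - 1 ≤ p.2 j ∧ p.2 j ≤ p.2 i ∧ p.2 j ≤ p.1 j} := by
  apply Set.Subset.antisymm
  · apply convexHull_min
    · rintro p hp
      rw [hS] at hp
      obtain ⟨hx, hz, hprod⟩ := hp
      refine ⟨hx, hz, ?_, ?_⟩
      · rw [hprod ⟨0, hn⟩, aux_Iic_zero hn, Finset.prod_singleton]
      · intro i j hij
        have hzj : p.2 j = p.1 j * p.2 i := by
          rw [hprod j, aux_Iic_succ i j hij, Finset.prod_insert (aux_not_mem i j hij),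
            ← hprod i]
        obtain ⟨hzi0, hzi1⟩ := hz i
        obtain ⟨hxj0, hxj1⟩ := hx j
        refine ⟨?_, ?_, ?_, ?_⟩ <;> rw [hzj] <;> nlinarith
    · intro p hp q hq a b ha hb hab
      obtain ⟨hpx, hpz, hp0, hpM⟩ := hp
      obtain ⟨hqx, hqz, hq0, hqM⟩ := hq
      have e1 : ∀ k, (a • p + b • q).1 k = a * p.1 k + b * q.1 k := fun k => rfl
      have e2 : ∀ k, (a • p + b • q).2 k = a * p.2 k + b * q.2 k := fun k => rfl
      refine ⟨?_, ?_, ?_, ?_⟩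
      · intro k
        obtain ⟨h1, h2⟩ := hpx k; obtain ⟨h3, h4⟩ := hqx k
        rw [Set.mem_Icc, e1]
        constructor <;> nlinarith
      · intro k
        obtain ⟨h1, h2⟩ := hpz k; obtain ⟨h3, h4⟩ := hqz k
        rw [Set.mem_Icc, e2]
        constructor <;> nlinarith
      · rw [e1, e2, hp0, hq0]
      · intro i j hij
        obtain ⟨h1, h2, h3, h4⟩ := hpM i j hij
        obtain ⟨h5, h6, h7, h8⟩ := hqM i j hij
        rw [e1, e2, e2]
        refine ⟨by nlinarith, by nlinarith, by nlinarith, by nlinarith⟩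
  · rintro p ⟨hx, hz, h0, hM⟩
    have hzx : ∀ j, p.2 j ≤ p.1 j := by
      intro j
      rcases Nat.eq_zero_or_pos j.1 with h | h
      · have hj : j = ⟨0, hn⟩ := Fin.ext h
        rw [hj, h0]
      · obtain ⟨m, hm⟩ := Nat.exists_eq_succ_of_ne_zero h.ne'
        exact (hM ⟨m, by omega⟩ j hm).2.2.2
    set μ := volume.restrict (Set.Ioc (0:ℝ) 1) with hμ
    haveI : IsProbabilityMeasure μ :=
      ⟨by rw [hμ, Measure.restrict_apply_univ, Real.volume_Ioc]; norm_num⟩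
    set f1 : ℝ → Fin n → ℝ := fun u j =>
      (Set.Ioc 0 (p.2 j)).indicator 1 u + (Set.Ioc (1 - p.1 j + p.2 j) 1).indicator 1 u with hf1
    set f2 : ℝ → Fin n → ℝ := fun u j => (Set.Ioc 0 (p.2 j)).indicator 1 u with hf2
    -- integrability and integral of scalar indicators
    have hIint : ∀ a b : ℝ, Integrable ((Set.Ioc a b).indicator (1:ℝ→ℝ)) μ := by
      intro a b
      rw [integrable_indicator_iff measurableSet_Ioc]
      exact integrableOn_const (measure_ne_top _ _)
    have hIval : ∀ a b : ℝ, 0 ≤ a → a ≤ b → b ≤ 1 →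
        ∫ u, (Set.Ioc a b).indicator 1 u ∂μ = b - a := by
      intro a b ha hab hb
      rw [integral_indicator_one measurableSet_Ioc, hμ, measureReal_def,
        Measure.restrict_apply measurableSet_Ioc, Set.Ioc_inter_Ioc,
        max_eq_left ha, min_eq_left hb, Real.volume_Ioc,
        ENNReal.toReal_ofReal (by linarith)]
    -- integrability of the vector functions
    have hf1rep : f1 = fun u => (∑ j, ((Set.Ioc 0 (p.2 j)).indicator (1:ℝ→ℝ) u)
        • (Pi.single j (1:ℝ) : Fin n → ℝ))
        + ∑ j, ((Set.Ioc (1 - p.1 j + p.2 j) 1).indicator (1:ℝ→ℝ) u)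
        • (Pi.single j (1:ℝ) : Fin n → ℝ) := by
      funext u
      rw [aux_sum_single (fun j => (Set.Ioc 0 (p.2 j)).indicator (1:ℝ→ℝ) u),
        aux_sum_single (fun j => (Set.Ioc (1 - p.1 j + p.2 j) 1).indicator (1:ℝ→ℝ) u)]
      rfl
    have hf2rep : f2 = fun u => ∑ j,
        ((Set.Ioc 0 (p.2 j)).indicator (1:ℝ→ℝ) u) • (Pi.single j (1:ℝ) : Fin n → ℝ) :=
      funext fun u => (aux_sum_single _).symm
    have hpA : Integrable (fun u => ∑ j, ((Set.Ioc 0 (p.2 j)).indicator (1:ℝ→ℝ) u)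
        • (Pi.single j (1:ℝ) : Fin n → ℝ)) μ :=
      integrable_finset_sum _ fun j _ => ((hIint _ _).smul_const _)
    have hpB : Integrable (fun u => ∑ j, ((Set.Ioc (1 - p.1 j + p.2 j) 1).indicator (1:ℝ→ℝ) u)
        • (Pi.single j (1:ℝ) : Fin n → ℝ)) μ :=
      integrable_finset_sum _ fun j _ => ((hIint _ _).smul_const _)
    have hint1 : Integrable f1 μ := by
      rw [hf1rep]
      exact hpA.add hpB
    have hint2 : Integrable f2 μ := by
      rw [hf2rep]
      exact hpA
    have hIsA : ∀ j : Fin n, j ∈ Finset.univ → Integrable (fun u =>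
        ((Set.Ioc 0 (p.2 j)).indicator (1:ℝ→ℝ) u) • (Pi.single j (1:ℝ) : Fin n → ℝ)) μ :=
      fun j _ => ((hIint _ _).smul_const _)
    have hIsB : ∀ j : Fin n, j ∈ Finset.univ → Integrable (fun u =>
        ((Set.Ioc (1 - p.1 j + p.2 j) 1).indicator (1:ℝ→ℝ) u) • (Pi.single j (1:ℝ) : Fin n → ℝ)) μ :=
      fun j _ => ((hIint _ _).smul_const _)
    have hiA' : ∀ j : Fin n, ∫ u, ((Set.Ioc 0 (p.2 j)).indicator (1:ℝ→ℝ) u)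
        • (Pi.single j (1:ℝ) : Fin n → ℝ) ∂μ = p.2 j • (Pi.single j (1:ℝ) : Fin n → ℝ) := by
      intro j
      rw [integral_smul_const, hIval 0 (p.2 j) le_rfl (hz j).1 (hz j).2]
      rw [show p.2 j - 0 = p.2 j from by ring]
    have hiB' : ∀ j : Fin n, ∫ u, ((Set.Ioc (1 - p.1 j + p.2 j) 1).indicator (1:ℝ→ℝ) u)
        • (Pi.single j (1:ℝ) : Fin n → ℝ) ∂μ = (p.1 j - p.2 j) • (Pi.single j (1:ℝ) : Fin n → ℝ) := by
      intro j
      rw [integral_smul_const,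
        hIval (1 - p.1 j + p.2 j) 1 (by have := (hx j).2; have := (hz j).1; linarith)
          (by have := hzx j; linarith) le_rfl]
      rw [show 1 - (1 - p.1 j + p.2 j) = p.1 j - p.2 j from by ring]
    have hi1 : ∫ u, f1 u ∂μ = p.1 := by
      simp only [hf1rep]
      rw [integral_add hpA hpB, integral_finset_sum _ hIsA, integral_finset_sum _ hIsB]
      simp only [hiA', hiB']
      rw [aux_sum_single p.2, aux_sum_single (fun j => p.1 j - p.2 j)]
      funext k
      show p.2 k + (p.1 k - p.2 k) = p.1 k
      ring
    have hi2 : ∫ u, f2 u ∂μ = p.2 := by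
      simp only [hf2rep]
      rw [integral_finset_sum _ hIsA]
      simp only [hiA']
      exact aux_sum_single p.2
    -- the finite 0/1 box
    set Box : Set ((Fin n → ℝ) × (Fin n → ℝ)) :=
      (Set.univ.pi fun _ : Fin n => ({0,1} : Set ℝ)) ×ˢ
        (Set.univ.pi fun _ : Fin n => ({0,1} : Set ℝ)) with hBox
    have hBoxfin : Box.Finite :=
      Set.Finite.prod
        (Set.Finite.pi fun _ => (Set.finite_singleton 1).insert 0)
        (Set.Finite.pi fun _ => (Set.finite_singleton 1).insert 0)
    -- vertex membership
    have hmem : ∀ u ∈ Set.Ioc (0:ℝ) 1, (f1 u, f2 u) ∈ S ∩ Box := by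
      rintro u ⟨hu0, hu1⟩
      have hiA : ∀ j, (Set.Ioc 0 (p.2 j)).indicator (1:ℝ→ℝ) u = if u ≤ p.2 j then 1 else 0 := by
        intro j
        by_cases h : u ≤ p.2 j
        · rw [Set.indicator_of_mem (Set.mem_Ioc.mpr ⟨hu0, h⟩), if_pos h, Pi.one_apply]
        · rw [Set.indicator_of_notMem (fun hc => h (Set.mem_Ioc.mp hc).2), if_neg h]
      have hiB : ∀ j, (Set.Ioc (1 - p.1 j + p.2 j) 1).indicator (1:ℝ→ℝ) u
          = if 1 - p.1 j + p.2 j < u then 1 else 0 := by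
        intro j
        by_cases h : 1 - p.1 j + p.2 j < u
        · rw [Set.indicator_of_mem (Set.mem_Ioc.mpr ⟨h, hu1⟩), if_pos h, Pi.one_apply]
        · rw [Set.indicator_of_notMem (fun hc => h (Set.mem_Ioc.mp hc).1), if_neg h]
      have key : ∀ m : ℕ, ∀ j : Fin n, (j : ℕ) = m →
          (Set.Ioc 0 (p.2 j)).indicator (1:ℝ→ℝ) u
            = ∏ k ∈ Finset.Iic j, ((Set.Ioc 0 (p.2 k)).indicator 1 u
                + (Set.Ioc (1 - p.1 k + p.2 k) 1).indicator 1 u) := by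
        intro m
        induction m with
        | zero =>
          intro j hj
          have hj' : j = ⟨0, hn⟩ := Fin.ext hj
          subst hj'
          rw [aux_Iic_zero hn, Finset.prod_singleton, hiB, h0]
          have : ¬ (1 - p.1 ⟨0, hn⟩ + p.1 ⟨0, hn⟩ < u) := by push_neg; linarith
          rw [if_neg this, add_zero]
        | succ m ih =>
          intro j hj
          have hmn : m < n := by omega
          set i : Fin n := ⟨m, hmn⟩ with hi
          have hij : (j : ℕ) = (i : ℕ) + 1 := hj
          rw [aux_Iic_succ i j hij, Finset.prod_insert (aux_not_mem i j hij), ← ih i rfl]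
          obtain ⟨hmc1, hmc2, hmc3, hmc4⟩ := hM i j hij
          rw [hiA, hiA, hiB]
          by_cases h1 : u ≤ p.2 j
          · have h2 : u ≤ p.2 i := le_trans h1 hmc3
            have h3 : ¬ (1 - p.1 j + p.2 j < u) := by
              have hb := (hx j).2; push_neg; linarith
            rw [if_pos h1, if_pos h2, if_neg h3]; ring
          · by_cases h2 : u ≤ p.2 i
            · have h3 : ¬ (1 - p.1 j + p.2 j < u) := by push_neg; linarith
              rw [if_neg h1, if_pos h2, if_neg h3]; ring
            · rw [if_neg h1, if_neg h2]; ring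
      refine ⟨?_, ?_⟩
      · rw [hS]
        show _ ∧ _ ∧ _
        refine ⟨?_, ?_, ?_⟩
        · intro k
          rw [Set.mem_Icc]
          have hd : ¬ (u ≤ p.2 k ∧ 1 - p.1 k + p.2 k < u) := by
            rintro ⟨ha, hb⟩
            have := (hx k).2
            linarith
          show 0 ≤ f1 u k ∧ f1 u k ≤ 1
          simp only [hf1]
          rw [hiA, hiB]
          split_ifs with ha hb
          · exact absurd ⟨ha, hb⟩ hd
          · norm_num
          · norm_num
          · norm_num
        · intro k
          rw [Set.mem_Icc]
          show 0 ≤ f2 u k ∧ f2 u k ≤ 1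
          simp only [hf2]
          rw [hiA]
          split_ifs <;> norm_num
        · intro j
          exact key j.1 j rfl
      · rw [hBox]
        rw [Set.mem_prod, Set.mem_univ_pi, Set.mem_univ_pi]
        refine ⟨?_, ?_⟩
        · intro k
          show f1 u k ∈ ({0, 1} : Set ℝ)
          simp only [hf1]
          rw [hiA, hiB, Set.mem_insert_iff, Set.mem_singleton_iff]
          have hd : ¬ (u ≤ p.2 k ∧ 1 - p.1 k + p.2 k < u) := by
            rintro ⟨ha, hb⟩; have := (hx k).2; linarith
          split_ifs with ha hb
          · exact absurd ⟨ha, hb⟩ hd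
          · norm_num
          · norm_num
          · norm_num
        · intro k
          show f2 u k ∈ ({0, 1} : Set ℝ)
          simp only [hf2]
          rw [hiA, Set.mem_insert_iff, Set.mem_singleton_iff]
          split_ifs <;> norm_num
    -- conclude
    have hpV : p = ∫ u, (f1 u, f2 u) ∂μ := by
      rw [integral_pair hint1 hint2, hi1, hi2]
    rw [hpV]
    have hsub : convexHull ℝ (S ∩ Box) ⊆ convexHull ℝ S :=
      convexHull_mono Set.inter_subset_left
    refine hsub ?_
    refine (convex_convexHull ℝ (S ∩ Box)).integral_mem
      (((hBoxfin.inter_of_right S).isCompact_convexHull (𝕜 := ℝ)).isClosed) ?_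
      (hint1.prodMk hint2)
    have hae : ∀ᵐ u ∂μ, u ∈ Set.Ioc (0:ℝ) 1 := by
      rw [hμ]; exact ae_restrict_mem measurableSet_Ioc
    filter_upwards [hae] with u hu
    exact subset_convexHull ℝ _ (hmem u hu)
end

section
/- Fix integers i < j. Consider the polytope P of tuples (σ, τ, β, ζ), where ζ ∈ ℝ, τ_k ∈ ℝ for i ≤ k ≤ j − 1, β_l ∈ ℝ for i + 1 ≤ l ≤ j, and σ_{k,l} ∈ ℝ for i ≤ k ≤ j − 1 and i + 1 ≤ l ≤ k + 1, defined by: σ_{k,l} ≥ 0 for all admissible (k,l); Σ_{l=i+1}^{k+1} σ_{k,l} = τ_k for each k; Σ_{k=l-1}^{j-1} σ_{k,l} = β_l for each l; Σ_{k=i}^{j-1} τ_k = Σ_{l=i+1}^{j} β_l = ζ; and 0 ≤ ζ ≤ 1. Then P equals the convex hull of the finite set consisting of the origin together with, for each pair (k, l) with i ≤ k ≤ j − 1 and i + 1 ≤ l ≤ k + 1, the 0/1 point at which ζ = τ_k = β_l = σ_{k,l} = 1 and all other coordinates are 0. -/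
/-- Proposition 3 of the paper: the network flow polytope of the split-feasibility
digraph (with coordinates `(σ, τ, β, ζ)`, out-of-range coordinates fixed at 0) equals the
convex hull of the origin together with the 0/1 points selecting exactly one feasible
split `(k, l)` with `i ≤ k ≤ j − 1` and `i + 1 ≤ l ≤ k + 1`. -/
theorem stmt6 (i j : ℤ) (hij : i < j) :
    {p : (ℤ → ℤ → ℝ) × (ℤ → ℝ) × (ℤ → ℝ) × ℝ |
      (∀ k l, i ≤ k → k ≤ j - 1 → i + 1 ≤ l → l ≤ k + 1 → 0 ≤ p.1 k l) ∧
      (∀ k l, ¬(i ≤ k ∧ k ≤ j - 1 ∧ i + 1 ≤ l ∧ l ≤ k + 1) → p.1 k l = 0) ∧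
      (∀ k, ¬(i ≤ k ∧ k ≤ j - 1) → p.2.1 k = 0) ∧
      (∀ l, ¬(i + 1 ≤ l ∧ l ≤ j) → p.2.2.1 l = 0) ∧
      (∀ k, i ≤ k → k ≤ j - 1 → ∑ l ∈ Finset.Icc (i + 1) (k + 1), p.1 k l = p.2.1 k) ∧
      (∀ l, i + 1 ≤ l → l ≤ j → ∑ k ∈ Finset.Icc (l - 1) (j - 1), p.1 k l = p.2.2.1 l) ∧
      (∑ k ∈ Finset.Icc i (j - 1), p.2.1 k = p.2.2.2) ∧
      (∑ l ∈ Finset.Icc (i + 1) j, p.2.2.1 l = p.2.2.2) ∧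
      0 ≤ p.2.2.2 ∧ p.2.2.2 ≤ 1} =
    convexHull ℝ (insert (0 : (ℤ → ℤ → ℝ) × (ℤ → ℝ) × (ℤ → ℝ) × ℝ)
      {p | ∃ k l : ℤ, i ≤ k ∧ k ≤ j - 1 ∧ i + 1 ≤ l ∧ l ≤ k + 1 ∧
        p = (fun k' l' => if k' = k ∧ l' = l then 1 else 0,
             fun k' => if k' = k then 1 else 0,
             fun l' => if l' = l then 1 else 0, 1)}) := by
  set X := (ℤ → ℤ → ℝ) × (ℤ → ℝ) × (ℤ → ℝ) × ℝ
  set E : ℤ → ℤ → X := fun k l =>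
    (fun k' l' => if k' = k ∧ l' = l then 1 else 0,
     fun k' => if k' = k then 1 else 0,
     fun l' => if l' = l then 1 else 0, 1) with hE
  set S : Set X := insert 0 {p | ∃ k l : ℤ, i ≤ k ∧ k ≤ j - 1 ∧ i + 1 ≤ l ∧ l ≤ k + 1 ∧
      p = E k l} with hS
  -- filter identities
  have L1 : ∀ k : ℤ, i ≤ k → k ≤ j - 1 →
      (Finset.Icc (i + 1) j).filter (fun l => l ≤ k + 1) = Finset.Icc (i + 1) (k + 1) := by
    intro k hk1 hk2; ext l; simp only [Finset.mem_filter, Finset.mem_Icc]; omega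
  have L2 : ∀ l : ℤ, i + 1 ≤ l → l ≤ j →
      (Finset.Icc i (j - 1)).filter (fun k => l ≤ k + 1) = Finset.Icc (l - 1) (j - 1) := by
    intro l hl1 hl2; ext k; simp only [Finset.mem_filter, Finset.mem_Icc]; omega
  set t0 : Finset (ℤ × ℤ) :=
    (Finset.Icc i (j - 1) ×ˢ Finset.Icc (i + 1) j).filter (fun q => q.2 ≤ q.1 + 1) with ht0
  have hmem_t0 : ∀ q : ℤ × ℤ, q ∈ t0 ↔
      (i ≤ q.1 ∧ q.1 ≤ j - 1 ∧ i + 1 ≤ q.2 ∧ q.2 ≤ q.1 + 1) := by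
    intro q
    simp only [ht0, Finset.mem_filter, Finset.mem_product, Finset.mem_Icc]
    omega
  apply le_antisymm
  · -- P ⊆ convexHull S
    rintro p ⟨hσnn, hσ0, hτ0, hβ0, hτ, hβ, hζτ, hζβ, hζ0, hζ1⟩
    -- key sum identity
    have hsum : ∑ q ∈ t0, p.1 q.1 q.2 = p.2.2.2 := by
      rw [ht0, Finset.sum_filter, Finset.sum_product, ← hζτ]
      apply Finset.sum_congr rfl
      intro k hk
      simp only [Finset.mem_Icc] at hk
      rw [← Finset.sum_filter, L1 k hk.1 hk.2, hτ k hk.1 hk.2]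
    have hrepr : p = ∑ q ∈ t0, p.1 q.1 q.2 • E q.1 q.2 := by
      have h1 : ∀ k' l', p.1 k' l' = ∑ q ∈ t0, p.1 q.1 q.2 * (if k' = q.1 ∧ l' = q.2 then 1 else 0) := by
        intro k' l'
        have : ∀ q ∈ t0, p.1 q.1 q.2 * (if k' = q.1 ∧ l' = q.2 then 1 else 0)
            = if (k', l') = q then p.1 q.1 q.2 else 0 := by
          intro q _
          by_cases h : (k', l') = q
          · subst h; simp
          · rw [if_neg h, if_neg, mul_zero]
            rintro ⟨h1, h2⟩; exact h (Prod.ext h1 h2)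
        rw [Finset.sum_congr rfl this, Finset.sum_ite_eq]
        by_cases h : (k', l') ∈ t0
        · rw [if_pos h]
        · rw [if_neg h, hσ0 k' l']
          rw [hmem_t0] at h
          simp only at h
          intro hc
          exact h ⟨hc.1, hc.2.1, hc.2.2.1, hc.2.2.2⟩
      have h2 : ∀ k', p.2.1 k' = ∑ q ∈ t0, p.1 q.1 q.2 * (if k' = q.1 then 1 else 0) := by
        intro k'
        rw [ht0, Finset.sum_filter, Finset.sum_product]
        have step : ∀ k ∈ Finset.Icc i (j - 1),
            (∑ l ∈ Finset.Icc (i + 1) j,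
              if l ≤ k + 1 then p.1 k l * (if k' = k then 1 else 0) else 0)
            = if k' = k then (∑ l ∈ Finset.Icc (i + 1) j, if l ≤ k + 1 then p.1 k l else 0) else 0 := by
          intro k _
          by_cases h : k' = k
          · simp only [if_pos h]
            apply Finset.sum_congr rfl
            intro l _; split_ifs <;> simp
          · simp only [if_neg h, mul_zero]
            simp
        rw [Finset.sum_congr rfl step, Finset.sum_ite_eq]
        by_cases h : k' ∈ Finset.Icc i (j - 1)
        · simp only [Finset.mem_Icc] at h
          rw [if_pos (Finset.mem_Icc.mpr h), ← Finset.sum_filter, L1 k' h.1 h.2, hτ k' h.1 h.2]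
        · rw [if_neg h, hτ0 k']
          simp only [Finset.mem_Icc] at h
          omega
      have h3 : ∀ l', p.2.2.1 l' = ∑ q ∈ t0, p.1 q.1 q.2 * (if l' = q.2 then 1 else 0) := by
        intro l'
        rw [ht0, Finset.sum_filter, Finset.sum_product, Finset.sum_comm]
        have step : ∀ l ∈ Finset.Icc (i + 1) j,
            (∑ k ∈ Finset.Icc i (j - 1),
              if l ≤ k + 1 then p.1 k l * (if l' = l then 1 else 0) else 0)
            = if l' = l then (∑ k ∈ Finset.Icc i (j - 1), if l ≤ k + 1 then p.1 k l else 0) else 0 := by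
          intro l _
          by_cases h : l' = l
          · simp only [if_pos h]
            apply Finset.sum_congr rfl
            intro k _; split_ifs <;> simp
          · simp only [if_neg h, mul_zero]
            simp
        rw [Finset.sum_congr rfl step, Finset.sum_ite_eq]
        by_cases h : l' ∈ Finset.Icc (i + 1) j
        · simp only [Finset.mem_Icc] at h
          rw [if_pos (Finset.mem_Icc.mpr h), ← Finset.sum_filter, L2 l' h.1 h.2, hβ l' h.1 h.2]
        · rw [if_neg h, hβ0 l']
          simp only [Finset.mem_Icc] at h
          omega
      apply Prod.ext
      · rw [Prod.fst_sum]
        funext k' l'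
        rw [Finset.sum_apply, Finset.sum_apply, h1 k' l']
        apply Finset.sum_congr rfl
        intro q _
        simp [hE, X]
      apply Prod.ext
      · rw [Prod.snd_sum, Prod.fst_sum]
        funext k'
        rw [Finset.sum_apply, h2 k']
        apply Finset.sum_congr rfl
        intro q _
        simp [hE, X]
      apply Prod.ext
      · rw [Prod.snd_sum, Prod.snd_sum, Prod.fst_sum]
        funext l'
        rw [Finset.sum_apply, h3 l']
        apply Finset.sum_congr rfl
        intro q _
        simp [hE, X]
      · rw [Prod.snd_sum, Prod.snd_sum, Prod.snd_sum, ← hsum]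
        apply Finset.sum_congr rfl
        intro q _
        simp [hE, X]
    -- now use Convex.sum_mem over Option (ℤ × ℤ)
    set w : Option (ℤ × ℤ) → ℝ := fun o => o.elim (1 - p.2.2.2) (fun q => p.1 q.1 q.2) with hw
    set z : Option (ℤ × ℤ) → X := fun o => o.elim 0 (fun q => E q.1 q.2) with hz
    set t : Finset (Option (ℤ × ℤ)) := insert none (t0.image some) with ht
    have hnone : (none : Option (ℤ × ℤ)) ∉ t0.image some := by simp
    have key : ∑ o ∈ t, w o • z o ∈ convexHull ℝ S := by
      apply (convex_convexHull ℝ S).sum_mem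
      · intro o ho
        rw [ht, Finset.mem_insert] at ho
        rcases ho with rfl | ho
        · simp only [hw, Option.elim]; linarith
        · obtain ⟨q, hq, rfl⟩ := Finset.mem_image.mp ho
          rw [hmem_t0] at hq
          exact hσnn q.1 q.2 hq.1 hq.2.1 hq.2.2.1 hq.2.2.2
      · rw [ht, Finset.sum_insert hnone, Finset.sum_image (by intros; simpa using ‹some _ = some _›)]
        simp only [hw, Option.elim]
        rw [hsum]; ring
      · intro o ho
        apply subset_convexHull
        rw [ht, Finset.mem_insert] at ho
        rcases ho with rfl | ho
        · exact Set.mem_insert _ _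
        · obtain ⟨q, hq, rfl⟩ := Finset.mem_image.mp ho
          rw [hmem_t0] at hq
          exact Set.mem_insert_iff.mpr (Or.inr ⟨q.1, q.2, hq.1, hq.2.1, hq.2.2.1, hq.2.2.2, rfl⟩)
    have : ∑ o ∈ t, w o • z o = p := by
      rw [ht, Finset.sum_insert hnone, Finset.sum_image (by intros; simpa using ‹some _ = some _›)]
      simp only [hw, hz, Option.elim, smul_zero, zero_add]
      exact hrepr.symm
    rwa [this] at key
  · -- convexHull S ⊆ P
    apply convexHull_min
    · rintro p (rfl | ⟨k, l, hk1, hk2, hl1, hl2, rfl⟩)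
      · refine ⟨?_, ?_, ?_, ?_, ?_, ?_, ?_, ?_, le_refl _, zero_le_one⟩ <;>
          simp
      · refine ⟨?_, ?_, ?_, ?_, ?_, ?_, ?_, ?_, zero_le_one, le_refl _⟩
        · intro k' l' _ _ _ _; simp only [hE]; split_ifs <;> norm_num
        · intro k' l' h; simp only [hE]
          rw [if_neg]
          rintro ⟨rfl, rfl⟩
          exact h ⟨hk1, hk2, hl1, hl2⟩
        · intro k' h; simp only [hE]
          rw [if_neg]
          rintro rfl
          exact h ⟨hk1, hk2⟩
        · intro l' h; simp only [hE]
          rw [if_neg]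
          rintro rfl
          exact h ⟨hl1, by omega⟩
        · intro k' hk'1 hk'2; simp only [hE]
          by_cases h : k' = k
          · subst h
            rw [if_pos rfl]
            have : ∀ l' ∈ Finset.Icc (i + 1) (k' + 1),
                (if k' = k' ∧ l' = l then (1:ℝ) else 0) = if l' = l then 1 else 0 := by
              intro l' _; simp
            rw [Finset.sum_congr rfl this, Finset.sum_ite_eq', if_pos]
            exact Finset.mem_Icc.mpr ⟨hl1, hl2⟩
          · rw [if_neg h]
            apply Finset.sum_eq_zero
            intro l' _
            rw [if_neg]; rintro ⟨hc, _⟩; exact h hc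
        · intro l' hl'1 hl'2; simp only [hE]
          by_cases h : l' = l
          · subst h
            rw [if_pos rfl]
            have : ∀ k' ∈ Finset.Icc (l' - 1) (j - 1),
                (if k' = k ∧ l' = l' then (1:ℝ) else 0) = if k' = k then 1 else 0 := by
              intro k' _; simp
            rw [Finset.sum_congr rfl this, Finset.sum_ite_eq', if_pos]
            exact Finset.mem_Icc.mpr ⟨by omega, hk2⟩
          · rw [if_neg h]
            apply Finset.sum_eq_zero
            intro k' _
            rw [if_neg]; rintro ⟨_, hc⟩; exact h hc
        · simp only [hE]
          rw [Finset.sum_ite_eq', if_pos]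
          exact Finset.mem_Icc.mpr ⟨hk1, hk2⟩
        · simp only [hE]
          rw [Finset.sum_ite_eq', if_pos]
          exact Finset.mem_Icc.mpr ⟨hl1, by omega⟩
    · -- convexity of P
      rintro x ⟨hx1, hx2, hx3, hx4, hx5, hx6, hx7, hx8, hx9, hx10⟩
        y ⟨hy1, hy2, hy3, hy4, hy5, hy6, hy7, hy8, hy9, hy10⟩ a b ha hb hab
      simp only [Set.mem_setOf_eq, Prod.fst_add, Prod.snd_add, Prod.smul_fst, Prod.smul_snd,
        Pi.add_apply, Pi.smul_apply, smul_eq_mul]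
      refine ⟨?_, ?_, ?_, ?_, ?_, ?_, ?_, ?_, ?_, ?_⟩
      · intro k l h1 h2 h3 h4
        exact add_nonneg (mul_nonneg ha (hx1 k l h1 h2 h3 h4)) (mul_nonneg hb (hy1 k l h1 h2 h3 h4))
      · intro k l h; rw [hx2 k l h, hy2 k l h]; ring
      · intro k h; rw [hx3 k h, hy3 k h]; ring
      · intro l h; rw [hx4 l h, hy4 l h]; ring
      · intro k h1 h2
        rw [Finset.sum_add_distrib, ← Finset.mul_sum, ← Finset.mul_sum, hx5 k h1 h2, hy5 k h1 h2]
      · intro l h1 h2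
        rw [Finset.sum_add_distrib, ← Finset.mul_sum, ← Finset.mul_sum, hx6 l h1 h2, hy6 l h1 h2]
      · rw [Finset.sum_add_distrib, ← Finset.mul_sum, ← Finset.mul_sum, hx7, hy7]
      · rw [Finset.sum_add_distrib, ← Finset.mul_sum, ← Finset.mul_sum, hx8, hy8]
      · exact add_nonneg (mul_nonneg ha hx9) (mul_nonneg hb hy9)
      · calc a * x.2.2.2 + b * y.2.2.2 ≤ a * 1 + b * 1 := by
              apply add_le_add (mul_le_mul_of_nonneg_left hx10 ha) (mul_le_mul_of_nonneg_left hy10 hb)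
            _ = 1 := by rw [mul_one, mul_one, hab]
end

section
/- Fix integers i ≥ 1, j and N with j ≤ N. Consider the polytope P of tuples (ψ, τ, β, ζ), where ζ ∈ ℝ, τ_n ∈ ℝ for j + 1 ≤ n ≤ N + 1, β_m ∈ ℝ for 0 ≤ m ≤ i − 1, and ψ_{n,m} ∈ ℝ for those n, m, defined by: ψ_{n,m} ≥ 0 for all (n, m); ψ_{N+1,0} = 0; Σ_{m=0}^{i-1} ψ_{n,m} = τ_n for each n; Σ_{n=j+1}^{N+1} ψ_{n,m} = β_m for each m; Σ_{n=j+1}^{N+1} τ_n = Σ_{m=0}^{i-1} β_m = ζ; and 0 ≤ ζ ≤ 1. Then P equals the convex hull of the finite set consisting of the origin together with, for each pair (n, m) with j + 1 ≤ n ≤ N + 1, 0 ≤ m ≤ i − 1 and (n, m) ≠ (N + 1, 0), the 0/1 point at which ζ = τ_n = β_m = ψ_{n,m} = 1 and all other coordinates are 0. -/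
namespace Stmt7Aux

abbrev E := (ℤ → ℤ → ℝ) × (ℤ → ℝ) × (ℤ → ℝ) × ℝ

def V (n m : ℤ) : E :=
  (fun n' m' => if n' = n ∧ m' = m then 1 else 0,
   fun n' => if n' = n then 1 else 0,
   fun m' => if m' = m then 1 else 0, 1)

end Stmt7Aux

open Stmt7Aux in
/-- Proposition 4 of the paper: the network flow polytope of the presence-of-parent
digraph (coordinates `(ψ, τ, β, ζ)`, the arc `(N+1, 0)` forbidden, out-of-range
coordinates fixed at 0) equals the convex hull of the origin together with the 0/1
points selecting one admissible pair `(n, m) ≠ (N+1, 0)`. -/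
theorem stmt7 (i j N : ℤ) (hi : 1 ≤ i) (hjN : j ≤ N) :
    {p : (ℤ → ℤ → ℝ) × (ℤ → ℝ) × (ℤ → ℝ) × ℝ |
      (∀ n m, j + 1 ≤ n → n ≤ N + 1 → 0 ≤ m → m ≤ i - 1 → 0 ≤ p.1 n m) ∧
      (∀ n m, ¬(j + 1 ≤ n ∧ n ≤ N + 1 ∧ 0 ≤ m ∧ m ≤ i - 1) → p.1 n m = 0) ∧
      p.1 (N + 1) 0 = 0 ∧
      (∀ n, ¬(j + 1 ≤ n ∧ n ≤ N + 1) → p.2.1 n = 0) ∧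
      (∀ m, ¬(0 ≤ m ∧ m ≤ i - 1) → p.2.2.1 m = 0) ∧
      (∀ n, j + 1 ≤ n → n ≤ N + 1 → ∑ m ∈ Finset.Icc 0 (i - 1), p.1 n m = p.2.1 n) ∧
      (∀ m, 0 ≤ m → m ≤ i - 1 → ∑ n ∈ Finset.Icc (j + 1) (N + 1), p.1 n m = p.2.2.1 m) ∧
      (∑ n ∈ Finset.Icc (j + 1) (N + 1), p.2.1 n = p.2.2.2) ∧
      (∑ m ∈ Finset.Icc 0 (i - 1), p.2.2.1 m = p.2.2.2) ∧
      0 ≤ p.2.2.2 ∧ p.2.2.2 ≤ 1} =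
    convexHull ℝ (insert (0 : (ℤ → ℤ → ℝ) × (ℤ → ℝ) × (ℤ → ℝ) × ℝ)
      {p | ∃ n m : ℤ, j + 1 ≤ n ∧ n ≤ N + 1 ∧ 0 ≤ m ∧ m ≤ i - 1 ∧ (n, m) ≠ (N + 1, 0) ∧
        p = (fun n' m' => if n' = n ∧ m' = m then 1 else 0,
             fun n' => if n' = n then 1 else 0,
             fun m' => if m' = m then 1 else 0, 1)}) := by
  set S : Set E := insert (0 : E)
      {p | ∃ n m : ℤ, j + 1 ≤ n ∧ n ≤ N + 1 ∧ 0 ≤ m ∧ m ≤ i - 1 ∧ (n, m) ≠ (N + 1, 0) ∧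
        p = (fun n' m' => if n' = n ∧ m' = m then 1 else 0,
             fun n' => if n' = n then 1 else 0,
             fun m' => if m' = m then 1 else 0, 1)} with hS
  set A := Finset.Icc (j + 1) (N + 1) with hA
  set B := Finset.Icc (0 : ℤ) (i - 1) with hB
  set T := A ×ˢ B with hT
  have hgrid : ((N : ℤ) + 1, (0 : ℤ)) ∈ T := by
    simp [hT, hA, hB, Finset.mem_Icc]; omega
  apply Set.eq_of_subset_of_subset
  · -- polytope ⊆ hull
    rintro p ⟨h1, h2, h3, h4, h5, h6, h7, h8, h9, h10, h11⟩
    set w : ℤ × ℤ → ℝ := fun q => if q = (N + 1, 0) then 1 - p.2.2.2 else p.1 q.1 q.2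
      with hw
    set z : ℤ × ℤ → E := fun q => if q = (N + 1, 0) then 0 else V q.1 q.2 with hz
    have hpsum : ∑ q ∈ T, p.1 q.1 q.2 = p.2.2.2 := by
      rw [hT, Finset.sum_product']
      rw [← h8]
      apply Finset.sum_congr rfl
      intro n hn
      rw [hA, Finset.mem_Icc] at hn
      exact h6 n hn.1 hn.2
    have hwsum : ∑ q ∈ T, w q = 1 := by
      rw [← Finset.add_sum_erase T w hgrid]
      have : ∑ q ∈ T.erase (N + 1, 0), w q = ∑ q ∈ T.erase (N + 1, 0), p.1 q.1 q.2 := by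
        apply Finset.sum_congr rfl
        intro q hq
        rw [hw]
        simp only [if_neg (Finset.mem_erase.mp hq).1]
      rw [this, Finset.sum_erase_eq_sub hgrid, hpsum]
      simp [hw, h3]
    have hwnn : ∀ q ∈ T, 0 ≤ w q := by
      intro q hq
      rw [hw]
      by_cases h : q = (N + 1, 0)
      · simp [h]; linarith
      · simp only [if_neg h]
        rw [hT, Finset.mem_product, hA, hB, Finset.mem_Icc, Finset.mem_Icc] at hq
        exact h1 q.1 q.2 hq.1.1 hq.1.2 hq.2.1 hq.2.2
    have hzS : ∀ q ∈ T, z q ∈ S := by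
      intro q hq
      rw [hz]
      by_cases h : q = (N + 1, 0)
      · simp only [if_pos h]; exact Set.mem_insert _ _
      · simp only [if_neg h]
        apply Set.mem_insert_of_mem
        rw [hT, Finset.mem_product, hA, hB, Finset.mem_Icc, Finset.mem_Icc] at hq
        exact ⟨q.1, q.2, hq.1.1, hq.1.2, hq.2.1, hq.2.2, by simpa using h, rfl⟩
    have key : p = ∑ q ∈ T, w q • z q := by
      have hsplit : ∑ q ∈ T, w q • z q = ∑ q ∈ T, p.1 q.1 q.2 • V q.1 q.2 := by
        rw [← Finset.add_sum_erase T (fun q => w q • z q) hgrid,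
            ← Finset.add_sum_erase T (fun q => p.1 q.1 q.2 • V q.1 q.2) hgrid]
        congr 1
        · simp [hw, hz, h3]
        · apply Finset.sum_congr rfl
          intro q hq
          have hne := (Finset.mem_erase.mp hq).1
          simp only [hw, hz, if_neg hne]
      rw [hsplit]
      have Vdef : ∀ n m : ℤ, V n m =
          ((fun n' m' => if n' = n ∧ m' = m then (1 : ℝ) else 0),
           (fun n' => if n' = n then (1 : ℝ) else 0),
           (fun m' => if m' = m then (1 : ℝ) else 0), (1 : ℝ)) := fun _ _ => rfl
      refine Prod.ext ?_ (Prod.ext ?_ (Prod.ext ?_ ?_))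
      · -- ψ component
        rw [Prod.fst_sum]
        funext n' m'
        rw [Finset.sum_apply, Finset.sum_apply]
        have : ∀ q ∈ T, (p.1 q.1 q.2 • V q.1 q.2).1 n' m'
            = if q = (n', m') then p.1 q.1 q.2 else 0 := by
          intro q hq
          simp only [Prod.smul_fst, Pi.smul_apply, smul_eq_mul, Vdef, Prod.ext_iff]
          by_cases h : n' = q.1 ∧ m' = q.2
          · rw [if_pos h, if_pos ⟨h.1.symm, h.2.symm⟩, mul_one]
          · rw [if_neg h, if_neg (by tauto), mul_zero]
        rw [Finset.sum_congr rfl this, Finset.sum_ite_eq' T (n', m') (fun q => p.1 q.1 q.2)]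
        by_cases hmem : (n', m') ∈ T
        · simp [hmem]
        · rw [if_neg hmem]
          rw [hT, Finset.mem_product, hA, hB, Finset.mem_Icc, Finset.mem_Icc] at hmem
          exact h2 n' m' (by tauto)
      · -- τ component
        rw [Prod.snd_sum, Prod.fst_sum]
        funext n'
        rw [Finset.sum_apply]
        have : ∀ q : ℤ × ℤ, (p.1 q.1 q.2 • V q.1 q.2).2.1 n'
            = p.1 q.1 q.2 * (if n' = q.1 then 1 else 0) := by
          intro q; simp [Vdef]
        simp only [this]
        rw [hT, Finset.sum_product]
        dsimp only
        have hrow : ∀ n ∈ A, ∑ m ∈ B, p.1 n m * (if n' = n then (1:ℝ) else 0)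
            = if n = n' then p.2.1 n else 0 := by
          intro n hn
          rw [← Finset.sum_mul]
          rw [hA, Finset.mem_Icc] at hn
          rw [hB, h6 n hn.1 hn.2]
          by_cases h : n' = n
          · rw [if_pos h, if_pos h.symm, mul_one]
          · rw [if_neg h, if_neg (Ne.symm h), mul_zero]
        rw [Finset.sum_congr rfl hrow, Finset.sum_ite_eq' A n' p.2.1]
        by_cases hmem : n' ∈ A
        · simp [hmem]
        · rw [if_neg hmem]
          rw [hA, Finset.mem_Icc] at hmem
          exact h4 n' (by tauto)
      · -- β component
        rw [Prod.snd_sum, Prod.snd_sum, Prod.fst_sum]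
        funext m'
        rw [Finset.sum_apply]
        have : ∀ q : ℤ × ℤ, (p.1 q.1 q.2 • V q.1 q.2).2.2.1 m'
            = p.1 q.1 q.2 * (if m' = q.2 then 1 else 0) := by
          intro q; simp [Vdef]
        simp only [this]
        rw [hT, Finset.sum_product_right]
        dsimp only
        have hcol : ∀ m ∈ B, ∑ n ∈ A, p.1 n m * (if m' = m then (1:ℝ) else 0)
            = if m = m' then p.2.2.1 m else 0 := by
          intro m hm
          rw [← Finset.sum_mul]
          rw [hB, Finset.mem_Icc] at hm
          rw [hA, h7 m hm.1 hm.2]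
          by_cases h : m' = m
          · rw [if_pos h, if_pos h.symm, mul_one]
          · rw [if_neg h, if_neg (Ne.symm h), mul_zero]
        rw [Finset.sum_congr rfl hcol, Finset.sum_ite_eq' B m' p.2.2.1]
        by_cases hmem : m' ∈ B
        · simp [hmem]
        · rw [if_neg hmem]
          rw [hB, Finset.mem_Icc] at hmem
          exact h5 m' (by tauto)
      · -- ζ component
        rw [Prod.snd_sum, Prod.snd_sum, Prod.snd_sum]
        have : ∀ q : ℤ × ℤ, (p.1 q.1 q.2 • V q.1 q.2).2.2.2 = p.1 q.1 q.2 := by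
          intro q; simp [Vdef]
        simp only [this]
        exact hpsum.symm
    rw [key, ← Finset.centerMass_eq_of_sum_1 T z hwsum]
    exact Finset.centerMass_mem_convexHull T hwnn (by rw [hwsum]; norm_num) hzS
  · -- hull ⊆ polytope
    apply convexHull_min
    · rintro p (rfl | ⟨n, m, hn1, hn2, hm1, hm2, hne, rfl⟩)
      · refine ⟨?_, ?_, ?_, ?_, ?_, ?_, ?_, ?_, ?_, ?_, ?_⟩ <;> simp
      · refine ⟨?_, ?_, ?_, ?_, ?_, ?_, ?_, ?_, ?_, ?_, ?_⟩
        · intro n' m' _ _ _ _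
          dsimp only
          split_ifs <;> norm_num
        · intro n' m' hcond
          dsimp only
          rw [if_neg]
          rintro ⟨rfl, rfl⟩
          exact hcond ⟨hn1, hn2, hm1, hm2⟩
        · dsimp only
          rw [if_neg]
          rintro ⟨h1, h2⟩
          exact hne (by rw [Prod.ext_iff]; exact ⟨h1.symm, h2.symm⟩)
        · intro n' hcond
          dsimp only
          rw [if_neg]
          rintro rfl
          exact hcond ⟨hn1, hn2⟩
        · intro m' hcond
          dsimp only
          rw [if_neg]
          rintro rfl
          exact hcond ⟨hm1, hm2⟩
        · intro n' _ _
          dsimp only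
          by_cases h : n' = n
          · subst h
            simp [hB, Finset.sum_ite_eq', Finset.mem_Icc, hm1, hm2]
          · simp [h]
        · intro m' _ _
          dsimp only
          by_cases h : m' = m
          · subst h
            simp [hA, Finset.sum_ite_eq', Finset.mem_Icc, hn1, hn2]
          · simp [h]
        · dsimp only
          rw [Finset.sum_ite_eq' (Finset.Icc (j+1) (N+1)) n (fun _ => (1:ℝ))]
          rw [if_pos (Finset.mem_Icc.mpr ⟨hn1, hn2⟩)]
        · dsimp only
          rw [Finset.sum_ite_eq' (Finset.Icc 0 (i-1)) m (fun _ => (1:ℝ))]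
          rw [if_pos (Finset.mem_Icc.mpr ⟨hm1, hm2⟩)]
        · norm_num
        · norm_num
    · -- convexity
      rintro x ⟨x1, x2, x3, x4, x5, x6, x7, x8, x9, x10, x11⟩
        y ⟨y1, y2, y3, y4, y5, y6, y7, y8, y9, y10, y11⟩ a b ha hb hab
      simp only [Set.mem_setOf_eq, Prod.fst_add, Prod.snd_add, Prod.smul_fst,
        Prod.smul_snd, Pi.add_apply, Pi.smul_apply, smul_eq_mul]
      refine ⟨?_, ?_, ?_, ?_, ?_, ?_, ?_, ?_, ?_, ?_, ?_⟩
      · intro n m hn1 hn2 hm1 hm2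
        have := x1 n m hn1 hn2 hm1 hm2
        have := y1 n m hn1 hn2 hm1 hm2
        positivity
      · intro n m h
        rw [x2 n m h, y2 n m h]; ring
      · rw [x3, y3]; ring
      · intro n h
        rw [x4 n h, y4 n h]; ring
      · intro m h
        rw [x5 m h, y5 m h]; ring
      · intro n hn1 hn2
        rw [Finset.sum_add_distrib, ← Finset.mul_sum, ← Finset.mul_sum,
          x6 n hn1 hn2, y6 n hn1 hn2]
      · intro m hm1 hm2
        rw [Finset.sum_add_distrib, ← Finset.mul_sum, ← Finset.mul_sum,
          x7 m hm1 hm2, y7 m hm1 hm2]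
      · rw [Finset.sum_add_distrib, ← Finset.mul_sum, ← Finset.mul_sum, x8, y8]
      · rw [Finset.sum_add_distrib, ← Finset.mul_sum, ← Finset.mul_sum, x9, y9]
      · positivity
      · nlinarith
end

section
/- Fix integers 1 ≤ i < j ≤ N. Consider the polytope P of tuples (ζ, τ, β, σ, t, b, ψ, χ, ρ), where ζ, χ, ρ ∈ ℝ; τ_k ∈ ℝ for i ≤ k ≤ j − 1; β_l ∈ ℝ for i + 1 ≤ l ≤ j; σ_{k,l} ∈ ℝ for i ≤ k ≤ j − 1, i + 1 ≤ l ≤ k + 1; t_n ∈ ℝ for j + 1 ≤ n ≤ N + 1; b_m ∈ ℝ for 0 ≤ m ≤ i − 1; and ψ_{n,m} ∈ ℝ for those n, m; defined by: σ_{k,l} ≥ 0; ψ_{n,m} ≥ 0; ψ_{N+1,0} = 0; Σ_{l=i+1}^{k+1} σ_{k,l} = τ_k; Σ_{k=l-1}^{j-1} σ_{k,l} = β_l; Σ_{m=0}^{i-1} ψ_{n,m} = t_n; Σ_{n=j+1}^{N+1} ψ_{n,m} = b_m; Σ_k τ_k = Σ_l β_l = Σ_n t_n = Σ_m b_m = ζ;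 0 ≤ ζ ≤ 1; 0 ≤ χ ≤ b_0; 0 ≤ ρ ≤ t_{N+1}. Then P equals the convex hull of the finite set E consisting of the origin together with, for every (k, l, n, m) with i ≤ k ≤ j − 1, i + 1 ≤ l ≤ k + 1, j + 1 ≤ n ≤ N + 1, 0 ≤ m ≤ i − 1 and (n, m) ≠ (N + 1, 0), and every c, d ∈ {0,1} with c = 0 unless m = 0 and d = 0 unless n = N + 1, the point at which ζ = τ_k = β_l = σ_{k,l} = t_n = b_m = ψ_{n,m} = 1, χ = c, ρ = d, and all other coordinates are 0. -/
/-- Ambient space for Proposition 5: coordinates `(ζ, χ, ρ, τ, β, σ, t, b, ψ)`. -/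
abbrev Stmt8Space : Type :=
  ℝ × ℝ × ℝ × (ℤ → ℝ) × (ℤ → ℝ) × (ℤ → ℤ → ℝ) × (ℤ → ℝ) × (ℤ → ℝ) × (ℤ → ℤ → ℝ)

/-- The combined network flow polytope of Proposition 5 (out-of-range coordinates
fixed at 0). -/
def stmt8P (i j N : ℤ) : Set Stmt8Space :=
  fun x =>
    let ζ := x.1; let χ := x.2.1; let ρ := x.2.2.1
    let τ := x.2.2.2.1; let β := x.2.2.2.2.1; let σ := x.2.2.2.2.2.1
    let t := x.2.2.2.2.2.2.1; let b := x.2.2.2.2.2.2.2.1; let ψ := x.2.2.2.2.2.2.2.2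
    (∀ k l, i ≤ k → k ≤ j - 1 → i + 1 ≤ l → l ≤ k + 1 → 0 ≤ σ k l) ∧
    (∀ k l, ¬(i ≤ k ∧ k ≤ j - 1 ∧ i + 1 ≤ l ∧ l ≤ k + 1) → σ k l = 0) ∧
    (∀ n m, j + 1 ≤ n → n ≤ N + 1 → 0 ≤ m → m ≤ i - 1 → 0 ≤ ψ n m) ∧
    (∀ n m, ¬(j + 1 ≤ n ∧ n ≤ N + 1 ∧ 0 ≤ m ∧ m ≤ i - 1) → ψ n m = 0) ∧
    ψ (N + 1) 0 = 0 ∧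
    (∀ k, ¬(i ≤ k ∧ k ≤ j - 1) → τ k = 0) ∧
    (∀ l, ¬(i + 1 ≤ l ∧ l ≤ j) → β l = 0) ∧
    (∀ n, ¬(j + 1 ≤ n ∧ n ≤ N + 1) → t n = 0) ∧
    (∀ m, ¬(0 ≤ m ∧ m ≤ i - 1) → b m = 0) ∧
    (∀ k, i ≤ k → k ≤ j - 1 → ∑ l ∈ Finset.Icc (i + 1) (k + 1), σ k l = τ k) ∧
    (∀ l, i + 1 ≤ l → l ≤ j → ∑ k ∈ Finset.Icc (l - 1) (j - 1), σ k l = β l) ∧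
    (∀ n, j + 1 ≤ n → n ≤ N + 1 → ∑ m ∈ Finset.Icc 0 (i - 1), ψ n m = t n) ∧
    (∀ m, 0 ≤ m → m ≤ i - 1 → ∑ n ∈ Finset.Icc (j + 1) (N + 1), ψ n m = b m) ∧
    (∑ k ∈ Finset.Icc i (j - 1), τ k = ζ) ∧
    (∑ l ∈ Finset.Icc (i + 1) j, β l = ζ) ∧
    (∑ n ∈ Finset.Icc (j + 1) (N + 1), t n = ζ) ∧
    (∑ m ∈ Finset.Icc 0 (i - 1), b m = ζ) ∧
    0 ≤ ζ ∧ ζ ≤ 1 ∧ 0 ≤ χ ∧ χ ≤ b 0 ∧ 0 ≤ ρ ∧ ρ ≤ t (N + 1)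

/-- The finite set `E` of Proposition 5: the origin together with the 0/1 points
selecting one split `(k, l)`, one parent pair `(n, m) ≠ (N+1, 0)`, and heat-exchanger
values `c, d ∈ {0,1}` with `c = 0` unless `m = 0` and `d = 0` unless `n = N + 1`. -/
def stmt8E (i j N : ℤ) : Set Stmt8Space :=
  insert 0
    {x | ∃ (k l n m : ℤ) (c d : ℝ),
      i ≤ k ∧ k ≤ j - 1 ∧ i + 1 ≤ l ∧ l ≤ k + 1 ∧
      j + 1 ≤ n ∧ n ≤ N + 1 ∧ 0 ≤ m ∧ m ≤ i - 1 ∧ (n, m) ≠ (N + 1, 0) ∧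
      (c = 0 ∨ c = 1) ∧ (d = 0 ∨ d = 1) ∧ (m ≠ 0 → c = 0) ∧ (n ≠ N + 1 → d = 0) ∧
      x = (1, c, d,
           fun k' => if k' = k then 1 else 0,
           fun l' => if l' = l then 1 else 0,
           fun k' l' => if k' = k ∧ l' = l then 1 else 0,
           fun n' => if n' = n then 1 else 0,
           fun m' => if m' = m then 1 else 0,
           fun n' m' => if n' = n ∧ m' = m then 1 else 0)}

private lemma stmt8P_convex (i j N : ℤ) : Convex ℝ (stmt8P i j N) := by
  rintro ⟨ζx, χx, ρx, τx, βx, σx, tx, bx, ψx⟩ hx ⟨ζy, χy, ρy, τy, βy, σy, ty, bY, ψy⟩ hy a c ha hc hac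
  simp only [stmt8P, Membership.mem, Set.Mem] at hx hy
  obtain ⟨x1,x2,x3,x4,x5,x6,x7,x8,x9,x10,x11,x12,x13,x14,x15,x16,x17,x18,x19,x20,x21,x22,x23⟩ := hx
  obtain ⟨y1,y2,y3,y4,y5,y6,y7,y8,y9,y10,y11,y12,y13,y14,y15,y16,y17,y18,y19,y20,y21,y22,y23⟩ := hy
  refine ⟨?_,?_,?_,?_,?_,?_,?_,?_,?_,?_,?_,?_,?_,?_,?_,?_,?_,?_,?_,?_,?_,?_,?_⟩
  · intro k l h1 h2 h3 h4
    exact add_nonneg (mul_nonneg ha (x1 k l h1 h2 h3 h4)) (mul_nonneg hc (y1 k l h1 h2 h3 h4))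
  · intro k l h
    show a * σx k l + c * σy k l = 0
    rw [x2 k l h, y2 k l h]; ring
  · intro n m h1 h2 h3 h4
    exact add_nonneg (mul_nonneg ha (x3 n m h1 h2 h3 h4)) (mul_nonneg hc (y3 n m h1 h2 h3 h4))
  · intro n m h
    show a * ψx n m + c * ψy n m = 0
    rw [x4 n m h, y4 n m h]; ring
  · show a * ψx (N+1) 0 + c * ψy (N+1) 0 = 0
    rw [x5, y5]; ring
  · intro k h; show a * τx k + c * τy k = 0; rw [x6 k h, y6 k h]; ring
  · intro l h; show a * βx l + c * βy l = 0; rw [x7 l h, y7 l h]; ring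
  · intro n h; show a * tx n + c * ty n = 0; rw [x8 n h, y8 n h]; ring
  · intro m h; show a * bx m + c * bY m = 0; rw [x9 m h, y9 m h]; ring
  · intro k h1 h2
    show ∑ l ∈ Finset.Icc (i+1) (k+1), (a * σx k l + c * σy k l) = a * τx k + c * τy k
    rw [Finset.sum_add_distrib, ← Finset.mul_sum, ← Finset.mul_sum, x10 k h1 h2, y10 k h1 h2]
  · intro l h1 h2
    show ∑ k ∈ Finset.Icc (l-1) (j-1), (a * σx k l + c * σy k l) = a * βx l + c * βy l
    rw [Finset.sum_add_distrib, ← Finset.mul_sum, ← Finset.mul_sum, x11 l h1 h2, y11 l h1 h2]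
  · intro n h1 h2
    show ∑ m ∈ Finset.Icc 0 (i-1), (a * ψx n m + c * ψy n m) = a * tx n + c * ty n
    rw [Finset.sum_add_distrib, ← Finset.mul_sum, ← Finset.mul_sum, x12 n h1 h2, y12 n h1 h2]
  · intro m h1 h2
    show ∑ n ∈ Finset.Icc (j+1) (N+1), (a * ψx n m + c * ψy n m) = a * bx m + c * bY m
    rw [Finset.sum_add_distrib, ← Finset.mul_sum, ← Finset.mul_sum, x13 m h1 h2, y13 m h1 h2]
  · show ∑ k ∈ Finset.Icc i (j-1), (a * τx k + c * τy k) = a * ζx + c * ζy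
    rw [Finset.sum_add_distrib, ← Finset.mul_sum, ← Finset.mul_sum, x14, y14]
  · show ∑ l ∈ Finset.Icc (i+1) j, (a * βx l + c * βy l) = a * ζx + c * ζy
    rw [Finset.sum_add_distrib, ← Finset.mul_sum, ← Finset.mul_sum, x15, y15]
  · show ∑ n ∈ Finset.Icc (j+1) (N+1), (a * tx n + c * ty n) = a * ζx + c * ζy
    rw [Finset.sum_add_distrib, ← Finset.mul_sum, ← Finset.mul_sum, x16, y16]
  · show ∑ m ∈ Finset.Icc 0 (i-1), (a * bx m + c * bY m) = a * ζx + c * ζy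
    rw [Finset.sum_add_distrib, ← Finset.mul_sum, ← Finset.mul_sum, x17, y17]
  · exact add_nonneg (mul_nonneg ha x18) (mul_nonneg hc y18)
  · show a * ζx + c * ζy ≤ 1
    nlinarith
  · exact add_nonneg (mul_nonneg ha x20) (mul_nonneg hc y20)
  · exact add_le_add (mul_le_mul_of_nonneg_left x21 ha) (mul_le_mul_of_nonneg_left y21 hc)
  · exact add_nonneg (mul_nonneg ha x22) (mul_nonneg hc y22)
  · exact add_le_add (mul_le_mul_of_nonneg_left x23 ha) (mul_le_mul_of_nonneg_left y23 hc)
private lemma stmt8E_subset (i j N : ℤ) (hi : 1 ≤ i) (hij : i < j) (hjN : j ≤ N) :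
    stmt8E i j N ⊆ stmt8P i j N := by
  rintro x (rfl | ⟨k, l, n, m, c, d, hk1, hk2, hl1, hl2, hn1, hn2, hm1, hm2, hnm, hc, hd, hcm, hdn, rfl⟩)
  · exact ⟨fun _ _ _ _ _ _ => le_refl 0, fun _ _ _ => rfl, fun _ _ _ _ _ _ => le_refl 0,
      fun _ _ _ => rfl, rfl, fun _ _ => rfl, fun _ _ => rfl, fun _ _ => rfl, fun _ _ => rfl,
      fun _ _ _ => Finset.sum_const_zero, fun _ _ _ => Finset.sum_const_zero,
      fun _ _ _ => Finset.sum_const_zero, fun _ _ _ => Finset.sum_const_zero,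
      Finset.sum_const_zero, Finset.sum_const_zero, Finset.sum_const_zero, Finset.sum_const_zero,
      le_refl 0, zero_le_one, le_refl 0, le_refl 0, le_refl 0, le_refl 0⟩
  · have hc01 : (0:ℝ) ≤ c ∧ c ≤ 1 := by rcases hc with rfl | rfl <;> norm_num
    have hd01 : (0:ℝ) ≤ d ∧ d ≤ 1 := by rcases hd with rfl | rfl <;> norm_num
    refine ⟨?_,?_,?_,?_,?_,?_,?_,?_,?_,?_,?_,?_,?_,?_,?_,?_,?_,?_,?_,?_,?_,?_,?_⟩
    · intro k' l' _ _ _ _; dsimp only; split <;> norm_num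
    · intro k' l' h; dsimp only; rw [if_neg]; rintro ⟨rfl, rfl⟩; exact h ⟨hk1, hk2, hl1, hl2⟩
    · intro n' m' _ _ _ _; dsimp only; split <;> norm_num
    · intro n' m' h; dsimp only; rw [if_neg]; rintro ⟨rfl, rfl⟩; exact h ⟨hn1, hn2, hm1, hm2⟩
    · dsimp only; rw [if_neg]; rintro ⟨h1, h2⟩; exact hnm (by rw [h1, h2])
    · intro k' h; dsimp only; rw [if_neg]; rintro rfl; exact h ⟨hk1, hk2⟩
    · intro l' h; dsimp only; rw [if_neg]; rintro rfl
      exact h ⟨hl1, by omega⟩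
    · intro n' h; dsimp only; rw [if_neg]; rintro rfl; exact h ⟨hn1, hn2⟩
    · intro m' h; dsimp only; rw [if_neg]; rintro rfl; exact h ⟨hm1, hm2⟩
    · intro k' h1 h2; dsimp only
      by_cases hkk : k' = k
      · subst hkk
        rw [if_pos rfl]
        have : ∀ l' ∈ Finset.Icc (i+1) (k'+1), (if k' = k' ∧ l' = l then (1:ℝ) else 0)
            = if l' = l then (1:ℝ) else 0 := by intro l' _; simp
        rw [Finset.sum_congr rfl this, Finset.sum_ite_eq' (Finset.Icc (i+1) (k'+1)) l (fun _ => (1:ℝ)),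
          if_pos (Finset.mem_Icc.2 ⟨hl1, hl2⟩)]
      · rw [if_neg hkk]
        apply Finset.sum_eq_zero; intro l' _
        rw [if_neg]; rintro ⟨h, _⟩; exact hkk h
    · intro l' h1 h2; dsimp only
      by_cases hll : l' = l
      · subst hll
        rw [if_pos rfl]
        have : ∀ k' ∈ Finset.Icc (l'-1) (j-1), (if k' = k ∧ l' = l' then (1:ℝ) else 0)
            = if k' = k then (1:ℝ) else 0 := by intro k' _; simp
        rw [Finset.sum_congr rfl this, Finset.sum_ite_eq' (Finset.Icc (l'-1) (j-1)) k (fun _ => (1:ℝ)),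
          if_pos (Finset.mem_Icc.2 ⟨by omega, hk2⟩)]
      · rw [if_neg hll]
        apply Finset.sum_eq_zero; intro k' _
        rw [if_neg]; rintro ⟨_, h⟩; exact hll h
    · intro n' h1 h2; dsimp only
      by_cases hnn : n' = n
      · subst hnn
        rw [if_pos rfl]
        have : ∀ m' ∈ Finset.Icc 0 (i-1), (if n' = n' ∧ m' = m then (1:ℝ) else 0)
            = if m' = m then (1:ℝ) else 0 := by intro m' _; simp
        rw [Finset.sum_congr rfl this, Finset.sum_ite_eq' (Finset.Icc 0 (i-1)) m (fun _ => (1:ℝ)),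
          if_pos (Finset.mem_Icc.2 ⟨hm1, hm2⟩)]
      · rw [if_neg hnn]
        apply Finset.sum_eq_zero; intro m' _
        rw [if_neg]; rintro ⟨h, _⟩; exact hnn h
    · intro m' h1 h2; dsimp only
      by_cases hmm : m' = m
      · subst hmm
        rw [if_pos rfl]
        have : ∀ n' ∈ Finset.Icc (j+1) (N+1), (if n' = n ∧ m' = m' then (1:ℝ) else 0)
            = if n' = n then (1:ℝ) else 0 := by intro n' _; simp
        rw [Finset.sum_congr rfl this, Finset.sum_ite_eq' (Finset.Icc (j+1) (N+1)) n (fun _ => (1:ℝ)),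
          if_pos (Finset.mem_Icc.2 ⟨hn1, hn2⟩)]
      · rw [if_neg hmm]
        apply Finset.sum_eq_zero; intro n' _
        rw [if_neg]; rintro ⟨_, h⟩; exact hmm h
    · dsimp only
      rw [Finset.sum_ite_eq' (Finset.Icc i (j-1)) k (fun _ => (1:ℝ)),
        if_pos (Finset.mem_Icc.2 ⟨hk1, hk2⟩)]
    · dsimp only
      rw [Finset.sum_ite_eq' (Finset.Icc (i+1) j) l (fun _ => (1:ℝ)),
        if_pos (Finset.mem_Icc.2 ⟨hl1, by omega⟩)]
    · dsimp only
      rw [Finset.sum_ite_eq' (Finset.Icc (j+1) (N+1)) n (fun _ => (1:ℝ)),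
        if_pos (Finset.mem_Icc.2 ⟨hn1, hn2⟩)]
    · dsimp only
      rw [Finset.sum_ite_eq' (Finset.Icc 0 (i-1)) m (fun _ => (1:ℝ)),
        if_pos (Finset.mem_Icc.2 ⟨hm1, hm2⟩)]
    · exact zero_le_one
    · exact le_refl 1
    · exact hc01.1
    · show c ≤ if (0:ℤ) = m then 1 else 0
      by_cases hm : m = 0
      · rw [if_pos hm.symm]; exact hc01.2
      · rw [if_neg (fun h => hm h.symm), hcm hm]
    · exact hd01.1
    · show d ≤ if N + 1 = n then 1 else 0
      by_cases hn : n = N + 1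
      · rw [if_pos hn.symm]; exact hd01.2
      · rw [if_neg (fun h => hn h.symm), hdn hn]
set_option maxHeartbeats 3200000 in
private lemma stmt8P_subset (i j N : ℤ) (hi : 1 ≤ i) (hij : i < j) (hjN : j ≤ N) :
    stmt8P i j N ⊆ convexHull ℝ (stmt8E i j N) := by
  rintro ⟨ζ, χ, ρ, τ, β, σ, t, b, ψ⟩ hx
  simp only [stmt8P, Membership.mem, Set.Mem] at hx
  obtain ⟨hσ0, hσz, hψ0, hψz, hψN, hτz, hβz, htz, hbz, hστ, hσβ, hψt, hψb, hτζ, hβζ, htζ, hbζ,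
    hζ0, hζ1, hχ0, hχb, hρ0, hρt⟩ := hx
  -- nonnegativity everywhere
  have σnn : ∀ k l, 0 ≤ σ k l := by
    intro k l
    by_cases h : i ≤ k ∧ k ≤ j - 1 ∧ i + 1 ≤ l ∧ l ≤ k + 1
    · exact hσ0 k l h.1 h.2.1 h.2.2.1 h.2.2.2
    · exact (hσz k l h).ge
  have ψnn : ∀ n m, 0 ≤ ψ n m := by
    intro n m
    by_cases h : j + 1 ≤ n ∧ n ≤ N + 1 ∧ 0 ≤ m ∧ m ≤ i - 1
    · exact hψ0 n m h.1 h.2.1 h.2.2.1 h.2.2.2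
    · exact (hψz n m h).ge
  have h0E : (0 : Stmt8Space) ∈ convexHull ℝ (stmt8E i j N) :=
    subset_convexHull ℝ _ (Set.mem_insert _ _)
  rcases eq_or_lt_of_le hζ0 with hζe | hζpos
  · -- degenerate case ζ = 0 : the point is the origin
    have hτ0 : ∀ k, τ k = 0 := by
      intro k
      by_cases h : i ≤ k ∧ k ≤ j - 1
      · refine (Finset.sum_eq_zero_iff_of_nonneg ?_).1 (hτζ.trans hζe.symm) k
          (Finset.mem_Icc.2 h)
        intro k' hk'
        rw [Finset.mem_Icc] at hk'
        rw [← hστ k' hk'.1 hk'.2]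
        exact Finset.sum_nonneg fun l _ => σnn k' l
      · exact hτz k h
    have ht0 : ∀ n, t n = 0 := by
      intro n
      by_cases h : j + 1 ≤ n ∧ n ≤ N + 1
      · refine (Finset.sum_eq_zero_iff_of_nonneg ?_).1 (htζ.trans hζe.symm) n
          (Finset.mem_Icc.2 h)
        intro n' hn'
        rw [Finset.mem_Icc] at hn'
        rw [← hψt n' hn'.1 hn'.2]
        exact Finset.sum_nonneg fun m _ => ψnn n' m
      · exact htz n h
    have hβ0 : ∀ l, β l = 0 := by
      intro l
      by_cases h : i + 1 ≤ l ∧ l ≤ j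
      · rw [← hσβ l h.1 h.2]
        refine Finset.sum_eq_zero fun k hk => ?_
        rw [Finset.mem_Icc] at hk
        have := (Finset.sum_eq_zero_iff_of_nonneg (fun l' _ => σnn k l')).1
          ((hστ k (by omega) hk.2).trans (hτ0 k)) l (Finset.mem_Icc.2 ⟨h.1, by omega⟩)
        exact this
      · exact hβz l h
    have hb0' : ∀ m, b m = 0 := by
      intro m
      by_cases h : 0 ≤ m ∧ m ≤ i - 1
      · rw [← hψb m h.1 h.2]
        refine Finset.sum_eq_zero fun n hn => ?_
        rw [Finset.mem_Icc] at hn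
        exact (Finset.sum_eq_zero_iff_of_nonneg (fun m' _ => ψnn n m')).1
          ((hψt n hn.1 hn.2).trans (ht0 n)) m (Finset.mem_Icc.2 h)
      · exact hbz m h
    have hσ00 : ∀ k l, σ k l = 0 := by
      intro k l
      by_cases h : i ≤ k ∧ k ≤ j - 1 ∧ i + 1 ≤ l ∧ l ≤ k + 1
      · exact (Finset.sum_eq_zero_iff_of_nonneg (fun l' _ => σnn k l')).1
          ((hστ k h.1 h.2.1).trans (hτ0 k)) l (Finset.mem_Icc.2 ⟨h.2.2.1, h.2.2.2⟩)
      · exact hσz k l h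
    have hψ00 : ∀ n m, ψ n m = 0 := by
      intro n m
      by_cases h : j + 1 ≤ n ∧ n ≤ N + 1 ∧ 0 ≤ m ∧ m ≤ i - 1
      · exact (Finset.sum_eq_zero_iff_of_nonneg (fun m' _ => ψnn n m')).1
          ((hψt n h.1 h.2.1).trans (ht0 n)) m (Finset.mem_Icc.2 ⟨h.2.2.1, h.2.2.2⟩)
      · exact hψz n m h
    have hχ00 : χ = 0 := le_antisymm (by rw [← hb0' 0]; exact hχb) hχ0
    have hρ00 : ρ = 0 := le_antisymm (by rw [← ht0 (N+1)]; exact hρt) hρ0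
    have hxz : ((ζ, χ, ρ, τ, β, σ, t, b, ψ) : Stmt8Space) = 0 := by
      refine Prod.ext hζe.symm (Prod.ext hχ00 (Prod.ext hρ00 (Prod.ext ?_ (Prod.ext ?_
        (Prod.ext ?_ (Prod.ext ?_ (Prod.ext ?_ ?_)))))))
      · funext k; exact hτ0 k
      · funext l; exact hβ0 l
      · funext k l; exact hσ00 k l
      · funext n; exact ht0 n
      · funext m; exact hb0' m
      · funext n m; exact hψ00 n m
    rw [hxz]
    exact h0E
  · -- main case ζ > 0
    have hb0 : 0 ≤ b 0 := le_trans hχ0 hχb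
    have ht0 : 0 ≤ t (N + 1) := le_trans hρ0 hρt
    have hχdiv : b 0 * (χ / b 0) = χ := by
      rcases eq_or_lt_of_le hb0 with h | h
      · have : χ = 0 := le_antisymm (h ▸ hχb) hχ0
        rw [← h, this]; ring
      · field_simp
    have hρdiv : t (N + 1) * (ρ / t (N + 1)) = ρ := by
      rcases eq_or_lt_of_le ht0 with h | h
      · have : ρ = 0 := le_antisymm (h ▸ hρt) hρ0
        rw [← h, this]; ring
      · field_simp
    have hχd1 : χ / b 0 ≤ 1 := by
      rcases eq_or_lt_of_le hb0 with h | h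
      · rw [← h, div_zero]; exact zero_le_one
      · exact (div_le_one h).2 hχb
    have hρd1 : ρ / t (N + 1) ≤ 1 := by
      rcases eq_or_lt_of_le ht0 with h | h
      · rw [← h, div_zero]; exact zero_le_one
      · exact (div_le_one h).2 hρt
    have hχd0 : 0 ≤ χ / b 0 := div_nonneg hχ0 hb0
    have hρd0 : 0 ≤ ρ / t (N + 1) := div_nonneg hρ0 ht0
    set K := Finset.Icc i (j - 1) with hK
    set L := Finset.Icc (i + 1) j with hL
    set Nf := Finset.Icc (j + 1) (N + 1) with hNf
    set Mf := Finset.Icc 0 (i - 1) with hMf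
    set A : ℤ → ℤ → ℝ := fun n m => if m = 0 then ψ n m * (χ / b 0) else 0 with hA
    set R : ℤ → ℤ → ℝ := fun n m => if n = N + 1 then ψ n m * (ρ / t (N + 1)) else 0 with hR
    set W : ℤ → ℤ → Bool → Bool → ℝ := fun n m c d =>
      if c = true then (if d = true then 0 else A n m)
      else (if d = true then R n m else ψ n m - A n m - R n m) with hW
    set Q : Finset ((ℤ × ℤ) × Bool × Bool) := (Nf ×ˢ Mf) ×ˢ Finset.univ with hQ
    set T : Finset ((ℤ × ℤ) × (ℤ × ℤ) × Bool × Bool) := (K ×ˢ L) ×ˢ Q with hT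
    set w : ((ℤ × ℤ) × (ℤ × ℤ) × Bool × Bool) → ℝ :=
      fun e => σ e.1.1 e.1.2 * W e.2.1.1 e.2.1.2 e.2.2.1 e.2.2.2 with hw
    set pt : ((ℤ × ℤ) × (ℤ × ℤ) × Bool × Bool) → Stmt8Space := fun e =>
      (1, if e.2.2.1 = true then 1 else 0, if e.2.2.2 = true then 1 else 0,
       fun k' => if k' = e.1.1 then 1 else 0,
       fun l' => if l' = e.1.2 then 1 else 0,
       fun k' l' => if k' = e.1.1 ∧ l' = e.1.2 then 1 else 0,
       fun n' => if n' = e.2.1.1 then 1 else 0,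
       fun m' => if m' = e.2.1.2 then 1 else 0,
       fun n' m' => if n' = e.2.1.1 ∧ m' = e.2.1.2 then 1 else 0) with hpt
    set z : ((ℤ × ℤ) × (ℤ × ℤ) × Bool × Bool) → Stmt8Space := fun e =>
      if e.1.2 ≤ e.1.1 + 1 ∧ ¬(e.2.1.1 = N + 1 ∧ e.2.1.2 = 0) ∧
         (e.2.2.1 = true → e.2.1.2 = 0) ∧ (e.2.2.2 = true → e.2.1.1 = N + 1)
      then pt e else 0 with hz
    -- nonnegativity of weights
    have Ann : ∀ n m, 0 ≤ A n m := by
      intro n m; rw [hA]; dsimp only; split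
      · exact mul_nonneg (ψnn n m) hχd0
      · exact le_refl 0
    have Rnn : ∀ n m, 0 ≤ R n m := by
      intro n m; rw [hR]; dsimp only; split
      · exact mul_nonneg (ψnn n m) hρd0
      · exact le_refl 0
    have Wnn : ∀ n m c d, 0 ≤ W n m c d := by
      intro n m c d
      cases c <;> cases d
      case true.true => simp [hW]
      case true.false => simpa [hW] using Ann n m
      case false.true => simpa [hW] using Rnn n m
      case false.false =>
        have : W n m false false = ψ n m - A n m - R n m := by simp [hW]
        rw [this, hA, hR]; dsimp only
        by_cases hm : m = 0
        · by_cases hn : n = N + 1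
          · subst hm; subst hn; rw [hψN]; norm_num
          · rw [if_pos hm, if_neg hn]
            nlinarith [ψnn n m, hχd1, hχd0]
        · rw [if_neg hm]
          by_cases hn : n = N + 1
          · rw [if_pos hn]
            nlinarith [ψnn n m, hρd1, hρd0]
          · rw [if_neg hn]
            simpa using ψnn n m
    -- W sums over booleans
    have Wsum : ∀ n m, ∑ cd : Bool × Bool, W n m cd.1 cd.2 = ψ n m := by
      intro n m
      rw [Fintype.sum_prod_type]
      simp [Fintype.sum_bool, hW]
    have WsumC : ∀ n m, ∑ cd : Bool × Bool,
        W n m cd.1 cd.2 * (if cd.1 = true then 1 else 0) = A n m := by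
      intro n m
      rw [Fintype.sum_prod_type]
      simp [Fintype.sum_bool, hW]
    have WsumD : ∀ n m, ∑ cd : Bool × Bool,
        W n m cd.1 cd.2 * (if cd.2 = true then 1 else 0) = R n m := by
      intro n m
      rw [Fintype.sum_prod_type]
      simp [Fintype.sum_bool, hW]
    -- row/column sums over the full rectangles
    have H1 : ∀ k ∈ K, ∑ l ∈ L, σ k l = τ k := by
      intro k hk
      rw [hK, Finset.mem_Icc] at hk
      rw [← hστ k hk.1 hk.2]
      refine (Finset.sum_subset ?_ ?_).symm
      · rw [hL]; exact Finset.Icc_subset_Icc le_rfl (by omega)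
      · intro l hl hl'
        rw [hL, Finset.mem_Icc] at hl
        rw [Finset.mem_Icc] at hl'
        exact hσz k l (by omega)
    have H1' : ∀ l ∈ L, ∑ k ∈ K, σ k l = β l := by
      intro l hl
      rw [hL, Finset.mem_Icc] at hl
      rw [← hσβ l hl.1 hl.2]
      refine (Finset.sum_subset ?_ ?_).symm
      · rw [hK]; exact Finset.Icc_subset_Icc (by omega) le_rfl
      · intro k hk hk'
        rw [hK, Finset.mem_Icc] at hk
        rw [Finset.mem_Icc] at hk'
        exact hσz k l (by omega)
    have H2 : ∑ p ∈ K ×ˢ L, σ p.1 p.2 = ζ := by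
      rw [Finset.sum_product, ← hτζ]
      exact Finset.sum_congr rfl H1
    have H3 : ∀ n ∈ Nf, ∑ m ∈ Mf, ψ n m = t n := by
      intro n hn
      rw [hNf, Finset.mem_Icc] at hn
      exact hψt n hn.1 hn.2
    have H3' : ∀ m ∈ Mf, ∑ n ∈ Nf, ψ n m = b m := by
      intro m hm
      rw [hMf, Finset.mem_Icc] at hm
      exact hψb m hm.1 hm.2
    have H4 : ∑ q ∈ Nf ×ˢ Mf, ψ q.1 q.2 = ζ := by
      rw [Finset.sum_product, ← htζ]
      exact Finset.sum_congr rfl H3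
    have h0Mf : (0 : ℤ) ∈ Mf := by rw [hMf, Finset.mem_Icc]; omega
    have hN1Nf : (N + 1 : ℤ) ∈ Nf := by rw [hNf, Finset.mem_Icc]; omega
    -- G-side sums
    have G1 : ∑ q ∈ Q, W q.1.1 q.1.2 q.2.1 q.2.2 = ζ := by
      rw [hQ, Finset.sum_product, ← H4]
      refine Finset.sum_congr rfl fun nm _ => ?_
      rw [← Wsum nm.1 nm.2]
    have G2 : ∑ q ∈ Q, W q.1.1 q.1.2 q.2.1 q.2.2 * (if q.2.1 = true then 1 else 0) = χ := by
      rw [hQ, Finset.sum_product]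
      have step1 : ∀ nm ∈ Nf ×ˢ Mf,
          ∑ cd : Bool × Bool, W nm.1 nm.2 cd.1 cd.2 * (if cd.1 = true then 1 else 0)
            = A nm.1 nm.2 := fun nm _ => WsumC nm.1 nm.2
      rw [Finset.sum_congr rfl step1, Finset.sum_product]
      have step2 : ∀ n ∈ Nf, ∑ m ∈ Mf, A n m = ψ n 0 * (χ / b 0) := by
        intro n _
        rw [hA]
        dsimp only
        rw [Finset.sum_ite_eq' Mf 0 (fun m => ψ n m * (χ / b 0)), if_pos h0Mf]
      rw [Finset.sum_congr rfl step2, ← Finset.sum_mul, hψb 0 le_rfl (by omega), hχdiv]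
    have G3 : ∑ q ∈ Q, W q.1.1 q.1.2 q.2.1 q.2.2 * (if q.2.2 = true then 1 else 0) = ρ := by
      rw [hQ, Finset.sum_product]
      have step1 : ∀ nm ∈ Nf ×ˢ Mf,
          ∑ cd : Bool × Bool, W nm.1 nm.2 cd.1 cd.2 * (if cd.2 = true then 1 else 0)
            = R nm.1 nm.2 := fun nm _ => WsumD nm.1 nm.2
      rw [Finset.sum_congr rfl step1, Finset.sum_product]
      have step2 : ∀ n ∈ Nf, ∑ m ∈ Mf, R n m
          = if n = N + 1 then (∑ m ∈ Mf, ψ n m) * (ρ / t (N + 1)) else 0 := by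
        intro n _
        rw [hR]
        dsimp only
        split
        · rw [Finset.sum_mul]
        · exact Finset.sum_const_zero
      rw [Finset.sum_congr rfl step2,
        Finset.sum_ite_eq' Nf (N + 1) (fun n => (∑ m ∈ Mf, ψ n m) * (ρ / t (N + 1))),
        if_pos hN1Nf, H3 (N + 1) hN1Nf, hρdiv]
    -- factorization of sums over T
    have Fact : ∀ (F : ℤ × ℤ → ℝ) (G : (ℤ × ℤ) × Bool × Bool → ℝ),
        ∑ e ∈ T, F e.1 * G e.2 = (∑ p ∈ K ×ˢ L, F p) * (∑ q ∈ Q, G q) := by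
      intro F G
      rw [hT, Finset.sum_product, Finset.sum_mul_sum]
    have Swsum : ∑ e ∈ T, w e = ζ * ζ := by
      have : ∀ e ∈ T, w e = σ e.1.1 e.1.2 * W e.2.1.1 e.2.1.2 e.2.2.1 e.2.2.2 := fun e _ => rfl
      rw [Finset.sum_congr rfl this,
        Fact (fun p => σ p.1 p.2) (fun q => W q.1.1 q.1.2 q.2.1 q.2.2), H2, G1]
    -- F-side per-coordinate sums
    have Fτ : ∀ k', ∑ p ∈ K ×ˢ L, σ p.1 p.2 * (if k' = p.1 then 1 else 0) = τ k' := by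
      intro k'
      rw [Finset.sum_product]
      have e1 : ∀ k ∈ K, ∑ l ∈ L, σ k l * (if k' = k then 1 else 0)
          = if k' = k then (∑ l ∈ L, σ k l) else 0 := by
        intro k _
        rw [← Finset.sum_mul, mul_ite, mul_one, mul_zero]
      rw [Finset.sum_congr rfl e1, Finset.sum_ite_eq K k' (fun k => ∑ l ∈ L, σ k l)]
      by_cases h : k' ∈ K
      · rw [if_pos h, H1 k' h]
      · rw [if_neg h]
        rw [hK, Finset.mem_Icc] at h
        exact (hτz k' (by omega)).symm
    have Fβ : ∀ l', ∑ p ∈ K ×ˢ L, σ p.1 p.2 * (if l' = p.2 then 1 else 0) = β l' := by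
      intro l'
      rw [Finset.sum_product]
      have e1 : ∀ k ∈ K, ∑ l ∈ L, σ k l * (if l' = l then 1 else 0)
          = if l' ∈ L then σ k l' else 0 := by
        intro k _
        rw [← Finset.sum_ite_eq L l' (fun l => σ k l)]
        exact Finset.sum_congr rfl fun l _ => by rw [mul_ite, mul_one, mul_zero]
      rw [Finset.sum_congr rfl e1]
      by_cases h : l' ∈ L
      · simp only [if_pos h]
        rw [H1' l' h]
      · simp only [if_neg h]
        rw [Finset.sum_const_zero]
        rw [hL, Finset.mem_Icc] at h
        exact (hβz l' (by omega)).symm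
    have Fσc : ∀ k' l', ∑ p ∈ K ×ˢ L,
        σ p.1 p.2 * (if k' = p.1 ∧ l' = p.2 then 1 else 0) = σ k' l' := by
      intro k' l'
      rw [Finset.sum_product]
      have e1 : ∀ k ∈ K, ∑ l ∈ L, σ k l * (if k' = k ∧ l' = l then 1 else 0)
          = if k' = k then (if l' ∈ L then σ k l' else 0) else 0 := by
        intro k _
        by_cases hk : k' = k
        · rw [if_pos hk]
          rw [← Finset.sum_ite_eq L l' (fun l => σ k l)]
          refine Finset.sum_congr rfl fun l _ => ?_
          rw [mul_ite, mul_one, mul_zero]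
          by_cases hl : l' = l
          · rw [if_pos ⟨hk, hl⟩, if_pos hl]
          · rw [if_neg (fun hh => hl hh.2), if_neg hl]
        · rw [if_neg hk]
          refine Finset.sum_eq_zero fun l _ => ?_
          rw [if_neg (fun hh => hk hh.1), mul_zero]
      rw [Finset.sum_congr rfl e1, Finset.sum_ite_eq K k' _]
      by_cases h1 : k' ∈ K
      · rw [if_pos h1]
        by_cases h2 : l' ∈ L
        · rw [if_pos h2]
        · rw [if_neg h2]
          rw [hK, Finset.mem_Icc] at h1
          rw [hL, Finset.mem_Icc] at h2
          exact (hσz k' l' (by omega)).symm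
      · rw [if_neg h1]
        rw [hK, Finset.mem_Icc] at h1
        exact (hσz k' l' (by omega)).symm
    -- G-side per-coordinate sums
    have Gt : ∀ n', ∑ q ∈ Q, W q.1.1 q.1.2 q.2.1 q.2.2 * (if n' = q.1.1 then 1 else 0)
        = t n' := by
      intro n'
      rw [hQ, Finset.sum_product]
      have e1 : ∀ nm ∈ Nf ×ˢ Mf, ∑ cd : Bool × Bool,
          W nm.1 nm.2 cd.1 cd.2 * (if n' = nm.1 then 1 else 0)
          = ψ nm.1 nm.2 * (if n' = nm.1 then 1 else 0) := by
        intro nm _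
        rw [← Finset.sum_mul, Wsum]
      rw [Finset.sum_congr rfl e1, Finset.sum_product]
      have e2 : ∀ n ∈ Nf, ∑ m ∈ Mf, ψ n m * (if n' = n then 1 else 0)
          = if n' = n then (∑ m ∈ Mf, ψ n m) else 0 := by
        intro n _
        rw [← Finset.sum_mul, mul_ite, mul_one, mul_zero]
      rw [Finset.sum_congr rfl e2, Finset.sum_ite_eq Nf n' (fun n => ∑ m ∈ Mf, ψ n m)]
      by_cases h : n' ∈ Nf
      · rw [if_pos h, H3 n' h]
      · rw [if_neg h]
        rw [hNf, Finset.mem_Icc] at h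
        exact (htz n' (by omega)).symm
    have Gb : ∀ m', ∑ q ∈ Q, W q.1.1 q.1.2 q.2.1 q.2.2 * (if m' = q.1.2 then 1 else 0)
        = b m' := by
      intro m'
      rw [hQ, Finset.sum_product]
      have e1 : ∀ nm ∈ Nf ×ˢ Mf, ∑ cd : Bool × Bool,
          W nm.1 nm.2 cd.1 cd.2 * (if m' = nm.2 then 1 else 0)
          = ψ nm.1 nm.2 * (if m' = nm.2 then 1 else 0) := by
        intro nm _
        rw [← Finset.sum_mul, Wsum]
      rw [Finset.sum_congr rfl e1, Finset.sum_product]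
      have e2 : ∀ n ∈ Nf, ∑ m ∈ Mf, ψ n m * (if m' = m then 1 else 0)
          = if m' ∈ Mf then ψ n m' else 0 := by
        intro n _
        rw [← Finset.sum_ite_eq Mf m' (fun m => ψ n m)]
        exact Finset.sum_congr rfl fun m _ => by rw [mul_ite, mul_one, mul_zero]
      rw [Finset.sum_congr rfl e2]
      by_cases h : m' ∈ Mf
      · simp only [if_pos h]
        rw [H3' m' h]
      · simp only [if_neg h]
        rw [Finset.sum_const_zero]
        rw [hMf, Finset.mem_Icc] at h
        exact (hbz m' (by omega)).symm
    have Gψ : ∀ n' m', ∑ q ∈ Q, W q.1.1 q.1.2 q.2.1 q.2.2 *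
        (if n' = q.1.1 ∧ m' = q.1.2 then 1 else 0) = ψ n' m' := by
      intro n' m'
      rw [hQ, Finset.sum_product]
      have e1 : ∀ nm ∈ Nf ×ˢ Mf, ∑ cd : Bool × Bool,
          W nm.1 nm.2 cd.1 cd.2 * (if n' = nm.1 ∧ m' = nm.2 then 1 else 0)
          = ψ nm.1 nm.2 * (if n' = nm.1 ∧ m' = nm.2 then 1 else 0) := by
        intro nm _
        rw [← Finset.sum_mul, Wsum]
      rw [Finset.sum_congr rfl e1, Finset.sum_product]
      have e2 : ∀ n ∈ Nf, ∑ m ∈ Mf, ψ n m * (if n' = n ∧ m' = m then 1 else 0)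
          = if n' = n then (if m' ∈ Mf then ψ n m' else 0) else 0 := by
        intro n _
        by_cases hn : n' = n
        · rw [if_pos hn]
          rw [← Finset.sum_ite_eq Mf m' (fun m => ψ n m)]
          refine Finset.sum_congr rfl fun m _ => ?_
          rw [mul_ite, mul_one, mul_zero]
          by_cases hm : m' = m
          · rw [if_pos ⟨hn, hm⟩, if_pos hm]
          · rw [if_neg (fun hh => hm hh.2), if_neg hm]
        · rw [if_neg hn]
          refine Finset.sum_eq_zero fun m _ => ?_
          rw [if_neg (fun hh => hn hh.1), mul_zero]
      rw [Finset.sum_congr rfl e2, Finset.sum_ite_eq Nf n' _]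
      by_cases h1 : n' ∈ Nf
      · rw [if_pos h1]
        by_cases h2 : m' ∈ Mf
        · rw [if_pos h2]
        · rw [if_neg h2]
          rw [hMf, Finset.mem_Icc] at h2
          exact (hψz n' m' (by omega)).symm
      · rw [if_neg h1]
        rw [hNf, Finset.mem_Icc] at h1
        exact (hψz n' m' (by omega)).symm
    -- replacing z by pt in the sum
    have hzp : ∑ e ∈ T, w e • z e = ∑ e ∈ T, w e • pt e := by
      refine Finset.sum_congr rfl fun e he => ?_
      obtain ⟨⟨k, l⟩, ⟨n, m⟩, c, d⟩ := e
      rw [hT, hQ] at he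
      simp only [Finset.mem_product, Finset.mem_univ, and_true] at he
      obtain ⟨⟨hkK, hlL⟩, hnN, hmM⟩ := he
      rw [hK, Finset.mem_Icc] at hkK
      rw [hL, Finset.mem_Icc] at hlL
      by_cases hv : l ≤ k + 1 ∧ ¬(n = N + 1 ∧ m = 0) ∧
          (c = true → m = 0) ∧ (d = true → n = N + 1)
      · rw [hz]
        dsimp only
        rw [if_pos hv]
      · have hwz : w ((k, l), (n, m), c, d) = 0 := by
          rw [hw]
          dsimp only
          by_cases h1 : l ≤ k + 1
          · have hWz : W n m c d = 0 := by
              by_cases h2 : n = N + 1 ∧ m = 0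
              · obtain ⟨rfl, rfl⟩ := h2
                cases c <;> cases d <;> simp [hW, hA, hR, hψN]
              · by_cases h3 : c = true → m = 0
                · have h4 : ¬(d = true → n = N + 1) := by tauto
                  push_neg at h4
                  obtain ⟨rfl, hn4⟩ := h4
                  have hR0 : R n m = 0 := by rw [hR]; dsimp only; rw [if_neg hn4]
                  cases c <;> simp [hW, hR0]
                · push_neg at h3
                  obtain ⟨rfl, hm3⟩ := h3
                  have hA0 : A n m = 0 := by rw [hA]; dsimp only; rw [if_neg hm3]
                  cases d <;> simp [hW, hA0]
            rw [hWz, mul_zero]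
          · rw [hσz k l (by omega), zero_mul]
        rw [hwz, zero_smul, zero_smul]
    -- summand components
    have pc1 : ∀ e : (ℤ × ℤ) × (ℤ × ℤ) × Bool × Bool, (w e • pt e).1
        = σ e.1.1 e.1.2 * W e.2.1.1 e.2.1.2 e.2.2.1 e.2.2.2 * 1 := by
      intro e; rw [hw, hpt]; simp only [Prod.smul_mk, smul_eq_mul, mul_one]
    have pc2 : ∀ e : (ℤ × ℤ) × (ℤ × ℤ) × Bool × Bool, (w e • pt e).2.1
        = σ e.1.1 e.1.2 * (W e.2.1.1 e.2.1.2 e.2.2.1 e.2.2.2 * (if e.2.2.1 = true then 1 else 0)) := by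
      intro e; rw [hw, hpt]; simp only [Prod.smul_mk, smul_eq_mul]; ring
    have pc3 : ∀ e : (ℤ × ℤ) × (ℤ × ℤ) × Bool × Bool, (w e • pt e).2.2.1
        = σ e.1.1 e.1.2 * (W e.2.1.1 e.2.1.2 e.2.2.1 e.2.2.2 * (if e.2.2.2 = true then 1 else 0)) := by
      intro e; rw [hw, hpt]; simp only [Prod.smul_mk, smul_eq_mul]; ring
    -- the center of mass identity
    have S2 : ∑ e ∈ T, w e • z e = ζ • ((ζ, χ, ρ, τ, β, σ, t, b, ψ) : Stmt8Space) := by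
      rw [hzp]
      refine Prod.ext ?_ (Prod.ext ?_ (Prod.ext ?_ (Prod.ext ?_ (Prod.ext ?_ (Prod.ext ?_
        (Prod.ext ?_ (Prod.ext ?_ ?_)))))))
      · rw [Prod.fst_sum, Finset.sum_congr rfl fun e _ => pc1 e]
        have : ∀ e ∈ T, σ e.1.1 e.1.2 * W e.2.1.1 e.2.1.2 e.2.2.1 e.2.2.2 * 1
            = σ e.1.1 e.1.2 * W e.2.1.1 e.2.1.2 e.2.2.1 e.2.2.2 := fun e _ => mul_one _
        rw [Finset.sum_congr rfl this,
          Fact (fun p => σ p.1 p.2) (fun q => W q.1.1 q.1.2 q.2.1 q.2.2), H2, G1]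
        rfl
      · rw [Prod.snd_sum, Prod.fst_sum, Finset.sum_congr rfl fun e _ => pc2 e,
          Fact (fun p => σ p.1 p.2)
            (fun q => W q.1.1 q.1.2 q.2.1 q.2.2 * (if q.2.1 = true then 1 else 0)), H2, G2]
        rfl
      · rw [Prod.snd_sum, Prod.snd_sum, Prod.fst_sum, Finset.sum_congr rfl fun e _ => pc3 e,
          Fact (fun p => σ p.1 p.2)
            (fun q => W q.1.1 q.1.2 q.2.1 q.2.2 * (if q.2.2 = true then 1 else 0)), H2, G3]
        rfl
      · rw [Prod.snd_sum, Prod.snd_sum, Prod.snd_sum, Prod.fst_sum]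
        funext k'
        rw [Finset.sum_apply]
        have pc : ∀ e ∈ T, (w e • pt e).2.2.2.1 k'
            = σ e.1.1 e.1.2 * (if k' = e.1.1 then 1 else 0) * W e.2.1.1 e.2.1.2 e.2.2.1 e.2.2.2 := by
          intro e _; rw [hw, hpt]; simp only [Prod.smul_mk, Pi.smul_apply, smul_eq_mul]; ring
        rw [Finset.sum_congr rfl pc,
          Fact (fun p => σ p.1 p.2 * (if k' = p.1 then 1 else 0))
            (fun q => W q.1.1 q.1.2 q.2.1 q.2.2), Fτ, G1]
        exact mul_comm (τ k') ζ
      · rw [Prod.snd_sum, Prod.snd_sum, Prod.snd_sum, Prod.snd_sum, Prod.fst_sum]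
        funext l'
        rw [Finset.sum_apply]
        have pc : ∀ e ∈ T, (w e • pt e).2.2.2.2.1 l'
            = σ e.1.1 e.1.2 * (if l' = e.1.2 then 1 else 0) * W e.2.1.1 e.2.1.2 e.2.2.1 e.2.2.2 := by
          intro e _; rw [hw, hpt]; simp only [Prod.smul_mk, Pi.smul_apply, smul_eq_mul]; ring
        rw [Finset.sum_congr rfl pc,
          Fact (fun p => σ p.1 p.2 * (if l' = p.2 then 1 else 0))
            (fun q => W q.1.1 q.1.2 q.2.1 q.2.2), Fβ, G1]
        exact mul_comm (β l') ζ
      · rw [Prod.snd_sum, Prod.snd_sum, Prod.snd_sum, Prod.snd_sum, Prod.snd_sum, Prod.fst_sum]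
        funext k' l'
        rw [Finset.sum_apply, Finset.sum_apply]
        have pc : ∀ e ∈ T, (w e • pt e).2.2.2.2.2.1 k' l'
            = σ e.1.1 e.1.2 * (if k' = e.1.1 ∧ l' = e.1.2 then 1 else 0)
              * W e.2.1.1 e.2.1.2 e.2.2.1 e.2.2.2 := by
          intro e _; rw [hw, hpt]; simp only [Prod.smul_mk, Pi.smul_apply, smul_eq_mul]; ring
        rw [Finset.sum_congr rfl pc,
          Fact (fun p => σ p.1 p.2 * (if k' = p.1 ∧ l' = p.2 then 1 else 0))
            (fun q => W q.1.1 q.1.2 q.2.1 q.2.2), Fσc, G1]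
        exact mul_comm (σ k' l') ζ
      · rw [Prod.snd_sum, Prod.snd_sum, Prod.snd_sum, Prod.snd_sum, Prod.snd_sum, Prod.snd_sum,
          Prod.fst_sum]
        funext n'
        rw [Finset.sum_apply]
        have pc : ∀ e ∈ T, (w e • pt e).2.2.2.2.2.2.1 n'
            = σ e.1.1 e.1.2 * (W e.2.1.1 e.2.1.2 e.2.2.1 e.2.2.2
              * (if n' = e.2.1.1 then 1 else 0)) := by
          intro e _; rw [hw, hpt]; simp only [Prod.smul_mk, Pi.smul_apply, smul_eq_mul]; ring
        rw [Finset.sum_congr rfl pc,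
          Fact (fun p => σ p.1 p.2)
            (fun q => W q.1.1 q.1.2 q.2.1 q.2.2 * (if n' = q.1.1 then 1 else 0)), H2, Gt]
        rfl
      · rw [Prod.snd_sum, Prod.snd_sum, Prod.snd_sum, Prod.snd_sum, Prod.snd_sum, Prod.snd_sum,
          Prod.snd_sum, Prod.fst_sum]
        funext m'
        rw [Finset.sum_apply]
        have pc : ∀ e ∈ T, (w e • pt e).2.2.2.2.2.2.2.1 m'
            = σ e.1.1 e.1.2 * (W e.2.1.1 e.2.1.2 e.2.2.1 e.2.2.2
              * (if m' = e.2.1.2 then 1 else 0)) := by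
          intro e _; rw [hw, hpt]; simp only [Prod.smul_mk, Pi.smul_apply, smul_eq_mul]; ring
        rw [Finset.sum_congr rfl pc,
          Fact (fun p => σ p.1 p.2)
            (fun q => W q.1.1 q.1.2 q.2.1 q.2.2 * (if m' = q.1.2 then 1 else 0)), H2, Gb]
        rfl
      · rw [Prod.snd_sum, Prod.snd_sum, Prod.snd_sum, Prod.snd_sum, Prod.snd_sum, Prod.snd_sum,
          Prod.snd_sum, Prod.snd_sum]
        funext n' m'
        rw [Finset.sum_apply, Finset.sum_apply]
        have pc : ∀ e ∈ T, (w e • pt e).2.2.2.2.2.2.2.2 n' m'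
            = σ e.1.1 e.1.2 * (W e.2.1.1 e.2.1.2 e.2.2.1 e.2.2.2
              * (if n' = e.2.1.1 ∧ m' = e.2.1.2 then 1 else 0)) := by
          intro e _; rw [hw, hpt]; simp only [Prod.smul_mk, Pi.smul_apply, smul_eq_mul]; ring
        rw [Finset.sum_congr rfl pc,
          Fact (fun p => σ p.1 p.2)
            (fun q => W q.1.1 q.1.2 q.2.1 q.2.2
              * (if n' = q.1.1 ∧ m' = q.1.2 then 1 else 0)), H2, Gψ]
        rfl
    -- weights are nonnegative and positive in total
    have hw0 : ∀ e ∈ T, 0 ≤ w e := by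
      intro e he
      rw [hw]
      exact mul_nonneg (σnn e.1.1 e.1.2) (Wnn _ _ _ _)
    have hwpos : 0 < ∑ e ∈ T, w e := by
      rw [Swsum]; positivity
    have hzE : ∀ e ∈ T, z e ∈ stmt8E i j N := by
      intro e he
      obtain ⟨⟨k, l⟩, ⟨n, m⟩, c, d⟩ := e
      rw [hT, hQ] at he
      simp only [Finset.mem_product, Finset.mem_univ, and_true] at he
      obtain ⟨⟨hkK, hlL⟩, hnN, hmM⟩ := he
      rw [hK, Finset.mem_Icc] at hkK
      rw [hL, Finset.mem_Icc] at hlL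
      rw [hNf, Finset.mem_Icc] at hnN
      rw [hMf, Finset.mem_Icc] at hmM
      rw [hz]
      dsimp only
      split
      · next hv =>
        obtain ⟨hv1, hv2, hv3, hv4⟩ := hv
        refine Set.mem_insert_iff.2 (Or.inr ⟨k, l, n, m, (if c = true then 1 else 0),
          (if d = true then 1 else 0), hkK.1, hkK.2, hlL.1, hv1, hnN.1, hnN.2, hmM.1, hmM.2,
          ?_, ?_, ?_, ?_, ?_, ?_⟩)
        · intro hh
          rw [Prod.mk.injEq] at hh
          exact hv2 hh
        · cases c <;> simp
        · cases d <;> simp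
        · intro hm0
          rw [if_neg]
          intro hc
          exact hm0 (hv3 hc)
        · intro hn0
          rw [if_neg]
          intro hd
          exact hn0 (hv4 hd)
        · rw [hpt]
      · exact Set.mem_insert _ _
    -- conclude via the center of mass
    have hcm := Finset.centerMass_mem_convexHull T hw0 hwpos hzE
    rw [Finset.centerMass, Swsum, S2] at hcm
    have hys : (ζ * ζ)⁻¹ • ζ • ((ζ, χ, ρ, τ, β, σ, t, b, ψ) : Stmt8Space)
        = ζ⁻¹ • ((ζ, χ, ρ, τ, β, σ, t, b, ψ) : Stmt8Space) := by
      rw [smul_smul, mul_inv, mul_assoc, inv_mul_cancel₀ hζpos.ne', mul_one]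
    rw [hys] at hcm
    have hfin := (convex_convexHull ℝ (stmt8E i j N)) h0E hcm
      (by linarith : (0:ℝ) ≤ 1 - ζ) hζpos.le (by ring)
    rw [smul_zero, zero_add, smul_smul, mul_inv_cancel₀ hζpos.ne', one_smul] at hfin
    exact hfin

/-- Proposition 5 of the paper: the combined polytope equals the convex hull of its
integral extreme points. -/
theorem stmt8 (i j N : ℤ) (hi : 1 ≤ i) (hij : i < j) (hjN : j ≤ N) :
    stmt8P i j N = convexHull ℝ (stmt8E i j N) :=
  subset_antisymm (stmt8P_subset i j N hi hij hjN)
    (convexHull_min (stmt8E_subset i j N hi hij hjN) (stmt8P_convex i j N))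
end

section
/- Fix integers i ≥ 1, j and N with j ≤ N. Let S be the set of tuples (τ, β, ψ), with τ_n ∈ ℝ for j + 1 ≤ n ≤ N + 1, β_m ∈ ℝ for 0 ≤ m ≤ i − 1, and ψ_{n,m} ∈ ℝ for those n, m, satisfying: Σ_{m=0}^{i-1} ψ_{n,m} = τ_n for each n; Σ_{n=j+1}^{N+1} ψ_{n,m} = β_m for each m; ψ_{n,m} ≥ 0 for all (n, m); ψ_{N+1,0} = 0; Σ_{m=0}^{i-1} β_m = Σ_{n=j+1}^{N+1} τ_n; τ_n ≥ 0 for all n; and β_m ≥ 0 for all m. Then the projection of S onto the (τ, β) variables equals the set of (τ, β) with β_0 ≤ Σ_{n=j+1}^{N} τ_n, Σ_{m=0}^{i-1} β_m = Σ_{n=j+1}^{N+1} τ_n, τ_n ≥ 0 for all n, and β_m ≥ 0 for all m. -/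
/-- Proposition 6 of the paper: the projection, onto the `(τ, β)` variables, of the set
of nonnegative bipartite transshipments `ψ` with prescribed row sums `τ` and column sums
`β` and the arc `(N+1, 0)` forbidden, is exactly the set cut out by
`β_0 ≤ Σ_{n=j+1}^{N} τ_n` together with the balance and nonnegativity constraints. -/
theorem stmt9 (i j N : ℤ) (hi : 1 ≤ i) (hjN : j ≤ N) :
    {tb : (ℤ → ℝ) × (ℤ → ℝ) |
      ∃ ψ : ℤ → ℤ → ℝ,
        (∀ n, j + 1 ≤ n → n ≤ N + 1 → ∑ m ∈ Finset.Icc 0 (i - 1), ψ n m = tb.1 n) ∧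
        (∀ m, 0 ≤ m → m ≤ i - 1 → ∑ n ∈ Finset.Icc (j + 1) (N + 1), ψ n m = tb.2 m) ∧
        (∀ n m, j + 1 ≤ n → n ≤ N + 1 → 0 ≤ m → m ≤ i - 1 → 0 ≤ ψ n m) ∧
        ψ (N + 1) 0 = 0 ∧
        (∑ m ∈ Finset.Icc 0 (i - 1), tb.2 m = ∑ n ∈ Finset.Icc (j + 1) (N + 1), tb.1 n) ∧
        (∀ n, j + 1 ≤ n → n ≤ N + 1 → 0 ≤ tb.1 n) ∧
        (∀ m, 0 ≤ m → m ≤ i - 1 → 0 ≤ tb.2 m)} =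
    {tb : (ℤ → ℝ) × (ℤ → ℝ) |
      tb.2 0 ≤ ∑ n ∈ Finset.Icc (j + 1) N, tb.1 n ∧
      (∑ m ∈ Finset.Icc 0 (i - 1), tb.2 m = ∑ n ∈ Finset.Icc (j + 1) (N + 1), tb.1 n) ∧
      (∀ n, j + 1 ≤ n → n ≤ N + 1 → 0 ≤ tb.1 n) ∧
      (∀ m, 0 ≤ m → m ≤ i - 1 → 0 ≤ tb.2 m)} := by
  ext tb
  obtain ⟨τ, β⟩ := tb
  simp only [Set.mem_setOf_eq]
  have hsplitN : Finset.Icc (j+1) (N+1) = insert (N+1) (Finset.Icc (j+1) N) := by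
    ext x; simp only [Finset.mem_Icc, Finset.mem_insert]; omega
  have hNnot : (N+1) ∉ Finset.Icc (j+1) N := by
    simp only [Finset.mem_Icc]; omega
  have hsplit0 : Finset.Icc (0:ℤ) (i-1) = insert 0 (Finset.Icc 1 (i-1)) := by
    ext x; simp only [Finset.mem_Icc, Finset.mem_insert]; omega
  have h0not : (0:ℤ) ∉ Finset.Icc 1 (i-1) := by
    simp only [Finset.mem_Icc]; omega
  constructor
  · rintro ⟨ψ, hrow, hcol, hpos, hzero, hbal, hτ, hβ⟩
    refine ⟨?_, hbal, hτ, hβ⟩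
    have hb0 := hcol 0 le_rfl (by omega)
    rw [hsplitN, Finset.sum_insert hNnot, hzero, zero_add] at hb0
    rw [← hb0]
    apply Finset.sum_le_sum
    intro n hn
    rw [Finset.mem_Icc] at hn
    rw [← hrow n hn.1 (by omega)]
    exact Finset.single_le_sum
      (fun m hm => hpos n m hn.1 (by omega) (Finset.mem_Icc.mp hm).1 (Finset.mem_Icc.mp hm).2)
      (by rw [Finset.mem_Icc]; omega)
  · rintro ⟨hle, hbal, hτ, hβ⟩
    set T := ∑ n ∈ Finset.Icc (j+1) N, τ n with hT
    set S := ∑ n ∈ Finset.Icc (j+1) (N+1), τ n with hS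
    set R := S - β 0 with hRdef
    set ψ0 : ℤ → ℝ := fun n => if n = N + 1 then 0 else τ n * β 0 / T with hψ0
    have hβ0 : 0 ≤ β 0 := hβ 0 le_rfl (by omega)
    have hT0 : 0 ≤ T := le_trans hβ0 hle
    have hψ0le : ∀ n, j + 1 ≤ n → n ≤ N + 1 → ψ0 n ≤ τ n := by
      intro n h1 h2
      by_cases hn : n = N + 1
      · simp only [hψ0, if_pos hn]
        exact hτ _ h1 h2
      · simp only [hψ0, if_neg hn]
        rcases eq_or_lt_of_le hT0 with h | h
        · rw [← h] at hle
          have hb : β 0 = 0 := le_antisymm hle hβ0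
          simp only [hb, mul_zero, zero_div]
          exact hτ _ h1 h2
        · rw [div_le_iff₀ h]
          calc τ n * β 0 ≤ τ n * T := mul_le_mul_of_nonneg_left hle (hτ _ h1 h2)
            _ = τ n * T := rfl
    have hψ0nonneg : ∀ n, j + 1 ≤ n → n ≤ N + 1 → 0 ≤ ψ0 n := by
      intro n h1 h2
      by_cases hn : n = N + 1
      · simp [hψ0, hn]
      · simp only [hψ0, if_neg hn]
        exact div_nonneg (mul_nonneg (hτ _ h1 h2) hβ0) hT0
    have hψ0sum : ∑ n ∈ Finset.Icc (j+1) (N+1), ψ0 n = β 0 := by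
      rw [hsplitN, Finset.sum_insert hNnot]
      have h1 : ∑ n ∈ Finset.Icc (j+1) N, ψ0 n = T * (β 0 / T) := by
        rw [hT, Finset.sum_mul]
        refine Finset.sum_congr rfl fun n hn => ?_
        rw [Finset.mem_Icc] at hn
        simp only [hψ0, if_neg (show n ≠ N+1 by omega)]
        ring
      simp only [hψ0, if_pos rfl]
      rw [zero_add, h1]
      rcases eq_or_lt_of_le hT0 with h | h
      · rw [← h] at hle
        have hb : β 0 = 0 := le_antisymm hle hβ0
        simp [hb]
      · rw [mul_comm, div_mul_cancel₀ _ (ne_of_gt h)]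
    have hτ'nonneg : ∀ n ∈ Finset.Icc (j+1) (N+1), 0 ≤ τ n - ψ0 n := by
      intro n hn
      rw [Finset.mem_Icc] at hn
      exact sub_nonneg.mpr (hψ0le n hn.1 hn.2)
    have hRsum : ∑ n ∈ Finset.Icc (j+1) (N+1), (τ n - ψ0 n) = R := by
      rw [Finset.sum_sub_distrib, hψ0sum, ← hS]
    have hR0 : 0 ≤ R := hRsum ▸ Finset.sum_nonneg hτ'nonneg
    have hβsum1 : ∑ m ∈ Finset.Icc 1 (i-1), β m = R := by
      have hb := hbal
      rw [hsplit0, Finset.sum_insert h0not] at hb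
      rw [hRdef]
      linarith
    have key1 : ∀ n ∈ Finset.Icc (j+1) (N+1), (τ n - ψ0 n) * R / R = τ n - ψ0 n := by
      intro n hn
      rcases eq_or_ne R 0 with h | h
      · have hz := (Finset.sum_eq_zero_iff_of_nonneg hτ'nonneg).mp (hRsum.trans h) n hn
        simp [h, hz]
      · rw [mul_div_assoc, div_self h, mul_one]
    have key2 : ∀ m ∈ Finset.Icc 1 (i-1), R * β m / R = β m := by
      intro m hm
      rcases eq_or_ne R 0 with h | h
      · have hb := (Finset.sum_eq_zero_iff_of_nonneg
          (fun m hm => hβ m (by rw [Finset.mem_Icc] at hm; omega)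
            (Finset.mem_Icc.mp hm).2)).mp (hβsum1.trans h) m hm
        simp [h, hb]
      · rw [mul_comm, mul_div_assoc, div_self h, mul_one]
    refine ⟨fun n m => if m = 0 then ψ0 n else (τ n - ψ0 n) * β m / R,
      ?_, ?_, ?_, ?_, hbal, hτ, hβ⟩
    · intro n h1 h2
      dsimp only
      rw [hsplit0, Finset.sum_insert h0not, if_pos rfl]
      have hsum : ∑ m ∈ Finset.Icc 1 (i-1),
          (if m = 0 then ψ0 n else (τ n - ψ0 n) * β m / R)
          = (τ n - ψ0 n) * (∑ m ∈ Finset.Icc 1 (i-1), β m) / R := by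
        rw [Finset.mul_sum, Finset.sum_div]
        refine Finset.sum_congr rfl fun m hm => ?_
        rw [Finset.mem_Icc] at hm
        rw [if_neg (by omega)]
      rw [hsum, hβsum1, key1 n (Finset.mem_Icc.mpr ⟨h1, h2⟩)]
      ring
    · intro m hm1 hm2
      dsimp only
      by_cases hm : m = 0
      · subst hm
        simpa using hψ0sum
      · simp only [if_neg hm]
        have hsum : ∑ n ∈ Finset.Icc (j+1) (N+1), (τ n - ψ0 n) * β m / R
            = (∑ n ∈ Finset.Icc (j+1) (N+1), (τ n - ψ0 n)) * β m / R := by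
          rw [Finset.sum_mul, Finset.sum_div]
        rw [hsum, hRsum, key2 m (Finset.mem_Icc.mpr ⟨by omega, hm2⟩)]
    · intro n m h1 h2 h3 h4
      dsimp only
      by_cases hm : m = 0
      · subst hm
        simp only [if_pos rfl]
        exact hψ0nonneg n h1 h2
      · rw [if_neg hm]
        exact div_nonneg (mul_nonneg (sub_nonneg.mpr (hψ0le n h1 h2)) (hβ m h3 h4)) hR0
    · simp [hψ0]
end

section
/- Let α1, α2 ∈ ℝ, let B = [f1lo, f1up] × [f2lo, f2up] × [Υlo, Υup] × [θlo, θup] ⊂ ℝ^4 with θlo < θup, and let Ȟ1 ≤ Ĥ1 and Ȟ2 ≤ Ĥ2 be reals. Define S_std = {(f1, f2, Υ, θ, H1, H2) ∈ B × ℝ^2 : α1·H1 − α2·H2 ≤ Υ, Ȟi ≤ Hi ≤ Ĥi for i = 1, 2}. Let C ⊆ B × ℝ^5 be a set of points (f1, f2, Υ, θ, H1, H2, G1, G2, W), and define S_RLT = {p ∈ C : α1·(G1 − θlo·H1) − α2·(G2 − θlo·H2) ≤ W − Υ·θlo and α1·(θup·H1 − G1) − α2·(θup·H2 − G2) ≤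 Υ·θup − W}. Let C′ ⊆ B × ℝ^3 be a set of points (f1, f2, Υ, θ, H1, H2, W), and define S_RDLT = {p ∈ C′ : α1·(α1·H1 − f1 − θlo·H1) − α2·(α2·H2 + f2 − θlo·H2) ≤ W − Υ·θlo and α1·(θup·H1 − α1·H1 + f1) − α2·(θup·H2 − f2 − α2·H2) ≤ Υ·θup − W}. Assume: (H1) C contains every point (f1, f2, Υ, θ, H1, H2, G1, G2, W) such that (f1, f2, Υ, θ, H1, H2, W) ∈ C′, G1 = α1·H1 − f1 and G2 = α2·H2 + f2; and (H2) the projection of C onto the coordinates (H1, H2) is contained in [Ȟ1, Ĥ1] × [Ȟ2, Ĥ2]. Then: (a) the projection of S_RLT onto (f1, f2, Υ, θ, H1, H2) is contained in S_std; and (b) the affine lifting {(f1, f2, Υ, θ, H1, H2, G1, G2, W) : (f1, f2, Υ, θ, H1, H2, W) ∈ S_RDLT, G1 = α1·H1 − f1, G2 = α2·H2 + f2} is contained in S_RLT. -/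
/-- Proposition 7 of the paper, comparing the standard relaxation `S_std`, the naive RLT
relaxation `S_RLT` (over a set `C` with linearization variables `G₁, G₂, W`), and the
RDLT relaxation `S_RDLT` (over a set `C'`): (a) the projection of `S_RLT` onto
`(f₁, f₂, Υ, θ, H₁, H₂)` lies in `S_std`, and (b) the affine lifting
`G₁ = α₁H₁ − f₁`, `G₂ = α₂H₂ + f₂` of `S_RDLT` lies in `S_RLT`. -/
theorem stmt10 (a1 a2 f1lo f1up f2lo f2up Ulo Uup tlo tup H1lo H1up H2lo H2up : ℝ)
    (ht : tlo < tup) (hH1 : H1lo ≤ H1up) (hH2 : H2lo ≤ H2up)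
    (C : ℝ → ℝ → ℝ → ℝ → ℝ → ℝ → ℝ → ℝ → ℝ → Prop)
    (C' : ℝ → ℝ → ℝ → ℝ → ℝ → ℝ → ℝ → Prop)
    -- C ⊆ B × ℝ⁵
    (hCB : ∀ f1 f2 U t H1 H2 G1 G2 W, C f1 f2 U t H1 H2 G1 G2 W →
      f1 ∈ Set.Icc f1lo f1up ∧ f2 ∈ Set.Icc f2lo f2up ∧
      U ∈ Set.Icc Ulo Uup ∧ t ∈ Set.Icc tlo tup)
    -- C' ⊆ B × ℝ³
    (hC'B : ∀ f1 f2 U t H1 H2 W, C' f1 f2 U t H1 H2 W →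
      f1 ∈ Set.Icc f1lo f1up ∧ f2 ∈ Set.Icc f2lo f2up ∧
      U ∈ Set.Icc Ulo Uup ∧ t ∈ Set.Icc tlo tup)
    -- (H1): C contains the affine lifting of C'
    (hlift : ∀ f1 f2 U t H1 H2 W, C' f1 f2 U t H1 H2 W →
      C f1 f2 U t H1 H2 (a1 * H1 - f1) (a2 * H2 + f2) W)
    -- (H2): the projection of C onto (H1, H2) lies in the boxes
    (hproj : ∀ f1 f2 U t H1 H2 G1 G2 W, C f1 f2 U t H1 H2 G1 G2 W →
      H1 ∈ Set.Icc H1lo H1up ∧ H2 ∈ Set.Icc H2lo H2up) :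
    -- (a): proj of S_RLT ⊆ S_std
    (∀ f1 f2 U t H1 H2 G1 G2 W, C f1 f2 U t H1 H2 G1 G2 W →
      a1 * (G1 - tlo * H1) - a2 * (G2 - tlo * H2) ≤ W - U * tlo →
      a1 * (tup * H1 - G1) - a2 * (tup * H2 - G2) ≤ U * tup - W →
      (f1 ∈ Set.Icc f1lo f1up ∧ f2 ∈ Set.Icc f2lo f2up ∧
       U ∈ Set.Icc Ulo Uup ∧ t ∈ Set.Icc tlo tup ∧
       a1 * H1 - a2 * H2 ≤ U ∧
       H1 ∈ Set.Icc H1lo H1up ∧ H2 ∈ Set.Icc H2lo H2up)) ∧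
    -- (b): affine lifting of S_RDLT ⊆ S_RLT
    (∀ f1 f2 U t H1 H2 W, C' f1 f2 U t H1 H2 W →
      a1 * (a1 * H1 - f1 - tlo * H1) - a2 * (a2 * H2 + f2 - tlo * H2) ≤ W - U * tlo →
      a1 * (tup * H1 - a1 * H1 + f1) - a2 * (tup * H2 - f2 - a2 * H2) ≤ U * tup - W →
      (C f1 f2 U t H1 H2 (a1 * H1 - f1) (a2 * H2 + f2) W ∧
       a1 * ((a1 * H1 - f1) - tlo * H1) - a2 * ((a2 * H2 + f2) - tlo * H2) ≤ W - U * tlo ∧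
       a1 * (tup * H1 - (a1 * H1 - f1)) - a2 * (tup * H2 - (a2 * H2 + f2)) ≤ U * tup - W)) := by
  constructor
  · intro f1 f2 U t H1 H2 G1 G2 W hC h1 h2
    obtain ⟨hf1, hf2, hU, htm⟩ := hCB f1 f2 U t H1 H2 G1 G2 W hC
    obtain ⟨hH1m, hH2m⟩ := hproj f1 f2 U t H1 H2 G1 G2 W hC
    refine ⟨hf1, hf2, hU, htm, ?_, hH1m, hH2m⟩
    have hd : 0 < tup - tlo := by linarith
    nlinarith [mul_pos hd hd]
  · intro f1 f2 U t H1 H2 W hC' h1 h2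
    exact ⟨hlift f1 f2 U t H1 H2 W hC', by linarith, by linarith⟩
end

section
/- Let v^1, …, v^m ∈ ℝ^n and let X = conv{v^1, …, v^m} be the polytope they span. Let y^lo < y^up be reals and let g : ℝ → ℝ be continuous and convex on [y^lo, y^up]. Define S = {(x, y, z, u) ∈ X × [y^lo, y^up] × ℝ^n × ℝ^n : z_j = x_j·g(y) and u_j = x_j·y for all j = 1, …, n}. Then the convex hull of S equals the projection onto the (x, y, z, u) coordinates of the set of tuples (x, y, z, u, y^1, …, y^m, w^1, …, w^m, w, λ^1, …, λ^m) satisfying: w^i ≥ g*(λ^i, y^i) for i = 1, …, m; w^i ≤ λ^i·g(y^lo) + ((g(y^up) − g(y^lo))/(y^up − y^lo))·(y^i − λ^i·y^lo) for i = 1, …, m; λ^i·y^lo ≤ y^i ≤ λ^i·y^up for i = 1, …, m; z = Σ_{i=1}^{m} w^i·v^i; u = Σ_{i=1}^{m} y^i·v^i; w = Σ_{i=1}^{m} w^i; y = Σ_{i=1}^{m} y^i; x = Σ_{i=1}^{m} λ^i·v^i; and (λ^1, …, λ^m) ∈ Δ^m. -/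
/-- The (totalized) perspective function of `g` on an interval: `g*(l, t) = l·g(t/l)`
for `l > 0` (and `0` at `l = 0`, consistent with `g*(0,0) = 0`). On the feasible region
of Proposition 8 the constraints force `(l, t)` into the domain of the perspective, so
this total extension agrees with the paper's partial definition there. -/
noncomputable def persp (g : ℝ → ℝ) (l t : ℝ) : ℝ :=
  if 0 < l then l * g (t / l) else 0

lemma persp_smul (g : ℝ → ℝ) {θ : ℝ} (l y : ℝ) (hθ : 0 ≤ θ) :
    persp g (θ * l) (θ * y) = θ * persp g l y := by
  rcases eq_or_lt_of_le hθ with h | h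
  · simp [persp, ← h]
  · unfold persp
    by_cases hl : 0 < l
    · rw [if_pos (by positivity), if_pos hl, mul_div_mul_left _ _ (ne_of_gt h)]
      ring
    · rw [if_neg, if_neg hl]
      · ring
      · push_neg at hl ⊢
        exact mul_nonpos_of_nonneg_of_nonpos h.le hl

lemma feas_zero {a b l y : ℝ} (hl : 0 ≤ l) (h1 : l * a ≤ y) (h2 : y ≤ l * b)
    (hnl : ¬ 0 < l) : l = 0 ∧ y = 0 := by
  have : l = 0 := le_antisymm (not_lt.mp hnl) hl
  subst this
  constructor
  · rfl
  · simp at h1 h2; linarith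

lemma persp_add_le {a b : ℝ} {g : ℝ → ℝ} (hg : ConvexOn ℝ (Set.Icc a b) g)
    {l1 y1 l2 y2 : ℝ} (hl1 : 0 ≤ l1) (hl2 : 0 ≤ l2)
    (h1 : l1 * a ≤ y1) (h1' : y1 ≤ l1 * b) (h2 : l2 * a ≤ y2) (h2' : y2 ≤ l2 * b) :
    persp g (l1 + l2) (y1 + y2) ≤ persp g l1 y1 + persp g l2 y2 := by
  by_cases hp1 : 0 < l1
  · by_cases hp2 : 0 < l2
    · have hL : 0 < l1 + l2 := by linarith
      have ht1 : y1 / l1 ∈ Set.Icc a b :=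
        ⟨(le_div_iff₀ hp1).2 (by linarith), (div_le_iff₀ hp1).2 (by linarith)⟩
      have ht2 : y2 / l2 ∈ Set.Icc a b :=
        ⟨(le_div_iff₀ hp2).2 (by linarith), (div_le_iff₀ hp2).2 (by linarith)⟩
      have hL' : l1 + l2 ≠ 0 := ne_of_gt hL
      have key := hg.2 ht1 ht2 (show (0:ℝ) ≤ l1 / (l1 + l2) by positivity)
        (show (0:ℝ) ≤ l2 / (l1 + l2) by positivity)
        (show l1 / (l1 + l2) + l2 / (l1 + l2) = 1 by
          rw [← add_div, div_eq_one_iff_eq hL'])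
      simp only [smul_eq_mul] at key
      unfold persp
      rw [if_pos hL, if_pos hp1, if_pos hp2]
      have harg : l1 / (l1 + l2) * (y1 / l1) + l2 / (l1 + l2) * (y2 / l2)
          = (y1 + y2) / (l1 + l2) := by
        field_simp
      rw [harg] at key
      have := mul_le_mul_of_nonneg_left key hL.le
      calc (l1 + l2) * g ((y1 + y2) / (l1 + l2))
          ≤ (l1 + l2) * (l1 / (l1 + l2) * g (y1 / l1) + l2 / (l1 + l2) * g (y2 / l2)) := this
        _ = l1 * g (y1 / l1) + l2 * g (y2 / l2) := by field_simp
    · obtain ⟨hl0, hy0⟩ := feas_zero hl2 h2 h2' hp2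
      simp [hl0, hy0, persp]
  · obtain ⟨hl0, hy0⟩ := feas_zero hl1 h1 h1' hp1
    simp [hl0, hy0, persp]

lemma secant_le {a b : ℝ} (hab : a < b) {g : ℝ → ℝ} (hg : ConvexOn ℝ (Set.Icc a b) g)
    {t : ℝ} (ht : t ∈ Set.Icc a b) :
    g t ≤ g a + (g b - g a) / (b - a) * (t - a) := by
  have hba : (0:ℝ) < b - a := by linarith
  have hba' : b - a ≠ 0 := ne_of_gt hba
  have h := hg.2 (Set.left_mem_Icc.2 hab.le) (Set.right_mem_Icc.2 hab.le)
    (show (0:ℝ) ≤ (b - t) / (b - a) from div_nonneg (by linarith [ht.2]) hba.le)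
    (show (0:ℝ) ≤ (t - a) / (b - a) from div_nonneg (by linarith [ht.1]) hba.le)
    (show (b - t) / (b - a) + (t - a) / (b - a) = 1 by
      rw [← add_div, div_eq_one_iff_eq hba']; ring)
  simp only [smul_eq_mul] at h
  have harg : (b - t) / (b - a) * a + (t - a) / (b - a) * b = t := by field_simp; ring
  rw [harg] at h
  have : (b - t) / (b - a) * g a + (t - a) / (b - a) * g b
      = g a + (g b - g a) / (b - a) * (t - a) := by field_simp; ring
  linarith [h, this.ge]

lemma exists_weights {m : ℕ} {E : Type*} [AddCommGroup E] [Module ℝ E]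
    (v : Fin m → E) {x : E} (hx : x ∈ convexHull ℝ (Set.range v)) :
    ∃ l : Fin m → ℝ, (∀ i, 0 ≤ l i) ∧ ∑ i, l i = 1 ∧ x = ∑ i, l i • v i := by
  rw [convexHull_range_eq_exists_affineCombination] at hx
  obtain ⟨s, w, hw0, hw1, hx⟩ := hx
  refine ⟨fun i => if i ∈ s then w i else 0, ?_, ?_, ?_⟩
  · intro i; by_cases h : i ∈ s <;> simp [h]
    exact hw0 i h
  · rw [Finset.sum_ite_mem, Finset.univ_inter, hw1]
  · have hs : ∑ i : Fin m, (if i ∈ s then w i else 0) • v i = ∑ i ∈ s, w i • v i := by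
      rw [← Finset.sum_subset (Finset.subset_univ s) (fun i _ hi => by simp [hi])]
      exact Finset.sum_congr rfl fun i hi => by simp [hi]
    rw [← hx, Finset.affineCombination_eq_linear_combination s v w hw1, hs]

lemma convex_decomp {A B w : ℝ} (h1 : A ≤ w) (h2 : w ≤ B) :
    ∃ c, 0 ≤ c ∧ c ≤ 1 ∧ w = c * A + (1 - c) * B := by
  rcases lt_or_ge A B with h | h
  · have hBA : B - A ≠ 0 := by linarith
    have hc : (B - w) / (B - A) * (B - A) = B - w := div_mul_cancel₀ _ hBA
    refine ⟨(B - w) / (B - A), div_nonneg (by linarith) (by linarith), ?_, ?_⟩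
    · rw [div_le_one (by linarith)]; linarith
    · linear_combination hc
  · exact ⟨1, zero_le_one, le_refl 1, by nlinarith⟩

lemma comb_eval' {a b t : ℝ} (h : b - a ≠ 0) :
    (b - t) / (b - a) * a + (t - a) / (b - a) * b = t := by
  field_simp; ring

lemma comb_eval {a b t A B : ℝ} (h : b - a ≠ 0) :
    (b - t) / (b - a) * A + (t - a) / (b - a) * B = A + (B - A) / (b - a) * (t - a) := by
  field_simp; ring


set_option maxHeartbeats 1000000 in
/-- Proposition 8 of the paper: the simultaneous convex hull of
`z_j = x_j·g(y)`, `u_j = x_j·y` over `X × [ylo, yup]`, where `X = conv{v¹, …, vᵐ}`,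
is the projection of the lifted disjunctive system onto `(x, y, z, u)`. -/
theorem stmt11 (n m : ℕ) (hm : 0 < m) (v : Fin m → (Fin n → ℝ))
    (ylo yup : ℝ) (hy : ylo < yup)
    (g : ℝ → ℝ) (hgcont : ContinuousOn g (Set.Icc ylo yup))
    (hgconv : ConvexOn ℝ (Set.Icc ylo yup) g)
    (X : Set (Fin n → ℝ)) (hX : X = convexHull ℝ (Set.range v)) :
    convexHull ℝ
      {p : (Fin n → ℝ) × ℝ × (Fin n → ℝ) × (Fin n → ℝ) |
        p.1 ∈ X ∧ p.2.1 ∈ Set.Icc ylo yup ∧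
        (∀ jj, p.2.2.1 jj = p.1 jj * g p.2.1) ∧ (∀ jj, p.2.2.2 jj = p.1 jj * p.2.1)} =
    {p : (Fin n → ℝ) × ℝ × (Fin n → ℝ) × (Fin n → ℝ) |
      ∃ (yv wv lv : Fin m → ℝ) (w : ℝ),
        (∀ iv, persp g (lv iv) (yv iv) ≤ wv iv) ∧
        (∀ iv, wv iv ≤ lv iv * g ylo +
          ((g yup - g ylo) / (yup - ylo)) * (yv iv - lv iv * ylo)) ∧
        (∀ iv, lv iv * ylo ≤ yv iv ∧ yv iv ≤ lv iv * yup) ∧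
        p.2.2.1 = ∑ iv, wv iv • v iv ∧
        p.2.2.2 = ∑ iv, yv iv • v iv ∧
        w = ∑ iv, wv iv ∧
        p.2.1 = ∑ iv, yv iv ∧
        p.1 = ∑ iv, lv iv • v iv ∧
        (∀ iv, 0 ≤ lv iv) ∧ ∑ iv, lv iv = 1} := by
  have hba : (0:ℝ) < yup - ylo := by linarith
  have hba' : yup - ylo ≠ 0 := ne_of_gt hba
  apply Set.Subset.antisymm
  · -- conv hull of S ⊆ T : S ⊆ T and T convex
    apply convexHull_min
    · -- S ⊆ T
      rintro p ⟨hpx, hpy, hpz, hpu⟩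
      obtain ⟨l, hl0, hl1, hxl⟩ := exists_weights v (hX ▸ hpx)
      refine ⟨fun i => l i * p.2.1, fun i => l i * g p.2.1, l, g p.2.1,
        ?_, ?_, ?_, ?_, ?_, ?_, ?_, hxl, hl0, hl1⟩
      · intro i
        by_cases h : 0 < l i
        · simp only [persp, if_pos h]
          rw [mul_div_cancel_left₀ _ (ne_of_gt h)]
        · have h0 : l i = 0 := le_antisymm (not_lt.mp h) (hl0 i)
          simp [persp, h0]
      · intro i
        have hs := secant_le hy hgconv hpy
        nlinarith [mul_le_mul_of_nonneg_left hs (hl0 i)]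
      · intro i
        exact ⟨mul_le_mul_of_nonneg_left hpy.1 (hl0 i),
               mul_le_mul_of_nonneg_left hpy.2 (hl0 i)⟩
      · funext jj
        rw [hpz jj, hxl]
        simp only [Finset.sum_apply, Pi.smul_apply, smul_eq_mul, Finset.sum_mul]
        exact Finset.sum_congr rfl fun i _ => by ring
      · funext jj
        rw [hpu jj, hxl]
        simp only [Finset.sum_apply, Pi.smul_apply, smul_eq_mul, Finset.sum_mul]
        exact Finset.sum_congr rfl fun i _ => by ring
      · rw [← Finset.sum_mul, hl1, one_mul]
      · rw [← Finset.sum_mul, hl1, one_mul]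
    · -- T convex
      rintro p ⟨yv, wv, lv, w, hpersp, hub, hfeas, hz, hu, hw, hyy, hxx, hl0, hl1⟩
        q ⟨yv', wv', lv', w', hpersp', hub', hfeas', hz', hu', hw', hyy', hxx', hl0', hl1'⟩
        θ θ' hθ hθ' hθθ
      refine ⟨fun i => θ * yv i + θ' * yv' i, fun i => θ * wv i + θ' * wv' i,
        fun i => θ * lv i + θ' * lv' i, θ * w + θ' * w', ?_, ?_, ?_, ?_, ?_, ?_, ?_, ?_, ?_, ?_⟩
      · intro i
        show persp g (θ * lv i + θ' * lv' i) (θ * yv i + θ' * yv' i) ≤ θ * wv i + θ' * wv' i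
        have hf1 : (θ * lv i) * ylo ≤ θ * yv i := by
          have := mul_le_mul_of_nonneg_left (hfeas i).1 hθ
          nlinarith [this]
        have hf1' : θ * yv i ≤ (θ * lv i) * yup := by
          have := mul_le_mul_of_nonneg_left (hfeas i).2 hθ
          nlinarith [this]
        have hf2 : (θ' * lv' i) * ylo ≤ θ' * yv' i := by
          have := mul_le_mul_of_nonneg_left (hfeas' i).1 hθ'
          nlinarith [this]
        have hf2' : θ' * yv' i ≤ (θ' * lv' i) * yup := by
          have := mul_le_mul_of_nonneg_left (hfeas' i).2 hθ'
          nlinarith [this]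
        calc persp g (θ * lv i + θ' * lv' i) (θ * yv i + θ' * yv' i)
            ≤ persp g (θ * lv i) (θ * yv i) + persp g (θ' * lv' i) (θ' * yv' i) :=
              persp_add_le hgconv (mul_nonneg hθ (hl0 i))
                (mul_nonneg hθ' (hl0' i)) hf1 hf1' hf2 hf2'
          _ = θ * persp g (lv i) (yv i) + θ' * persp g (lv' i) (yv' i) := by
              rw [persp_smul g _ _ hθ, persp_smul g _ _ hθ']
          _ ≤ θ * wv i + θ' * wv' i :=
              add_le_add (mul_le_mul_of_nonneg_left (hpersp i) hθ)
                (mul_le_mul_of_nonneg_left (hpersp' i) hθ')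
      · intro i
        beta_reduce
        have h1 := mul_le_mul_of_nonneg_left (hub i) hθ
        have h2 := mul_le_mul_of_nonneg_left (hub' i) hθ'
        nlinarith [h1, h2]
      · intro i
        beta_reduce
        constructor
        · have h1 := mul_le_mul_of_nonneg_left (hfeas i).1 hθ
          have h2 := mul_le_mul_of_nonneg_left (hfeas' i).1 hθ'
          nlinarith [h1, h2]
        · have h1 := mul_le_mul_of_nonneg_left (hfeas i).2 hθ
          have h2 := mul_le_mul_of_nonneg_left (hfeas' i).2 hθ'
          nlinarith [h1, h2]
      · show (θ • p + θ' • q).2.2.1 = _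
        simp only [Prod.snd_add, Prod.smul_snd, Prod.fst_add, Prod.smul_fst]
        rw [hz, hz', Finset.smul_sum, Finset.smul_sum, ← Finset.sum_add_distrib]
        exact Finset.sum_congr rfl fun i _ => by
          rw [smul_smul, smul_smul, ← add_smul]
      · show (θ • p + θ' • q).2.2.2 = _
        simp only [Prod.snd_add, Prod.smul_snd, Prod.fst_add, Prod.smul_fst]
        rw [hu, hu', Finset.smul_sum, Finset.smul_sum, ← Finset.sum_add_distrib]
        exact Finset.sum_congr rfl fun i _ => by
          rw [smul_smul, smul_smul, ← add_smul]
      · rw [hw, hw', Finset.mul_sum, Finset.mul_sum, ← Finset.sum_add_distrib]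
      · show (θ • p + θ' • q).2.1 = _
        simp only [Prod.snd_add, Prod.smul_snd, Prod.fst_add, Prod.smul_fst, smul_eq_mul]
        rw [hyy, hyy', Finset.mul_sum, Finset.mul_sum, ← Finset.sum_add_distrib]
      · show (θ • p + θ' • q).1 = _
        simp only [Prod.fst_add, Prod.smul_fst]
        rw [hxx, hxx', Finset.smul_sum, Finset.smul_sum, ← Finset.sum_add_distrib]
        exact Finset.sum_congr rfl fun i _ => by
          rw [smul_smul, smul_smul, ← add_smul]
      · intro i
        exact add_nonneg (mul_nonneg hθ (hl0 i)) (mul_nonneg hθ' (hl0' i))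
      · simp only [Finset.sum_add_distrib, ← Finset.mul_sum, hl1, hl1', mul_one]
        exact hθθ
  · -- T ⊆ conv hull S
    intro p hp
    obtain ⟨yv, wv, lv, w, hpersp, hub, hfeas, hz, hu, hw, hyy, hxx, hl0, hl1⟩ := hp
    classical
    -- normalized y values
    obtain ⟨yb, hyb⟩ : ∃ yb : Fin m → ℝ, yb = fun i => if 0 < lv i then yv i / lv i else ylo :=
      ⟨_, rfl⟩
    have hybmem : ∀ i, yb i ∈ Set.Icc ylo yup := by
      intro i
      by_cases h : 0 < lv i
      · simp only [hyb, if_pos h]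
        exact ⟨(le_div_iff₀ h).2 (by linarith [(hfeas i).1]),
               (div_le_iff₀ h).2 (by linarith [(hfeas i).2])⟩
      · simp only [hyb, if_neg h]
        exact ⟨le_refl _, hy.le⟩
    have hyveq : ∀ i, yv i = lv i * yb i := by
      intro i
      by_cases h : 0 < lv i
      · simp only [hyb, if_pos h]
        field_simp
      · obtain ⟨h0, hy0⟩ := feas_zero (hl0 i) (hfeas i).1 (hfeas i).2 h
        simp [h0, hy0]
    have hwzero : ∀ i, ¬ 0 < lv i → wv i = 0 := by
      intro i h
      obtain ⟨h0, hy0⟩ := feas_zero (hl0 i) (hfeas i).1 (hfeas i).2 h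
      have h1 := hpersp i
      have h2 := hub i
      rw [h0, hy0] at h1 h2
      rw [persp, if_neg (lt_irrefl (0:ℝ))] at h1
      simp only [zero_mul, mul_zero, sub_zero, add_zero, zero_add, zero_sub, mul_comm] at h2
      nlinarith [h1, h2]
    have hwlow : ∀ i, lv i * g (yb i) ≤ wv i := by
      intro i
      by_cases h : 0 < lv i
      · have hp' := hpersp i
        rw [persp, if_pos h] at hp'
        simpa only [hyb, if_pos h] using hp'
      · have h0 : lv i = 0 := le_antisymm (not_lt.mp h) (hl0 i)
        rw [h0, zero_mul, hwzero i h]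
    have hwhigh : ∀ i, wv i ≤ lv i * (g ylo + (g yup - g ylo) / (yup - ylo) * (yb i - ylo)) := by
      intro i
      have h := hub i
      rw [hyveq i] at h
      nlinarith [h]
    -- normalized w values
    obtain ⟨wb, hwbdef⟩ : ∃ wb : Fin m → ℝ, wb = fun i => if 0 < lv i then wv i / lv i else g ylo :=
      ⟨_, rfl⟩
    have hwb_eq : ∀ i, wv i = lv i * wb i := by
      intro i
      by_cases h : 0 < lv i
      · simp only [hwbdef, if_pos h]
        field_simp
      · have h0 : lv i = 0 := le_antisymm (not_lt.mp h) (hl0 i)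
        rw [h0, zero_mul, hwzero i h]
    have hwbl : ∀ i, g (yb i) ≤ wb i := by
      intro i
      by_cases h : 0 < lv i
      · simp only [hwbdef, if_pos h]
        rw [le_div_iff₀ h]
        nlinarith [hwlow i]
      · simp only [hwbdef, if_neg h, hyb]
        simp [if_neg h]
    have hwbh : ∀ i, wb i ≤ g ylo + (g yup - g ylo) / (yup - ylo) * (yb i - ylo) := by
      intro i
      by_cases h : 0 < lv i
      · simp only [hwbdef, if_pos h]
        rw [div_le_iff₀ h]
        nlinarith [hwhigh i]
      · simp only [hwbdef, if_neg h, hyb]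
        simp [if_neg h]
    choose c hc0 hc1 hcw using fun i => convex_decomp (hwbl i) (hwbh i)
    obtain ⟨al, hal⟩ : ∃ al : Fin m → ℝ, al = fun i => (yup - yb i) / (yup - ylo) := ⟨_, rfl⟩
    obtain ⟨be, hbe⟩ : ∃ be : Fin m → ℝ, be = fun i => (yb i - ylo) / (yup - ylo) := ⟨_, rfl⟩
    have hal0 : ∀ i, 0 ≤ al i := by
      intro i; simp only [hal]
      exact div_nonneg (by linarith [(hybmem i).2]) hba.le
    have hbe0 : ∀ i, 0 ≤ be i := by
      intro i; simp only [hbe]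
      exact div_nonneg (by linarith [(hybmem i).1]) hba.le
    have hab1 : ∀ i, al i + be i = 1 := by
      intro i
      simp only [hal, hbe]
      rw [← add_div, div_eq_one_iff_eq hba']; ring
    have habY : ∀ i, al i * ylo + be i * yup = yb i := by
      intro i
      simp only [hal, hbe]
      exact comb_eval' hba'
    have habG : ∀ i, al i * g ylo + be i * g yup
        = g ylo + (g yup - g ylo) / (yup - ylo) * (yb i - ylo) := by
      intro i
      simp only [hal, hbe]
      exact comb_eval hba'
    -- graph points belong to S
    have hSmem : ∀ (i : Fin m) (tt : ℝ), tt ∈ Set.Icc ylo yup →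
        ((v i, tt, g tt • v i, tt • v i) : (Fin n → ℝ) × ℝ × (Fin n → ℝ) × (Fin n → ℝ)) ∈
        {p : (Fin n → ℝ) × ℝ × (Fin n → ℝ) × (Fin n → ℝ) |
          p.1 ∈ X ∧ p.2.1 ∈ Set.Icc ylo yup ∧
          (∀ jj, p.2.2.1 jj = p.1 jj * g p.2.1) ∧ (∀ jj, p.2.2.2 jj = p.1 jj * p.2.1)} := by
      intro i tt htt
      refine ⟨?_, htt, fun jj => by simp [mul_comm], fun jj => by simp [mul_comm]⟩
      rw [hX]
      exact subset_convexHull ℝ _ (Set.mem_range_self i)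
    -- each normalized block point lies in the hull
    have hrmem : ∀ i, ((v i, yb i, wb i • v i, yb i • v i) :
        (Fin n → ℝ) × ℝ × (Fin n → ℝ) × (Fin n → ℝ)) ∈ convexHull ℝ
        {p : (Fin n → ℝ) × ℝ × (Fin n → ℝ) × (Fin n → ℝ) |
          p.1 ∈ X ∧ p.2.1 ∈ Set.Icc ylo yup ∧
          (∀ jj, p.2.2.1 jj = p.1 jj * g p.2.1) ∧ (∀ jj, p.2.2.2 jj = p.1 jj * p.2.1)} := by
      intro i
      have hs0 := subset_convexHull ℝ _ (hSmem i (yb i) (hybmem i))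
      have hs1 := subset_convexHull ℝ _ (hSmem i ylo (Set.left_mem_Icc.2 hy.le))
      have hs2 := subset_convexHull ℝ _ (hSmem i yup (Set.right_mem_Icc.2 hy.le))
      have hmid := (convex_convexHull ℝ _) hs1 hs2 (hal0 i) (hbe0 i) (hab1 i)
      have hfin := (convex_convexHull ℝ _) hs0 hmid (hc0 i)
        (show (0:ℝ) ≤ 1 - c i by linarith [hc1 i])
        (show c i + (1 - c i) = 1 by ring)
      have heq : ((v i, yb i, wb i • v i, yb i • v i) :
          (Fin n → ℝ) × ℝ × (Fin n → ℝ) × (Fin n → ℝ)) =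
          c i • ((v i, yb i, g (yb i) • v i, yb i • v i) :
            (Fin n → ℝ) × ℝ × (Fin n → ℝ) × (Fin n → ℝ)) +
          (1 - c i) • (al i • ((v i, ylo, g ylo • v i, ylo • v i) :
            (Fin n → ℝ) × ℝ × (Fin n → ℝ) × (Fin n → ℝ)) +
            be i • ((v i, yup, g yup • v i, yup • v i) :
            (Fin n → ℝ) × ℝ × (Fin n → ℝ) × (Fin n → ℝ))) := by
        have hc' := hcw i
        have hY := habY i
        have hG := habG i
        refine Prod.ext ?_ (Prod.ext ?_ (Prod.ext ?_ ?_))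
        · funext j
          simp only [Prod.fst_add, Prod.smul_fst, Pi.add_apply, Pi.smul_apply, smul_eq_mul]
          linear_combination (- v i j * (1 - c i)) * hab1 i
        · simp only [Prod.snd_add, Prod.smul_snd, Prod.fst_add, Prod.smul_fst, smul_eq_mul]
          linear_combination (- (1 - c i)) * hY
        · funext j
          simp only [Prod.snd_add, Prod.smul_snd, Prod.fst_add, Prod.smul_fst,
            Pi.add_apply, Pi.smul_apply, smul_eq_mul]
          linear_combination v i j * hc' - (v i j * (1 - c i)) * hG
        · funext j
          simp only [Prod.snd_add, Prod.smul_snd, Pi.add_apply, Pi.smul_apply, smul_eq_mul]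
          linear_combination (- v i j * (1 - c i)) * hY
      rw [heq]
      exact hfin
    have hsum : ∑ i, lv i • ((v i, yb i, wb i • v i, yb i • v i) :
        (Fin n → ℝ) × ℝ × (Fin n → ℝ) × (Fin n → ℝ)) = p := by
      refine Prod.ext ?_ (Prod.ext ?_ (Prod.ext ?_ ?_))
      · rw [Prod.fst_sum, hxx]
        exact Finset.sum_congr rfl fun i _ => by simp
      · rw [Prod.snd_sum, Prod.fst_sum, hyy]
        refine Finset.sum_congr rfl fun i _ => ?_
        simp only [Prod.smul_snd, Prod.smul_fst, smul_eq_mul]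
        exact (hyveq i).symm
      · rw [Prod.snd_sum, Prod.snd_sum, Prod.fst_sum, hz]
        refine Finset.sum_congr rfl fun i _ => ?_
        simp only [Prod.smul_snd, Prod.smul_fst]
        rw [smul_smul, ← hwb_eq i]
      · rw [Prod.snd_sum, Prod.snd_sum, Prod.snd_sum, hu]
        refine Finset.sum_congr rfl fun i _ => ?_
        simp only [Prod.smul_snd]
        rw [smul_smul, ← hyveq i]
    rw [← hsum]
    exact (convex_convexHull ℝ _).sum_mem (fun i _ => hl0 i) hl1 (fun i _ => hrmem i)
end

section
/- Let B ∈ ℝ^{q×n}, b ∈ ℝ^q, and suppose X = {x ∈ ℝ^n : Bx ≤ b} is a nonempty bounded polytope. Let y^lo < y^up be reals and define S = {(x, y, u) ∈ X × [y^lo, y^up] × ℝ^n : u_j = x_j·y for all j = 1, …, n}. Then the convex hull of S equals {(x, y, u) ∈ ℝ^n × ℝ × ℝ^n : y^lo ≤ y ≤ y^up, B(u − y^lo·x) ≤ (y − y^lo)·b, B(y^up·x − u) ≤ (y^up − y)·b}. -/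
/-- Proposition 10 of the paper (special case of Davarnia–Richard–Tawarmalani): the
convex hull of the simultaneous bilinear products `u_j = x_j·y` over a nonempty bounded
polytope `X = {x : Bx ≤ b}` times the interval `[ylo, yup]` is given by the two RLT
systems obtained from the bound factors of `y`. -/
theorem stmt12 (n q : ℕ) (B : Fin q → Fin n → ℝ) (b : Fin q → ℝ)
    (ylo yup : ℝ) (hy : ylo < yup)
    (X : Set (Fin n → ℝ)) (hX : X = {x | ∀ r, ∑ c, B r c * x c ≤ b r})
    (hne : X.Nonempty) (hbd : Bornology.IsBounded X) :
    convexHull ℝ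
      {p : (Fin n → ℝ) × ℝ × (Fin n → ℝ) |
        p.1 ∈ X ∧ p.2.1 ∈ Set.Icc ylo yup ∧ ∀ jj, p.2.2 jj = p.1 jj * p.2.1} =
    {p : (Fin n → ℝ) × ℝ × (Fin n → ℝ) |
      ylo ≤ p.2.1 ∧ p.2.1 ≤ yup ∧
      (∀ r, ∑ c, B r c * (p.2.2 c - ylo * p.1 c) ≤ (p.2.1 - ylo) * b r) ∧
      (∀ r, ∑ c, B r c * (yup * p.1 c - p.2.2 c) ≤ (yup - p.2.1) * b r)} := by
  have hXm : ∀ x ∈ X, ∀ r, ∑ c, B r c * x c ≤ b r := by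
    intro x hx; rw [hX] at hx; exact hx
  -- recession direction lemma
  have key : ∀ d : Fin n → ℝ, (∀ r, ∑ c, B r c * d c ≤ 0) → d = 0 := by
    intro d hd
    by_contra hd0
    obtain ⟨x₀, hx₀⟩ := hne
    obtain ⟨R, hR⟩ := isBounded_iff_forall_norm_le.mp hbd
    have hdn : 0 < ‖d‖ := (norm_pos_iff (E := Fin n → ℝ) (a := d)).mpr hd0
    have hmem : ∀ t : ℝ, 0 ≤ t → (x₀ + t • d) ∈ X := by
      intro t ht
      rw [hX]
      intro r
      have h1 : ∑ c, B r c * (x₀ c + t * d c)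
          = (∑ c, B r c * x₀ c) + t * ∑ c, B r c * d c := by
        rw [Finset.mul_sum, ← Finset.sum_add_distrib]
        exact Finset.sum_congr rfl fun c _ => by ring
      have h2 : t * (∑ c, B r c * d c) ≤ 0 :=
        mul_nonpos_of_nonneg_of_nonpos ht (hd r)
      have h3 := hXm x₀ hx₀ r
      show ∑ c, B r c * (x₀ c + t * d c) ≤ b r
      rw [h1]; linarith
    set t : ℝ := (R + ‖x₀‖ + 1) / ‖d‖ with htdef
    have hx₀n : 0 ≤ ‖x₀‖ := norm_nonneg _
    have hR0 : ‖x₀‖ ≤ R := hR _ hx₀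
    have ht : 0 ≤ t := div_nonneg (by linarith) hdn.le
    have h4 : ‖x₀ + t • d‖ ≤ R := hR _ (hmem t ht)
    have h5 : ‖t • d‖ ≤ ‖x₀ + t • d‖ + ‖x₀‖ := by
      calc ‖t • d‖ = ‖(x₀ + t • d) - x₀‖ := by rw [add_sub_cancel_left]
        _ ≤ ‖x₀ + t • d‖ + ‖x₀‖ := norm_sub_le _ _
    have h6 : ‖t • d‖ = R + ‖x₀‖ + 1 := by
      rw [norm_smul, Real.norm_eq_abs, abs_of_nonneg ht, htdef,
        div_mul_cancel₀ _ hdn.ne']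
    linarith
  apply Set.Subset.antisymm
  · -- convex hull ⊆ RLT system
    apply convexHull_min
    · rintro ⟨x, y, u⟩ ⟨hx, ⟨hy1, hy2⟩, hu⟩
      have hu' : ∀ jj, u jj = x jj * y := hu
      have hxr := hXm x hx
      refine ⟨hy1, hy2, ?_, ?_⟩
      · intro r
        have he : ∑ c, B r c * (u c - ylo * x c) = (y - ylo) * ∑ c, B r c * x c := by
          rw [Finset.mul_sum]
          exact Finset.sum_congr rfl fun c _ => by rw [hu' c]; ring
        rw [he]
        exact mul_le_mul_of_nonneg_left (hxr r) (by linarith)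
      · intro r
        have he : ∑ c, B r c * (yup * x c - u c) = (yup - y) * ∑ c, B r c * x c := by
          rw [Finset.mul_sum]
          exact Finset.sum_congr rfl fun c _ => by rw [hu' c]; ring
        rw [he]
        exact mul_le_mul_of_nonneg_left (hxr r) (by linarith)
    · -- RLT system is convex
      rintro p hp p' hp' a a' ha ha' haa
      obtain ⟨hp1, hp2, hp3, hp4⟩ := hp
      obtain ⟨hq1, hq2, hq3, hq4⟩ := hp'
      have ha1 : a' = 1 - a := by linarith
      refine ⟨?_, ?_, ?_, ?_⟩
      · show ylo ≤ a * p.2.1 + a' * p'.2.1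
        have hsum : a * ylo + a' * ylo = ylo := by rw [← add_mul, haa, one_mul]
        linarith [mul_le_mul_of_nonneg_left hp1 ha, mul_le_mul_of_nonneg_left hq1 ha']
      · show a * p.2.1 + a' * p'.2.1 ≤ yup
        have hsum : a * yup + a' * yup = yup := by rw [← add_mul, haa, one_mul]
        linarith [mul_le_mul_of_nonneg_left hp2 ha, mul_le_mul_of_nonneg_left hq2 ha']
      · intro r
        show ∑ c, B r c * ((a * p.2.2 c + a' * p'.2.2 c)
            - ylo * (a * p.1 c + a' * p'.1 c))
            ≤ ((a * p.2.1 + a' * p'.2.1) - ylo) * b r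
        have he : ∑ c, B r c * ((a * p.2.2 c + a' * p'.2.2 c)
            - ylo * (a * p.1 c + a' * p'.1 c))
            = a * (∑ c, B r c * (p.2.2 c - ylo * p.1 c))
              + a' * (∑ c, B r c * (p'.2.2 c - ylo * p'.1 c)) := by
          rw [Finset.mul_sum, Finset.mul_sum, ← Finset.sum_add_distrib]
          exact Finset.sum_congr rfl fun c _ => by ring
        have heq : ((a * p.2.1 + a' * p'.2.1) - ylo) * b r
            = a * ((p.2.1 - ylo) * b r) + a' * ((p'.2.1 - ylo) * b r) := by
          subst ha1; ring
        rw [he, heq]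
        exact add_le_add (mul_le_mul_of_nonneg_left (hp3 r) ha)
          (mul_le_mul_of_nonneg_left (hq3 r) ha')
      · intro r
        show ∑ c, B r c * (yup * (a * p.1 c + a' * p'.1 c)
            - (a * p.2.2 c + a' * p'.2.2 c))
            ≤ (yup - (a * p.2.1 + a' * p'.2.1)) * b r
        have he : ∑ c, B r c * (yup * (a * p.1 c + a' * p'.1 c)
            - (a * p.2.2 c + a' * p'.2.2 c))
            = a * (∑ c, B r c * (yup * p.1 c - p.2.2 c))
              + a' * (∑ c, B r c * (yup * p'.1 c - p'.2.2 c)) := by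
          rw [Finset.mul_sum, Finset.mul_sum, ← Finset.sum_add_distrib]
          exact Finset.sum_congr rfl fun c _ => by ring
        have heq : (yup - (a * p.2.1 + a' * p'.2.1)) * b r
            = a * ((yup - p.2.1) * b r) + a' * ((yup - p'.2.1) * b r) := by
          subst ha1; ring
        rw [he, heq]
        exact add_le_add (mul_le_mul_of_nonneg_left (hp4 r) ha)
          (mul_le_mul_of_nonneg_left (hq4 r) ha')
  · -- RLT system ⊆ convex hull
    rintro ⟨x, y, u⟩ ⟨h1', h2', h3, h4⟩
    simp only [Set.mem_setOf_eq] at h3 h4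
    have h1 : ylo ≤ y := h1'
    have h2 : y ≤ yup := h2'
    rcases eq_or_lt_of_le h1 with hylo' | hylo
    · -- y = ylo
      have hylo : ylo = y := hylo'
      have hu0 : (fun c => u c - ylo * x c) = 0 := by
        apply key
        intro r
        have := h3 r
        rw [← hylo] at this
        simpa using this
      have huc : ∀ c, u c = ylo * x c := by
        intro c
        have := congrFun hu0 c
        simpa [sub_eq_zero] using this
      have hxX : x ∈ X := by
        rw [hX]
        intro r
        have h4r := h4 r
        rw [← hylo] at h4r
        have he : ∑ c, B r c * (yup * x c - u c) = (yup - ylo) * ∑ c, B r c * x c := by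
          rw [Finset.mul_sum]
          exact Finset.sum_congr rfl fun c _ => by rw [huc c]; ring
        rw [he] at h4r
        exact le_of_mul_le_mul_left h4r (by linarith)
      apply subset_convexHull
      exact ⟨hxX, ⟨h1', h2'⟩, fun j => show u j = x j * y by rw [huc j, ← hylo]; ring⟩
    rcases eq_or_lt_of_le h2 with hyup' | hyup
    · -- y = yup
      have hyup : y = yup := hyup'
      have hu0 : (fun c => yup * x c - u c) = 0 := by
        apply key
        intro r
        have := h4 r
        rw [hyup] at this
        simpa using this
      have huc : ∀ c, u c = yup * x c := by
        intro c
        have := congrFun hu0 c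
        simp [sub_eq_zero] at this
        linarith
      have hxX : x ∈ X := by
        rw [hX]
        intro r
        have h3r := h3 r
        rw [hyup] at h3r
        have he : ∑ c, B r c * (u c - ylo * x c) = (yup - ylo) * ∑ c, B r c * x c := by
          rw [Finset.mul_sum]
          exact Finset.sum_congr rfl fun c _ => by rw [huc c]; ring
        rw [he] at h3r
        exact le_of_mul_le_mul_left h3r (by linarith)
      apply subset_convexHull
      exact ⟨hxX, ⟨h1', h2'⟩, fun j => show u j = x j * y by rw [huc j, hyup]; ring⟩
    · -- ylo < y < yup
      have hd1 : (0:ℝ) < yup - y := by linarith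
      have hd2 : (0:ℝ) < y - ylo := by linarith
      have hd3 : (0:ℝ) < yup - ylo := by linarith
      set x0 : Fin n → ℝ := fun c => (yup * x c - u c) / (yup - y) with hx0def
      set x1 : Fin n → ℝ := fun c => (u c - ylo * x c) / (y - ylo) with hx1def
      set lam : ℝ := (y - ylo) / (yup - ylo) with hlamdef
      have hlam0 : 0 ≤ lam := div_nonneg hd2.le hd3.le
      have hlam1 : 0 ≤ 1 - lam := by
        have : lam ≤ 1 := (div_le_one hd3).mpr (by linarith)
        linarith
      have hq0 : ((x0, (ylo, fun c => x0 c * ylo)) : (Fin n → ℝ) × ℝ × (Fin n → ℝ)) ∈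
          {p : (Fin n → ℝ) × ℝ × (Fin n → ℝ) |
            p.1 ∈ X ∧ p.2.1 ∈ Set.Icc ylo yup ∧ ∀ jj, p.2.2 jj = p.1 jj * p.2.1} := by
        refine ⟨?_, ⟨le_refl _, hy.le⟩, fun j => rfl⟩
        rw [hX]
        intro r
        have he : ∑ c, B r c * x0 c = (∑ c, B r c * (yup * x c - u c)) / (yup - y) := by
          rw [Finset.sum_div]
          exact Finset.sum_congr rfl fun c _ => by rw [hx0def]; ring
        rw [he, div_le_iff₀ hd1]
        have := h4 r
        linarith [h4 r, mul_comm (b r) (yup - y)]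
      have hq1 : ((x1, (yup, fun c => x1 c * yup)) : (Fin n → ℝ) × ℝ × (Fin n → ℝ)) ∈
          {p : (Fin n → ℝ) × ℝ × (Fin n → ℝ) |
            p.1 ∈ X ∧ p.2.1 ∈ Set.Icc ylo yup ∧ ∀ jj, p.2.2 jj = p.1 jj * p.2.1} := by
        refine ⟨?_, ⟨hy.le, le_refl _⟩, fun j => rfl⟩
        rw [hX]
        intro r
        have he : ∑ c, B r c * x1 c = (∑ c, B r c * (u c - ylo * x c)) / (y - ylo) := by
          rw [Finset.sum_div]
          exact Finset.sum_congr rfl fun c _ => by rw [hx1def]; ring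
        rw [he, div_le_iff₀ hd2]
        linarith [h3 r, mul_comm (b r) (y - ylo)]
      have hcomb : ((x, (y, u)) : (Fin n → ℝ) × ℝ × (Fin n → ℝ))
          = (1 - lam) • (x0, (ylo, fun c => x0 c * ylo))
            + lam • (x1, (yup, fun c => x1 c * yup)) := by
        refine Prod.ext ?_ (Prod.ext ?_ ?_)
        · show x = (1 - lam) • x0 + lam • x1
          funext c
          show x c = (1 - lam) * x0 c + lam * x1 c
          rw [hx0def, hx1def, hlamdef]
          field_simp
          ring
        · show y = (1 - lam) * ylo + lam * yup
          rw [hlamdef]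
          field_simp
          ring
        · show u = (1 - lam) • (fun c => x0 c * ylo) + lam • (fun c => x1 c * yup)
          funext c
          show u c = (1 - lam) * (x0 c * ylo) + lam * (x1 c * yup)
          rw [hx0def, hx1def, hlamdef]
          field_simp
          ring
      rw [hcomb]
      exact convex_convexHull ℝ _ (subset_convexHull ℝ _ hq0) (subset_convexHull ℝ _ hq1)
        hlam1 hlam0 (by ring)
end

section
/- Let 0 ≤ x^lo < x^up and y^lo < y^up be reals, and let g : ℝ → ℝ be continuous and convex on [y^lo, y^up]. Define S = {(x, y, z, u) ∈ [x^lo, x^up] × [y^lo, y^up] × ℝ × ℝ : u = x·y and z = x·g(y)}. Then the convex hull of S equals the set of (x, y, z, u) ∈ ℝ^4 satisfying: z ≥ x^lo·g*((x^up − x)/(x^up − x^lo), (x^up·y − u)/(x^up − x^lo)) + x^up·g*((x − x^lo)/(x^up − x^lo), (u − x^lo·y)/(x^up − x^lo)); z ≤ g(y^lo)·x + ((g(y^up) − g(y^lo))/(y^up − y^lo))·(u − y^lo·x); (x^up − x)·y^lo ≤ x^up·y − u ≤ (x^up − x)·y^up; and (x − x^lo)·y^lo ≤ u − x^lo·y ≤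 (x − x^lo)·y^up. -/
set_option maxHeartbeats 1000000


lemma persp_nonpos_zero (g : ℝ → ℝ) {l : ℝ} (h : ¬ 0 < l) (t : ℝ) : persp g l t = 0 := by
  simp [persp, h]

lemma persp_pos (g : ℝ → ℝ) {l : ℝ} (h : 0 < l) (t : ℝ) : persp g l t = l * g (t / l) := by
  simp [persp, h]

lemma persp_convex {g : ℝ → ℝ} {ylo yup : ℝ} (hy : ylo ≤ yup)
    (hgconv : ConvexOn ℝ (Set.Icc ylo yup) g)
    {l1 t1 l2 t2 a b : ℝ} (h1 : 0 ≤ l1) (h1lo : l1 * ylo ≤ t1) (h1up : t1 ≤ l1 * yup)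
    (h2 : 0 ≤ l2) (h2lo : l2 * ylo ≤ t2) (h2up : t2 ≤ l2 * yup)
    (ha : 0 ≤ a) (hb : 0 ≤ b) (hab : a + b = 1) :
    persp g (a * l1 + b * l2) (a * t1 + b * t2)
      ≤ a * persp g l1 t1 + b * persp g l2 t2 := by
  have key1 : l1 = 0 → t1 = 0 := by intro h; subst h; simp at h1lo h1up; linarith
  have key2 : l2 = 0 → t2 = 0 := by intro h; subst h; simp at h2lo h2up; linarith
  set l := a * l1 + b * l2 with hl
  by_cases hlpos : 0 < l
  · rw [persp_pos g hlpos]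
    set r1 : ℝ := if 0 < l1 then t1 / l1 else ylo with hr1
    set r2 : ℝ := if 0 < l2 then t2 / l2 else ylo with hr2
    have hr1mem : r1 ∈ Set.Icc ylo yup := by
      rw [hr1]; split
      · rename_i h
        constructor
        · rw [le_div_iff₀ h]; linarith [h1lo]
        · rw [div_le_iff₀ h]; linarith [h1up]
      · exact ⟨le_refl _, hy⟩
    have hr2mem : r2 ∈ Set.Icc ylo yup := by
      rw [hr2]; split
      · rename_i h
        constructor
        · rw [le_div_iff₀ h]; linarith [h2lo]
        · rw [div_le_iff₀ h]; linarith [h2up]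
      · exact ⟨le_refl _, hy⟩
    have ht1 : a * t1 = (a * l1) * r1 := by
      rw [hr1]; split
      · rename_i h; field_simp
      · rename_i h
        have : l1 = 0 := le_antisymm (not_lt.mp h) h1
        rw [this, key1 this]; ring
    have ht2 : b * t2 = (b * l2) * r2 := by
      rw [hr2]; split
      · rename_i h; field_simp
      · rename_i h
        have : l2 = 0 := le_antisymm (not_lt.mp h) h2
        rw [this, key2 this]; ring
    have hw1 : 0 ≤ a * l1 / l := by positivity
    have hw2 : 0 ≤ b * l2 / l := by positivity
    have hwsum : a * l1 / l + b * l2 / l = 1 := by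
      field_simp; exact hl.symm
    have harg : (a * t1 + b * t2) / l = (a * l1 / l) * r1 + (b * l2 / l) * r2 := by
      rw [ht1, ht2]; ring
    have hg := hgconv.2 hr1mem hr2mem hw1 hw2 hwsum
    simp only [smul_eq_mul] at hg
    rw [harg]
    have hmain : l * g ((a * l1 / l) * r1 + (b * l2 / l) * r2)
        ≤ (a * l1) * g r1 + (b * l2) * g r2 := by
      calc l * g ((a * l1 / l) * r1 + (b * l2 / l) * r2)
          ≤ l * ((a * l1 / l) * g r1 + (b * l2 / l) * g r2) := by
            apply mul_le_mul_of_nonneg_left hg (le_of_lt hlpos)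
        _ = (a * l1) * g r1 + (b * l2) * g r2 := by field_simp
    refine hmain.trans (le_of_eq ?_)
    have e1 : (a * l1) * g r1 = a * persp g l1 t1 := by
      rw [persp]; split
      · rename_i h; rw [hr1, if_pos h]; ring
      · rename_i h
        have : l1 = 0 := le_antisymm (not_lt.mp h) h1
        rw [this]; ring
    have e2 : (b * l2) * g r2 = b * persp g l2 t2 := by
      rw [persp]; split
      · rename_i h; rw [hr2, if_pos h]; ring
      · rename_i h
        have : l2 = 0 := le_antisymm (not_lt.mp h) h2
        rw [this]; ring
    rw [e1, e2]
  · rw [persp_nonpos_zero g hlpos]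
    have hl0 : l = 0 := le_antisymm (not_lt.mp hlpos) (by positivity)
    have h10 : a * l1 = 0 := by nlinarith [mul_nonneg ha h1, mul_nonneg hb h2]
    have h20 : b * l2 = 0 := by nlinarith [mul_nonneg ha h1, mul_nonneg hb h2]
    have e1 : a * persp g l1 t1 = 0 := by
      rcases mul_eq_zero.mp h10 with h | h
      · rw [h]; ring
      · rw [persp_nonpos_zero g (by rw [h]; exact lt_irrefl 0)]; ring
    have e2 : b * persp g l2 t2 = 0 := by
      rcases mul_eq_zero.mp h20 with h | h
      · rw [h]; ring
      · rw [persp_nonpos_zero g (by rw [h]; exact lt_irrefl 0)]; ring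
    rw [e1, e2]; norm_num

/-- Corollary 9 of the paper: the simultaneous convex hull of `u = x·y` and
`z = x·g(y)` over the box `[xlo, xup] × [ylo, yup]` with `0 ≤ xlo`, for `g` continuous
and convex on `[ylo, yup]`, in coordinates `p = (x, y, z, u)`. -/
theorem stmt13 (xlo xup ylo yup : ℝ) (hx0 : 0 ≤ xlo) (hx : xlo < xup) (hy : ylo < yup)
    (g : ℝ → ℝ) (hgcont : ContinuousOn g (Set.Icc ylo yup))
    (hgconv : ConvexOn ℝ (Set.Icc ylo yup) g) :
    convexHull ℝ
      {p : ℝ × ℝ × ℝ × ℝ |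
        p.1 ∈ Set.Icc xlo xup ∧ p.2.1 ∈ Set.Icc ylo yup ∧
        p.2.2.2 = p.1 * p.2.1 ∧ p.2.2.1 = p.1 * g p.2.1} =
    {p : ℝ × ℝ × ℝ × ℝ |
      xlo * persp g ((xup - p.1) / (xup - xlo)) ((xup * p.2.1 - p.2.2.2) / (xup - xlo)) +
        xup * persp g ((p.1 - xlo) / (xup - xlo)) ((p.2.2.2 - xlo * p.2.1) / (xup - xlo))
        ≤ p.2.2.1 ∧
      p.2.2.1 ≤ g ylo * p.1 + ((g yup - g ylo) / (yup - ylo)) * (p.2.2.2 - ylo * p.1) ∧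
      (xup - p.1) * ylo ≤ xup * p.2.1 - p.2.2.2 ∧
      xup * p.2.1 - p.2.2.2 ≤ (xup - p.1) * yup ∧
      (p.1 - xlo) * ylo ≤ p.2.2.2 - xlo * p.2.1 ∧
      p.2.2.2 - xlo * p.2.1 ≤ (p.1 - xlo) * yup} := by
  have hd : (0:ℝ) < xup - xlo := sub_pos.mpr hx
  have he : (0:ℝ) < yup - ylo := sub_pos.mpr hy
  have hxup0 : (0:ℝ) ≤ xup := le_trans hx0 hx.le
  set S : Set (ℝ × ℝ × ℝ × ℝ) :=
      {p : ℝ × ℝ × ℝ × ℝ |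
        p.1 ∈ Set.Icc xlo xup ∧ p.2.1 ∈ Set.Icc ylo yup ∧
        p.2.2.2 = p.1 * p.2.1 ∧ p.2.2.1 = p.1 * g p.2.1} with hSdef
  have hmemS : ∀ xx yy : ℝ, xlo ≤ xx → xx ≤ xup → ylo ≤ yy → yy ≤ yup →
      ((xx, yy, xx * g yy, xx * yy) : ℝ × ℝ × ℝ × ℝ) ∈ S := by
    intro xx yy h1 h2 h3 h4
    exact ⟨⟨h1, h2⟩, ⟨h3, h4⟩, rfl, rfl⟩
  apply Set.Subset.antisymm
  · -- convexHull S ⊆ RHS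
    apply convexHull_min
    · -- S ⊆ RHS
      rintro ⟨x, y, z, u⟩ ⟨⟨hx1, hx2⟩, ⟨hy1, hy2⟩, hu, hz⟩
      simp only at hu hz hx1 hx2 hy1 hy2
      have hxnn : 0 ≤ x := le_trans hx0 hx1
      simp only [Set.mem_setOf_eq]
      subst hu hz
      have hc1 : xlo * persp g ((xup - x) / (xup - xlo)) ((xup * y - x * y) / (xup - xlo)) +
          xup * persp g ((x - xlo) / (xup - xlo)) ((x * y - xlo * y) / (xup - xlo)) = x * g y := by
        have e1 : xlo * persp g ((xup - x) / (xup - xlo)) ((xup * y - x * y) / (xup - xlo))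
            = xlo * ((xup - x) / (xup - xlo)) * g y := by
          rw [persp]; split
          · rename_i h
            have harg : (xup * y - x * y) / (xup - xlo) / ((xup - x) / (xup - xlo)) = y := by
              have hxx : xup - x ≠ 0 := by
                intro hc
                rw [hc] at h; simp at h
              field_simp
            rw [harg]; ring
          · rename_i h
            have h0 : (xup - x) / (xup - xlo) = 0 :=
              le_antisymm (not_lt.mp h) (div_nonneg (by linarith) hd.le)
            rw [h0]; ring
        have e2 : xup * persp g ((x - xlo) / (xup - xlo)) ((x * y - xlo * y) / (xup - xlo))
            = xup * ((x - xlo) / (xup - xlo)) * g y := by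
          rw [persp]; split
          · rename_i h
            have harg : (x * y - xlo * y) / (xup - xlo) / ((x - xlo) / (xup - xlo)) = y := by
              have hxx : x - xlo ≠ 0 := by
                intro hc
                rw [hc] at h; simp at h
              field_simp
            rw [harg]; ring
          · rename_i h
            have h0 : (x - xlo) / (xup - xlo) = 0 :=
              le_antisymm (not_lt.mp h) (div_nonneg (by linarith) hd.le)
            rw [h0]; ring
        rw [e1, e2]
        have : xlo * ((xup - x) / (xup - xlo)) + xup * ((x - xlo) / (xup - xlo)) = x := by
          field_simp; ring
        linear_combination g y * this
      refine ⟨le_of_eq hc1, ?_, ?_, ?_, ?_, ?_⟩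
      · -- secant overestimator
        have hsec := hgconv.2 (Set.mem_Icc.mpr ⟨le_refl ylo, hy.le⟩)
          (Set.mem_Icc.mpr ⟨hy.le, le_refl yup⟩)
          (show (0:ℝ) ≤ (yup - y)/(yup - ylo) from div_nonneg (by linarith) he.le)
          (show (0:ℝ) ≤ (y - ylo)/(yup - ylo) from div_nonneg (by linarith) he.le)
          (by field_simp; ring)
        simp only [smul_eq_mul] at hsec
        have harg : (yup - y)/(yup - ylo) * ylo + (y - ylo)/(yup - ylo) * yup = y := by
          field_simp; ring
        rw [harg] at hsec
        have hsec' : g y * (yup - ylo) ≤ (yup - y) * g ylo + (y - ylo) * g yup := by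
          have h2 : (yup - y)/(yup - ylo) * g ylo + (y - ylo)/(yup - ylo) * g yup
              = ((yup - y) * g ylo + (y - ylo) * g yup) / (yup - ylo) := by ring
          rw [h2, le_div_iff₀ he] at hsec
          exact hsec
        rw [show g ylo * x + (g yup - g ylo) / (yup - ylo) * (x * y - ylo * x)
            = g ylo * x + (g yup - g ylo) * (x * y - ylo * x) / (yup - ylo) by ring,
          ← sub_nonneg]
        rw [show g ylo * x + (g yup - g ylo) * (x * y - ylo * x) / (yup - ylo) - x * g y
            = (g ylo * x * (yup - ylo) + (g yup - g ylo) * (x * y - ylo * x)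
                - x * g y * (yup - ylo)) / (yup - ylo) by field_simp]
        apply div_nonneg _ he.le
        nlinarith [mul_le_mul_of_nonneg_left hsec' hxnn]
      · nlinarith [mul_nonneg (sub_nonneg.mpr hx2) (sub_nonneg.mpr hy1)]
      · nlinarith [mul_nonneg (sub_nonneg.mpr hx2) (sub_nonneg.mpr hy2)]
      · nlinarith [mul_nonneg (sub_nonneg.mpr hx1) (sub_nonneg.mpr hy1)]
      · nlinarith [mul_nonneg (sub_nonneg.mpr hx1) (sub_nonneg.mpr hy2)]
    · -- RHS convex
      rintro ⟨xp, yp, zp, up⟩ hp ⟨xq, yq, zq, uq⟩ hq a b ha hb hab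
      simp only [Set.mem_setOf_eq] at hp hq
      obtain ⟨p1, p2, p3, p4, p5, p6⟩ := hp
      obtain ⟨q1, q2, q3, q4, q5, q6⟩ := hq
      have hxple : xp ≤ xup := by nlinarith
      have hxqle : xq ≤ xup := by nlinarith
      have hxpge : xlo ≤ xp := by nlinarith
      have hxqge : xlo ≤ xq := by nlinarith
      simp only [Prod.smul_mk, Prod.mk_add_mk, smul_eq_mul, Set.mem_setOf_eq]
      have key : ∀ A B : ℝ, A ≤ B → A / (xup - xlo) ≤ B / (xup - xlo) :=
        fun A B h => (div_le_div_iff_of_pos_right hd).mpr h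
      have conep1a : (xup - xp)/(xup - xlo) * ylo ≤ (xup * yp - up)/(xup - xlo) := by
        rw [div_mul_eq_mul_div]; exact key _ _ p3
      have conep1b : (xup * yp - up)/(xup - xlo) ≤ (xup - xp)/(xup - xlo) * yup := by
        rw [div_mul_eq_mul_div]; exact key _ _ p4
      have conep2a : (xp - xlo)/(xup - xlo) * ylo ≤ (up - xlo * yp)/(xup - xlo) := by
        rw [div_mul_eq_mul_div]; exact key _ _ p5
      have conep2b : (up - xlo * yp)/(xup - xlo) ≤ (xp - xlo)/(xup - xlo) * yup := by
        rw [div_mul_eq_mul_div]; exact key _ _ p6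
      have coneq1a : (xup - xq)/(xup - xlo) * ylo ≤ (xup * yq - uq)/(xup - xlo) := by
        rw [div_mul_eq_mul_div]; exact key _ _ q3
      have coneq1b : (xup * yq - uq)/(xup - xlo) ≤ (xup - xq)/(xup - xlo) * yup := by
        rw [div_mul_eq_mul_div]; exact key _ _ q4
      have coneq2a : (xq - xlo)/(xup - xlo) * ylo ≤ (uq - xlo * yq)/(xup - xlo) := by
        rw [div_mul_eq_mul_div]; exact key _ _ q5
      have coneq2b : (uq - xlo * yq)/(xup - xlo) ≤ (xq - xlo)/(xup - xlo) * yup := by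
        rw [div_mul_eq_mul_div]; exact key _ _ q6
      have hl1pn : 0 ≤ (xup - xp)/(xup - xlo) := div_nonneg (by linarith) hd.le
      have hl2pn : 0 ≤ (xp - xlo)/(xup - xlo) := div_nonneg (by linarith) hd.le
      have hl1qn : 0 ≤ (xup - xq)/(xup - xlo) := div_nonneg (by linarith) hd.le
      have hl2qn : 0 ≤ (xq - xlo)/(xup - xlo) := div_nonneg (by linarith) hd.le
      have e0 : xup - (a * xp + b * xq) = a * (xup - xp) + b * (xup - xq) := by
        linear_combination (-xup) * hab
      have e0' : (a * xp + b * xq) - xlo = a * (xp - xlo) + b * (xq - xlo) := by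
        linear_combination xlo * hab
      have harg1l : (xup - (a * xp + b * xq)) / (xup - xlo)
          = a * ((xup - xp)/(xup - xlo)) + b * ((xup - xq)/(xup - xlo)) := by
        rw [e0, add_div, mul_div_assoc, mul_div_assoc]
      have harg1t : (xup * (a * yp + b * yq) - (a * up + b * uq)) / (xup - xlo)
          = a * ((xup * yp - up)/(xup - xlo)) + b * ((xup * yq - uq)/(xup - xlo)) := by
        rw [show xup * (a * yp + b * yq) - (a * up + b * uq)
            = a * (xup * yp - up) + b * (xup * yq - uq) by ring,
          add_div, mul_div_assoc, mul_div_assoc]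
      have harg2l : ((a * xp + b * xq) - xlo) / (xup - xlo)
          = a * ((xp - xlo)/(xup - xlo)) + b * ((xq - xlo)/(xup - xlo)) := by
        rw [e0', add_div, mul_div_assoc, mul_div_assoc]
      have harg2t : ((a * up + b * uq) - xlo * (a * yp + b * yq)) / (xup - xlo)
          = a * ((up - xlo * yp)/(xup - xlo)) + b * ((uq - xlo * yq)/(xup - xlo)) := by
        rw [show (a * up + b * uq) - xlo * (a * yp + b * yq)
            = a * (up - xlo * yp) + b * (uq - xlo * yq) by ring,
          add_div, mul_div_assoc, mul_div_assoc]
      refine ⟨?_, ?_, ?_, ?_, ?_, ?_⟩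
      · rw [harg1l, harg1t, harg2l, harg2t]
        have hp1 := persp_convex hy.le hgconv hl1pn conep1a conep1b hl1qn coneq1a coneq1b
          ha hb hab
        have hp2 := persp_convex hy.le hgconv hl2pn conep2a conep2b hl2qn coneq2a coneq2b
          ha hb hab
        have m1 := mul_le_mul_of_nonneg_left hp1 hx0
        have m2 := mul_le_mul_of_nonneg_left hp2 hxup0
        have m3 := mul_le_mul_of_nonneg_left p1 ha
        have m4 := mul_le_mul_of_nonneg_left q1 hb
        linarith [m1, m2, m3, m4]
      · linarith [mul_le_mul_of_nonneg_left p2 ha, mul_le_mul_of_nonneg_left q2 hb]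
      · rw [show (xup - (a * xp + b * xq)) * ylo
            = (a * (xup - xp) + b * (xup - xq)) * ylo by rw [e0]]
        linarith [mul_le_mul_of_nonneg_left p3 ha, mul_le_mul_of_nonneg_left q3 hb]
      · rw [show (xup - (a * xp + b * xq)) * yup
            = (a * (xup - xp) + b * (xup - xq)) * yup by rw [e0]]
        linarith [mul_le_mul_of_nonneg_left p4 ha, mul_le_mul_of_nonneg_left q4 hb]
      · rw [show ((a * xp + b * xq) - xlo) * ylo
            = (a * (xp - xlo) + b * (xq - xlo)) * ylo by rw [e0']]
        linarith [mul_le_mul_of_nonneg_left p5 ha, mul_le_mul_of_nonneg_left q5 hb]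
      · rw [show ((a * xp + b * xq) - xlo) * yup
            = (a * (xp - xlo) + b * (xq - xlo)) * yup by rw [e0']]
        linarith [mul_le_mul_of_nonneg_left p6 ha, mul_le_mul_of_nonneg_left q6 hb]
  · -- RHS ⊆ convexHull S
    rintro ⟨x, y, z, u⟩ hp
    simp only [Set.mem_setOf_eq] at hp
    obtain ⟨c1, c2, c3, c4, c5, c6⟩ := hp
    have hxle : x ≤ xup := by nlinarith
    have hxge : xlo ≤ x := by nlinarith
    have hyge : ylo ≤ y := by nlinarith
    have hyle : y ≤ yup := by nlinarith
    set l1 := (xup - x) / (xup - xlo) with hl1def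
    set l2 := (x - xlo) / (xup - xlo) with hl2def
    set t1 := (xup * y - u) / (xup - xlo) with ht1def
    set t2 := (u - xlo * y) / (xup - xlo) with ht2def
    have hl1n : 0 ≤ l1 := div_nonneg (by linarith) hd.le
    have hl2n : 0 ≤ l2 := div_nonneg (by linarith) hd.le
    have hsum12 : l1 + l2 = 1 := by rw [hl1def, hl2def]; field_simp; ring
    have keyd : ∀ A B : ℝ, A ≤ B → A / (xup - xlo) ≤ B / (xup - xlo) :=
      fun A B h => (div_le_div_iff_of_pos_right hd).mpr h
    have hc3' : l1 * ylo ≤ t1 := by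
      rw [hl1def, ht1def, div_mul_eq_mul_div]; exact keyd _ _ c3
    have hc4' : t1 ≤ l1 * yup := by
      rw [hl1def, ht1def, div_mul_eq_mul_div]; exact keyd _ _ c4
    have hc5' : l2 * ylo ≤ t2 := by
      rw [hl2def, ht2def, div_mul_eq_mul_div]; exact keyd _ _ c5
    have hc6' : t2 ≤ l2 * yup := by
      rw [hl2def, ht2def, div_mul_eq_mul_div]; exact keyd _ _ c6
    set y1 := if 0 < l1 then t1 / l1 else ylo with hy1def
    set y2 := if 0 < l2 then t2 / l2 else ylo with hy2def
    have hy1mem : ylo ≤ y1 ∧ y1 ≤ yup := by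
      rw [hy1def]; split
      · rename_i h
        exact ⟨by rw [le_div_iff₀ h]; linarith [hc3'], by rw [div_le_iff₀ h]; linarith [hc4']⟩
      · exact ⟨le_refl _, hy.le⟩
    have hy2mem : ylo ≤ y2 ∧ y2 ≤ yup := by
      rw [hy2def]; split
      · rename_i h
        exact ⟨by rw [le_div_iff₀ h]; linarith [hc5'], by rw [div_le_iff₀ h]; linarith [hc6']⟩
      · exact ⟨le_refl _, hy.le⟩
    have ht1eq : l1 * y1 = t1 := by
      rw [hy1def]; split
      · rename_i h; field_simp
      · rename_i h
        have h0 : l1 = 0 := le_antisymm (not_lt.mp h) hl1n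
        rw [h0] at hc3' hc4'
        simp only [zero_mul] at hc3' hc4'
        rw [h0, le_antisymm hc4' hc3']; ring
    have ht2eq : l2 * y2 = t2 := by
      rw [hy2def]; split
      · rename_i h; field_simp
      · rename_i h
        have h0 : l2 = 0 := le_antisymm (not_lt.mp h) hl2n
        rw [h0] at hc5' hc6'
        simp only [zero_mul] at hc5' hc6'
        rw [h0, le_antisymm hc6' hc5']; ring
    have hz1eq : l1 * g y1 = persp g l1 t1 := by
      rw [persp]; split
      · rename_i h; rw [hy1def, if_pos h]
      · rename_i h
        have h0 : l1 = 0 := le_antisymm (not_lt.mp h) hl1n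
        rw [h0]; ring
    have hz2eq : l2 * g y2 = persp g l2 t2 := by
      rw [persp]; split
      · rename_i h; rw [hy2def, if_pos h]
      · rename_i h
        have h0 : l2 = 0 := le_antisymm (not_lt.mp h) hl2n
        rw [h0]; ring
    have hPmin : ((x : ℝ), y, xlo * persp g l1 t1 + xup * persp g l2 t2, u)
        ∈ convexHull ℝ S := by
      have h1 := subset_convexHull ℝ S (hmemS xlo y1 le_rfl hx.le hy1mem.1 hy1mem.2)
      have h2 := subset_convexHull ℝ S (hmemS xup y2 hx.le le_rfl hy2mem.1 hy2mem.2)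
      have hcomb := (convex_convexHull ℝ S) h1 h2 hl1n hl2n hsum12
      have heq : l1 • ((xlo : ℝ), y1, xlo * g y1, xlo * y1)
          + l2 • ((xup : ℝ), y2, xup * g y2, xup * y2)
          = ((x : ℝ), y, xlo * persp g l1 t1 + xup * persp g l2 t2, u) := by
        simp only [Prod.smul_mk, Prod.mk_add_mk, smul_eq_mul, Prod.mk.injEq]
        refine ⟨?_, ?_, ?_, ?_⟩
        · rw [hl1def, hl2def]; field_simp; ring
        · have a1 : l1 * y1 + l2 * y2 = t1 + t2 := by rw [ht1eq, ht2eq]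
          rw [a1, ht1def, ht2def]; field_simp; ring
        · rw [← hz1eq, ← hz2eq]; ring
        · have a1 : l1 * (xlo * y1) + l2 * (xup * y2) = xlo * t1 + xup * t2 := by
            rw [← ht1eq, ← ht2eq]; ring
          rw [a1, ht1def, ht2def]; field_simp; ring
      rw [← heq]; exact hcomb
    -- the upper (concave envelope) point
    set th1 := (yup - y) / (yup - ylo) with hth1def
    set th2 := (y - ylo) / (yup - ylo) with hth2def
    set s1 := (yup * x - u) / (yup - ylo) with hs1def
    set r1 := (u - ylo * x) / (yup - ylo) with hr1def
    have hth1n : 0 ≤ th1 := div_nonneg (by linarith) he.le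
    have hth2n : 0 ≤ th2 := div_nonneg (by linarith) he.le
    have hsumth : th1 + th2 = 1 := by rw [hth1def, hth2def]; field_simp; ring
    have keye : ∀ A B : ℝ, A ≤ B → A / (yup - ylo) ≤ B / (yup - ylo) :=
      fun A B h => (div_le_div_iff_of_pos_right he).mpr h
    have hs1a : th1 * xlo ≤ s1 := by
      rw [hth1def, hs1def, div_mul_eq_mul_div]; exact keye _ _ (by linarith [c6])
    have hs1b : s1 ≤ th1 * xup := by
      rw [hth1def, hs1def, div_mul_eq_mul_div]; exact keye _ _ (by linarith [c4])
    have hr1a : th2 * xlo ≤ r1 := by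
      rw [hth2def, hr1def, div_mul_eq_mul_div]; exact keye _ _ (by linarith [c5])
    have hr1b : r1 ≤ th2 * xup := by
      rw [hth2def, hr1def, div_mul_eq_mul_div]; exact keye _ _ (by linarith [c3])
    set a1 := if 0 < th1 then s1 / th1 else xlo with ha1def
    set b1 := if 0 < th2 then r1 / th2 else xlo with hb1def
    have ha1mem : xlo ≤ a1 ∧ a1 ≤ xup := by
      rw [ha1def]; split
      · rename_i h
        exact ⟨by rw [le_div_iff₀ h]; linarith [hs1a], by rw [div_le_iff₀ h]; linarith [hs1b]⟩
      · exact ⟨le_refl _, hx.le⟩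
    have hb1mem : xlo ≤ b1 ∧ b1 ≤ xup := by
      rw [hb1def]; split
      · rename_i h
        exact ⟨by rw [le_div_iff₀ h]; linarith [hr1a], by rw [div_le_iff₀ h]; linarith [hr1b]⟩
      · exact ⟨le_refl _, hx.le⟩
    have hs1eq : th1 * a1 = s1 := by
      rw [ha1def]; split
      · rename_i h; field_simp
      · rename_i h
        have h0 : th1 = 0 := le_antisymm (not_lt.mp h) hth1n
        rw [h0] at hs1a hs1b
        simp only [zero_mul] at hs1a hs1b
        rw [h0, le_antisymm hs1b hs1a]; ring
    have hr1eq : th2 * b1 = r1 := by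
      rw [hb1def]; split
      · rename_i h; field_simp
      · rename_i h
        have h0 : th2 = 0 := le_antisymm (not_lt.mp h) hth2n
        rw [h0] at hr1a hr1b
        simp only [zero_mul] at hr1a hr1b
        rw [h0, le_antisymm hr1b hr1a]; ring
    have hPmax : ((x : ℝ), y,
        g ylo * x + ((g yup - g ylo) / (yup - ylo)) * (u - ylo * x), u)
        ∈ convexHull ℝ S := by
      have h1 := subset_convexHull ℝ S (hmemS a1 ylo ha1mem.1 ha1mem.2 le_rfl hy.le)
      have h2 := subset_convexHull ℝ S (hmemS b1 yup hb1mem.1 hb1mem.2 hy.le le_rfl)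
      have hcomb := (convex_convexHull ℝ S) h1 h2 hth1n hth2n hsumth
      have heq : th1 • ((a1 : ℝ), ylo, a1 * g ylo, a1 * ylo)
          + th2 • ((b1 : ℝ), yup, b1 * g yup, b1 * yup)
          = ((x : ℝ), y, g ylo * x + ((g yup - g ylo) / (yup - ylo)) * (u - ylo * x), u) := by
        simp only [Prod.smul_mk, Prod.mk_add_mk, smul_eq_mul, Prod.mk.injEq]
        refine ⟨?_, ?_, ?_, ?_⟩
        · have a2 : th1 * a1 + th2 * b1 = s1 + r1 := by rw [hs1eq, hr1eq]
          rw [a2, hs1def, hr1def]; field_simp; ring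
        · rw [hth1def, hth2def]; field_simp; ring
        · have a2 : th1 * (a1 * g ylo) + th2 * (b1 * g yup)
              = s1 * g ylo + r1 * g yup := by rw [← hs1eq, ← hr1eq]; ring
          rw [a2, hs1def, hr1def]; field_simp; ring
        · have a2 : th1 * (a1 * ylo) + th2 * (b1 * yup) = s1 * ylo + r1 * yup := by
            rw [← hs1eq, ← hr1eq]; ring
          rw [a2, hs1def, hr1def]; field_simp; ring
      rw [← heq]; exact hcomb
    set zmin := xlo * persp g l1 t1 + xup * persp g l2 t2 with hzmindef
    set zmax := g ylo * x + ((g yup - g ylo) / (yup - ylo)) * (u - ylo * x) with hzmaxdef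
    rcases eq_or_lt_of_le (le_trans c1 c2) with hzz | hzz
    · have hzeq : z = zmin := le_antisymm (hzz ▸ c2) c1
      rw [hzeq]; exact hPmin
    · have hw1 : 0 ≤ (zmax - z) / (zmax - zmin) := div_nonneg (by linarith) (by linarith)
      have hw2 : 0 ≤ (z - zmin) / (zmax - zmin) := div_nonneg (by linarith) (by linarith)
      have hne : zmax - zmin ≠ 0 := by
        intro hcon; rw [sub_eq_zero] at hcon; linarith
      have hwsum : (zmax - z) / (zmax - zmin) + (z - zmin) / (zmax - zmin) = 1 := by
        rw [← add_div, show zmax - z + (z - zmin) = zmax - zmin by ring, div_self hne]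
      have hcomb := (convex_convexHull ℝ S) hPmin hPmax hw1 hw2 hwsum
      have heq : ((zmax - z) / (zmax - zmin)) • ((x : ℝ), y, zmin, u)
          + ((z - zmin) / (zmax - zmin)) • ((x : ℝ), y, zmax, u)
          = ((x : ℝ), y, z, u) := by
        simp only [Prod.smul_mk, Prod.mk_add_mk, smul_eq_mul, Prod.mk.injEq]
        refine ⟨?_, ?_, ?_, ?_⟩ <;> field_simp <;> ring
      rw [← heq]; exact hcomb
end

section
/- Let 0 < α2 < α1, F1 ≥ 0, F2 ≥ 0, Υ^up ∈ ℝ and L ∈ ℝ. Suppose real numbers f1, f2, Υ, E, θ satisfy: 0 ≤ f1 ≤ F1; 0 ≤ f2 ≤ F2; 0 ≤ Υ ≤ Υ^up; α2 < θ < α1; E ≤ α1·f1/(α1 − θ) − α2·f2/(θ − α2) ≤ Υ; and L ≤ E·(α1 − θ). Define H1^up = (Υ^up·(α1 − α2) + α1·F1 + α2·F2)/(α1·(α1 − α2)) and H2^up = (α1·F1 + α2·F2 − L)/(α2·(α1 − α2)). Then: (i) f1/(α1 − θ) ≤ H1^up and f2/(θ − α2) ≤ H2^up; equivalently (ii) f1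 ≤ H1^up·(α1 − θ) and f2 ≤ H2^up·(θ − α2), so that if H1^up > 0 and H2^up > 0 then α2 + f2/H2^up ≤ θ ≤ α1 − f1/H1^up. -/
/-- Proposition 11 of the paper: in the two-component Underwood system the fractions
`f1/(α1 − θ)` and `f2/(θ − α2)` admit the finite upper bounds `H1up` and `H2up`, and
consequently the Underwood root is restricted to
`α2 + f2/H2up ≤ θ ≤ α1 − f1/H1up`. -/
theorem stmt14 (a1 a2 F1 F2 Uup L : ℝ)
    (ha2 : 0 < a2) (ha : a2 < a1) (hF1 : 0 ≤ F1) (hF2 : 0 ≤ F2)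
    (f1 f2 U E t : ℝ)
    (hf10 : 0 ≤ f1) (hf1 : f1 ≤ F1) (hf20 : 0 ≤ f2) (hf2 : f2 ≤ F2)
    (hU0 : 0 ≤ U) (hU : U ≤ Uup) (ht1 : a2 < t) (ht2 : t < a1)
    (hE : E ≤ a1 * f1 / (a1 - t) - a2 * f2 / (t - a2))
    (hEU : a1 * f1 / (a1 - t) - a2 * f2 / (t - a2) ≤ U)
    (hL : L ≤ E * (a1 - t))
    (H1up H2up : ℝ)
    (hH1 : H1up = (Uup * (a1 - a2) + a1 * F1 + a2 * F2) / (a1 * (a1 - a2)))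
    (hH2 : H2up = (a1 * F1 + a2 * F2 - L) / (a2 * (a1 - a2))) :
    (f1 / (a1 - t) ≤ H1up ∧ f2 / (t - a2) ≤ H2up) ∧
    (f1 ≤ H1up * (a1 - t) ∧ f2 ≤ H2up * (t - a2)) ∧
    (0 < H1up → 0 < H2up → a2 + f2 / H2up ≤ t ∧ t ≤ a1 - f1 / H1up) := by
  have hd1 : (0:ℝ) < a1 - t := by linarith
  have hd2 : (0:ℝ) < t - a2 := by linarith
  have ha1 : (0:ℝ) < a1 := lt_trans ha2 ha
  have hda : (0:ℝ) < a1 - a2 := by linarith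
  set x := f1 / (a1 - t) with hxdef
  set y := f2 / (t - a2) with hydef
  have hx0 : 0 ≤ x := div_nonneg hf10 hd1.le
  have hy0 : 0 ≤ y := div_nonneg hf20 hd2.le
  have hfx : f1 = x * (a1 - t) := (div_mul_cancel₀ f1 hd1.ne').symm
  have hfy : f2 = y * (t - a2) := (div_mul_cancel₀ f2 hd2.ne').symm
  rw [mul_div_assoc, mul_div_assoc, ← hxdef, ← hydef] at hE hEU
  -- bound 1 : x ≤ H1up
  have hb1 : x ≤ H1up := by
    rw [hH1, le_div_iff₀ (by positivity)]
    nlinarith [mul_le_mul_of_nonneg_right hEU hd2.le,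
      mul_le_mul_of_nonneg_left (show t - a2 ≤ a1 - a2 by linarith) hU0]
  -- bound 2 : y ≤ H2up
  have hb2 : y ≤ H2up := by
    rw [hH2, le_div_iff₀ (by positivity)]
    nlinarith [mul_le_mul_of_nonneg_right hE hd1.le]
  have hm1 : f1 ≤ H1up * (a1 - t) := by
    rw [hfx]; exact mul_le_mul_of_nonneg_right hb1 hd1.le
  have hm2 : f2 ≤ H2up * (t - a2) := by
    rw [hfy]; exact mul_le_mul_of_nonneg_right hb2 hd2.le
  refine ⟨⟨hb1, hb2⟩, ⟨hm1, hm2⟩, fun h1 h2 => ⟨?_, ?_⟩⟩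
  · have : f2 / H2up ≤ t - a2 := by
      rw [div_le_iff₀ h2]; linarith [hm2]
    linarith
  · have : f1 / H1up ≤ a1 - t := by
      rw [div_le_iff₀ h1]; linarith [hm1]
    linarith
end
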